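/- arXiv:1405.0912 — 6 statements merged into one kernel-verified Lean document; each statement's English description precedes it below -/
import Mathlib

section
/- Let Γ be a group acting by bijections on a set X. Assume that for every k ≥ 1 there exist elements f, g ∈ Γ and nonempty subsets A₁, …, A_k, B₁, …, B_k of X such that: for all nonzero integers n, fⁿ(A_i) ⊆ B_i for all i ∈ {1,…,k} and gⁿ(B_i) ⊆ A_{i+1} for all i ∈ {1,…,k−1}; and A₁ ∩ B_k = ∅. Then Γ satisfies no nontrivial law. -/
/-- A group satisfies a nontrivial law if for some `n ≥ 1` there is a nontrivial
element `w` of the free group on `n` generators killed by every homomorphism to the group. -/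
def SatisfiesLaw (G : Type*) [Group G] : Prop :=
  ∃ n : ℕ, 1 ≤ n ∧ ∃ w : FreeGroup (Fin n), w ≠ 1 ∧ ∀ φ : FreeGroup (Fin n) →* G, φ w = 1

/- ### Auxiliary definitions -/

/-- The alternating word `f^{e₁} g^{c₁} f^{e₂} g^{c₂} ⋯`. -/
def ppV {Γ : Type*} [Group Γ] (f g : Γ) : List (ℤ × ℤ) → Γ
  | [] => 1
  | (e, c) :: P => f ^ e * g ^ c * ppV f g P

lemma ppV_nil {Γ : Type*} [Group Γ] (f g : Γ) : ppV f g [] = 1 := rfl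

lemma ppV_cons {Γ : Type*} [Group Γ] (f g : Γ) (e c : ℤ) (P : List (ℤ × ℤ)) :
    ppV f g ((e, c) :: P) = f ^ e * g ^ c * ppV f g P := rfl

lemma ppV_append_single {Γ : Type*} [Group Γ] (f g : Γ) (P : List (ℤ × ℤ)) (e c : ℤ) :
    ppV f g (P ++ [(e, c)]) = ppV f g P * (f ^ e * g ^ c) := by
  induction P with
  | nil => simp [ppV]
  | cons p P ih =>
    obtain ⟨e', c'⟩ := p
    simp only [List.cons_append, ppV_cons, ih, mul_assoc]

/-- Sign/weight of a letter. -/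
def ppSgn {N : ℕ} (z : Fin N × Bool) : ℤ := cond z.2 ((z.1.val : ℤ) + 1) (-((z.1.val : ℤ) + 1))

/-- Exponent `±1` of a letter. -/
def ppEps {N : ℕ} (z : Fin N × Bool) : ℤ := cond z.2 1 (-1)

lemma ppSgn_ne_zero {N : ℕ} (z : Fin N × Bool) : ppSgn z ≠ 0 := by
  rcases z with ⟨i, s⟩
  cases s <;> simp only [ppSgn, cond_false, cond_true] <;> omega

/-- The middle `g`-exponents extracted from adjacent pairs of letters. -/
def ppZip {N : ℕ} : List (Fin N × Bool) → List (ℤ × ℤ)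
  | [] => []
  | [_] => []
  | x :: y :: L => (ppEps x, ppSgn x + ppSgn y) :: ppZip (y :: L)

/-- Last letter of `x :: L`. -/
def ppLast {N : ℕ} : (Fin N × Bool) → List (Fin N × Bool) → (Fin N × Bool)
  | x, [] => x
  | _, y :: L => ppLast y L

/-- The generator substitution `x_i ↦ g^{i+1} f g^{i+1}`. -/
def ppBeta {Γ : Type*} [Group Γ] (f g : Γ) {N : ℕ} (i : Fin N) : Γ :=
  g ^ ((i.val : ℤ) + 1) * f * g ^ ((i.val : ℤ) + 1)

lemma ppBeta_cond {Γ : Type*} [Group Γ] (f g : Γ) {N : ℕ} (z : Fin N × Bool) :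
    cond z.2 (ppBeta f g z.1) (ppBeta f g z.1)⁻¹ = g ^ ppSgn z * f ^ ppEps z * g ^ ppSgn z := by
  rcases z with ⟨i, s⟩
  cases s <;> simp only [ppBeta, ppSgn, ppEps, cond_true, cond_false] <;> group

/-- Product formula: the image of a word under the substitution. -/
lemma ppProd {Γ : Type*} [Group Γ] (f g : Γ) {N : ℕ} :
    ∀ (L : List (Fin N × Bool)) (x : Fin N × Bool),
    ((x :: L).map fun z => g ^ ppSgn z * f ^ ppEps z * g ^ ppSgn z).prod
      = g ^ ppSgn x * ppV f g (ppZip (x :: L)) *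
        (f ^ ppEps (ppLast x L) * g ^ ppSgn (ppLast x L))
  | [], x => by
    simp [ppZip, ppV, ppLast, mul_assoc]
  | y :: L, x => by
    rw [List.map_cons, List.prod_cons, ppProd f g L y]
    simp only [ppZip, ppLast, ppV_cons]
    group

/-- Entries of `ppZip` of a reduced word: first coordinates are `±1`,
second coordinates are nonzero. -/
lemma ppRed_cons {α : Type*} [DecidableEq α] {x : α × Bool} {L : List (α × Bool)}
    (h : FreeGroup.reduce (x :: L) = x :: L) : FreeGroup.reduce L = L := by
  rw [FreeGroup.reduce.cons] at h
  cases r : FreeGroup.reduce L with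
  | nil =>
    rw [r] at h
    dsimp only at h
    injection h with h1 h2
  | cons hd tl =>
    rw [r] at h
    dsimp only at h
    by_cases hcond : x.1 = hd.1 ∧ x.2 = !hd.2
    · rw [if_pos hcond] at h
      exfalso
      have hle : (FreeGroup.reduce L).length ≤ L.length :=
        FreeGroup.Red.length_le FreeGroup.reduce.red
      rw [r] at hle
      have hlen := congrArg List.length h
      simp only [List.length_cons] at hlen hle
      omega
    · rw [if_neg hcond] at h
      injection h with h1 h2

lemma ppRed_rel {α : Type*} [DecidableEq α] {x y : α × Bool} {L : List (α × Bool)}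
    (h : FreeGroup.reduce (x :: y :: L) = x :: y :: L) : ¬(x.1 = y.1 ∧ x.2 = !y.2) := by
  rintro ⟨h1, h2⟩
  obtain ⟨a, b⟩ := x
  obtain ⟨c, d⟩ := y
  dsimp at h1 h2
  subst h1; subst h2
  exact @FreeGroup.reduce.not _ _ False ((a, !d) :: (a, d) :: L) [] L a (!d)
    (by simpa [Bool.not_not] using h)

lemma ppZip_entries {N : ℕ} : ∀ (L : List (Fin N × Bool)), FreeGroup.reduce L = L →
    ∀ p ∈ ppZip L, (p.1 = 1 ∨ p.1 = -1) ∧ p.2 ≠ 0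
  | [] => by simp [ppZip]
  | [x] => by simp [ppZip]
  | x :: y :: L => by
    intro hred p hp
    rw [ppZip] at hp
    rcases List.mem_cons.mp hp with rfl | hp'
    · constructor
      · rcases x with ⟨i, s⟩; cases s <;> simp [ppEps]
      · intro h0
        have hrel := ppRed_rel hred
        rcases x with ⟨i, s⟩; rcases y with ⟨j, r⟩
        simp only [ppSgn] at h0
        cases s <;> cases r <;> simp only [cond_false, cond_true] at h0
        · omega
        · have hij : i = j := Fin.ext (by omega)
          exact hrel ⟨by simpa using hij, by simp⟩
        · have hij : i = j := Fin.ext (by omega)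
          exact hrel ⟨by simpa using hij, by simp⟩
        · omega
    · exact ppZip_entries (y :: L) (ppRed_cons hred) p hp'

/-- Core ping-pong computation: an alternating word moves `A 1` into `B (len+1)`. -/
lemma ppCore {Γ X : Type*} [Group Γ] [MulAction Γ X] (f g : Γ) (A B : ℕ → Set X) (k : ℕ)
    (hf : ∀ n : ℤ, n ≠ 0 → ∀ i : ℕ, 1 ≤ i → i ≤ k →
        (fun x => (f ^ n) • x) '' A i ⊆ B i)
    (hg : ∀ n : ℤ, n ≠ 0 → ∀ i : ℕ, 1 ≤ i → i ≤ k - 1 →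
        (fun x => (g ^ n) • x) '' B i ⊆ A (i + 1)) :
    ∀ (P : List (ℤ × ℤ)) (e0 : ℤ), (∀ p ∈ P, p.1 ≠ 0 ∧ p.2 ≠ 0) → e0 ≠ 0 →
      P.length + 1 ≤ k → ∀ a ∈ A 1, (ppV f g P * f ^ e0) • a ∈ B (P.length + 1) := by
  intro P
  induction P with
  | nil =>
    intro e0 _ he0 hk a ha
    simpa [ppV] using hf e0 he0 1 le_rfl (by omega) ⟨a, ha, rfl⟩
  | cons p P ih =>
    obtain ⟨e, c⟩ := p
    intro e0 hP he0 hk a ha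
    have he : e ≠ 0 := (hP _ (List.mem_cons_self)).1
    have hc : c ≠ 0 := (hP _ (List.mem_cons_self)).2
    simp only [List.length_cons] at hk ⊢
    have hx := ih e0 (fun q hq => hP q (List.mem_cons_of_mem _ hq)) he0 (by omega) a ha
    have hy : (g ^ c) • ((ppV f g P * f ^ e0) • a) ∈ A (P.length + 1 + 1) :=
      hg c hc (P.length + 1) (by omega) (by omega) ⟨_, hx, rfl⟩
    have hz : (f ^ e) • ((g ^ c) • ((ppV f g P * f ^ e0) • a)) ∈ B (P.length + 1 + 1) :=
      hf e he (P.length + 1 + 1) (by omega) (by omega) ⟨_, hy, rfl⟩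
    have hrw : (ppV f g ((e, c) :: P) * f ^ e0) • a
        = (f ^ e) • ((g ^ c) • ((ppV f g P * f ^ e0) • a)) := by
      simp [ppV_cons, mul_smul, mul_assoc]
    rw [hrw]
    exact hz

/-- Final contradiction step. -/
lemma ppFinal {Γ X : Type*} [Group Γ] [MulAction Γ X]
    (H : ∀ k : ℕ, 1 ≤ k → ∃ f g : Γ, ∃ A B : ℕ → Set X,
      (∀ i : ℕ, 1 ≤ i → i ≤ k → (A i).Nonempty ∧ (B i).Nonempty) ∧
      (∀ n : ℤ, n ≠ 0 → ∀ i : ℕ, 1 ≤ i → i ≤ k →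
        (fun x => (f ^ n) • x) '' A i ⊆ B i) ∧
      (∀ n : ℤ, n ≠ 0 → ∀ i : ℕ, 1 ≤ i → i ≤ k - 1 →
        (fun x => (g ^ n) • x) '' B i ⊆ A (i + 1)) ∧
      A 1 ∩ B k = ∅)
    {N : ℕ} (w : FreeGroup (Fin N))
    (hlaw : ∀ φ : FreeGroup (Fin N) →* Γ, φ w = 1)
    (P : List (ℤ × ℤ)) (e0 : ℤ)
    (hP : ∀ p ∈ P, p.1 ≠ 0 ∧ p.2 ≠ 0) (he0 : e0 ≠ 0)
    (key : ∀ f g : Γ, ∃ u : Γ,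
      u * (FreeGroup.lift (ppBeta f g)) w * u⁻¹ = ppV f g P * f ^ e0) :
    False := by
  obtain ⟨f, g, A, B, hne, hf, hg, hdisj⟩ := H (P.length + 1) (by omega)
  obtain ⟨u, hu⟩ := key f g
  have h1 : ppV f g P * f ^ e0 = 1 := by
    rw [← hu, hlaw (FreeGroup.lift (ppBeta f g))]
    group
  obtain ⟨a, ha⟩ := (hne 1 le_rfl (by omega)).1
  have hb := ppCore f g A B (P.length + 1) hf hg P e0 hP he0 le_rfl a ha
  rw [h1, one_smul] at hb
  have hmem : a ∈ A 1 ∩ B (P.length + 1) := ⟨ha, hb⟩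
  rw [hdisj] at hmem
  exact hmem

/-- **Finite ping-pong lemma.** Let `Γ` act by bijections on a set `X`. If for every
`k ≥ 1` there are `f, g ∈ Γ` and nonempty subsets `A₁,…,A_k, B₁,…,B_k` of `X` such that
`fⁿ(Aᵢ) ⊆ Bᵢ` (`1 ≤ i ≤ k`) and `gⁿ(Bᵢ) ⊆ A_{i+1}` (`1 ≤ i ≤ k-1`) for every nonzero
integer `n`, and `A₁ ∩ B_k = ∅`, then `Γ` satisfies no nontrivial law. -/
theorem no_law_of_finite_ping_pong
    {Γ X : Type*} [Group Γ] [MulAction Γ X]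
    (H : ∀ k : ℕ, 1 ≤ k → ∃ f g : Γ, ∃ A B : ℕ → Set X,
      (∀ i : ℕ, 1 ≤ i → i ≤ k → (A i).Nonempty ∧ (B i).Nonempty) ∧
      (∀ n : ℤ, n ≠ 0 → ∀ i : ℕ, 1 ≤ i → i ≤ k →
        (fun x => (f ^ n) • x) '' A i ⊆ B i) ∧
      (∀ n : ℤ, n ≠ 0 → ∀ i : ℕ, 1 ≤ i → i ≤ k - 1 →
        (fun x => (g ^ n) • x) '' B i ⊆ A (i + 1)) ∧
      A 1 ∩ B k = ∅) :
    ¬ SatisfiesLaw Γ := by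
  rintro ⟨N, hN, w, hw, hlaw⟩
  rcases hL : FreeGroup.toWord w with _ | ⟨x, L0⟩
  · exact hw (FreeGroup.toWord_eq_nil_iff.mp hL)
  have hmk : FreeGroup.mk (x :: L0) = w := by rw [← hL, FreeGroup.mk_toWord]
  have hred : FreeGroup.reduce (x :: L0) = x :: L0 := by
    rw [← hL]; exact FreeGroup.reduce_toWord w
  have hQmem := ppZip_entries (x :: L0) hred
  have hprod : ∀ f g : Γ, (FreeGroup.lift (ppBeta f g)) w
      = g ^ ppSgn x * ppV f g (ppZip (x :: L0)) *
        (f ^ ppEps (ppLast x L0) * g ^ ppSgn (ppLast x L0)) := by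
    intro f g
    rw [← hmk, FreeGroup.lift_mk]
    rw [show (fun z : Fin N × Bool => cond z.2 (ppBeta f g z.1) (ppBeta f g z.1)⁻¹)
        = fun z => g ^ ppSgn z * f ^ ppEps z * g ^ ppSgn z from funext (ppBeta_cond f g)]
    exact ppProd f g L0 x
  have heps_t : ppEps (ppLast x L0) = 1 ∨ ppEps (ppLast x L0) = -1 := by
    rcases h : (ppLast x L0).2 <;> simp [ppEps, h]
  by_cases hb : ppSgn (ppLast x L0) + ppSgn x = 0
  · rcases hQ : ppZip (x :: L0) with _ | ⟨⟨e1, c1⟩, Q'⟩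
    · -- impossible: zip empty means single letter, but then the sum of signs is nonzero
      exfalso
      rcases L0 with _ | ⟨y, L1⟩
      · have hx := ppSgn_ne_zero x
        simp only [ppLast] at hb
        omega
      · exact absurd hQ (by simp [ppZip])
    · have hm1 := hQmem (e1, c1) (by rw [hQ]; exact List.mem_cons_self)
      have he1 : e1 = 1 ∨ e1 = -1 := hm1.1
      refine ppFinal H w hlaw ((e1 + 2, c1) :: Q') (ppEps (ppLast x L0) - 2) ?_ ?_ ?_
      · intro p hp
        rcases List.mem_cons.mp hp with rfl | hp'
        · exact ⟨by show e1 + 2 ≠ 0; rcases he1 with h | h <;> omega, hm1.2⟩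
        · have hq := hQmem p (by rw [hQ]; exact List.mem_cons_of_mem _ hp')
          exact ⟨by rcases hq.1 with h | h <;> simp [h], hq.2⟩
      · rcases heps_t with h | h <;> rw [h] <;> norm_num
      · intro f g
        refine ⟨f ^ (2 : ℤ) * g ^ (-ppSgn x), ?_⟩
        have hσ : ppSgn (ppLast x L0) = -ppSgn x := by omega
        rw [hprod f g, hQ, hσ, ppV_cons, ppV_cons]
        group
  · rcases hQ : ppZip (x :: L0) with _ | ⟨⟨e1, c1⟩, Q'⟩
    · refine ppFinal H w hlaw
        [(ppEps (ppLast x L0) + 2, ppSgn (ppLast x L0) + ppSgn x)] (-2) ?_ (by norm_num) ?_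
      · intro p hp
        rw [List.mem_singleton] at hp
        subst hp
        exact ⟨by show _ + 2 ≠ 0; rcases heps_t with h | h <;> rw [h] <;> norm_num, hb⟩
      · intro f g
        refine ⟨f ^ (2 : ℤ) * g ^ (-ppSgn x), ?_⟩
        rw [hprod f g, hQ, ppV_cons, ppV_nil]
        group
    · have hm1 := hQmem (e1, c1) (by rw [hQ]; exact List.mem_cons_self)
      have he1 : e1 = 1 ∨ e1 = -1 := hm1.1
      refine ppFinal H w hlaw
        ((e1 + 2, c1) :: (Q' ++ [(ppEps (ppLast x L0), ppSgn (ppLast x L0) + ppSgn x)]))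
        (-2) ?_ (by norm_num) ?_
      · intro p hp
        rcases List.mem_cons.mp hp with rfl | hp'
        · exact ⟨by show e1 + 2 ≠ 0; rcases he1 with h | h <;> omega, hm1.2⟩
        · rcases List.mem_append.mp hp' with h' | h'
          · have hq := hQmem p (by rw [hQ]; exact List.mem_cons_of_mem _ h')
            exact ⟨by rcases hq.1 with h | h <;> simp [h], hq.2⟩
          · rw [List.mem_singleton] at h'
            subst h'
            exact ⟨by show _ ≠ 0; rcases heps_t with h | h <;> rw [h] <;> norm_num, hb⟩
      · intro f g
        refine ⟨f ^ (2 : ℤ) * g ^ (-ppSgn x), ?_⟩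
        rw [hprod f g, hQ, ppV_cons, ppV_cons, ppV_append_single]
        group
end

section
/- Let Γ be a group equipped with a left-order ≼. Suppose that for every k ≥ 1 there exist f, g ∈ Γ and elements h_i, h_i', h̄_i, h̄_i' (1 ≤ i ≤ 2k+1) ordered as h₁ ≺ h₁' ≺ h̄₁ ≺ h̄₁' ≺ h₂ ≺ h₂' ≺ h̄₂ ≺ h̄₂' ≺ … ≺ h_{2k+1} ≺ h_{2k+1}' ≺ h̄_{2k+1} ≺ h̄_{2k+1}', such that for every nonzero integer n: (a) for each i ∈ {2,…,2k+1}, either h̄_{i−1} ≺ fⁿh_i ≺ fⁿh_i' ≺ h̄_{i−1}' or h̄_i ≺ fⁿh_i ≺ fⁿh_i' ≺ h̄_i'; and (b) for each i ∈ {1,…,2k}, either h_i ≺ gⁿh̄_i ≺ gⁿh̄_i' ≺ h_i' or h_{i+1} ≺ gⁿh̄_i ≺ gⁿh̄_i' ≺ h_{i+1}'. Then Γ satisfies no nontrivial law. -/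
namespace NoLawPingPongAux

set_option linter.unusedSectionVars false
set_option linter.unreachableTactic false
set_option linter.unusedTactic false
set_option linter.unnecessarySeqFocus false

/-- Evaluation of a syllable word: `[(b₁,n₁),…]` evaluates to `x₁^{n₁} ⋯` where `xᵢ` is
`f` if `bᵢ = true` and `g` otherwise. -/
def eval {Γ : Type*} [Group Γ] (f g : Γ) : List (Bool × ℤ) → Γ
  | [] => 1
  | (b, n) :: t => (if b then f else g) ^ n * eval f g t

section Core

variable {α : Type*} [DecidableEq α]

/-- Collect the word `f^{ε₁} g^{m₂-m₁} f^{ε₂} ⋯ f^{ε_L} g^{-m_L}` as a syllable list,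
merging consecutive letters with equal index. -/
def core (m : α → ℤ) : List (α × Bool) → List (Bool × ℤ)
  | [] => []
  | (i, b) :: t =>
    match t with
    | [] => [(true, if b then 1 else -1), (false, -(m i))]
    | (j, _) :: _ =>
      if i = j then
        match core m t with
        | (true, n) :: t' => (true, (if b then 1 else -1) + n) :: t'
        | l => l
      else (true, if b then 1 else -1) :: (false, m j - m i) :: core m t

lemma core_cons_cons (m : α → ℤ) (i : α) (b : Bool) (j : α) (c : Bool) (t : List (α × Bool)) :
    core m ((i,b)::(j,c)::t) =
      if i = j then
        (match core m ((j,c)::t) with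
          | (true, n) :: t' => (true, (if b then 1 else -1) + n) :: t'
          | l => l)
      else (true, if b then 1 else -1) :: (false, m j - m i) :: core m ((j,c)::t) := rfl

lemma chain'_reduce (L : List (α × Bool)) :
    List.Chain' (fun p q : α × Bool => ¬(p.1 = q.1 ∧ p.2 = !q.2)) (FreeGroup.reduce L) := by
  induction L with
  | nil => simp [List.Chain']
  | cons x L IH =>
    rw [FreeGroup.reduce.cons]
    rcases hL : FreeGroup.reduce L with _ | ⟨hd, tl⟩
    · simp [List.Chain']
    · rw [hL] at IH
      by_cases hx : x.1 = hd.1 ∧ x.2 = !hd.2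
      · simp only [hx, if_pos, and_self, ite_true]
        exact IH.tail
      · simp only [hx, ite_false]
        exact List.IsChain.cons_cons hx IH

lemma core_spec {Γ : Type*} [Group Γ] (m : α → ℤ) (hminj : ∀ i j : α, i ≠ j → m i ≠ m j)
    (hm0 : ∀ i, m i ≠ 0) (f g : Γ) :
    ∀ (t : List (α × Bool)) (i : α) (b : Bool),
    List.Chain' (fun p q : α × Bool => ¬(p.1 = q.1 ∧ p.2 = !q.2)) ((i,b)::t) →
    ∃ (n : ℤ) (l' : List (Bool × ℤ)), core m ((i,b)::t) = (true, n) :: l' ∧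
      (if b then 0 < n else n < 0) ∧
      (∀ p ∈ l', p.2 ≠ 0) ∧
      List.Chain' (fun p q : Bool × ℤ => p.1 ≠ q.1) ((true,n) :: l') ∧
      ((true,n)::l').length ≤ 2 * (t.length + 1) ∧
      g ^ (m i) * eval f g ((true,n)::l') =
        (((i,b)::t).map fun p => g ^ (m p.1) * (cond p.2 f f⁻¹) * (g ^ (m p.1))⁻¹).prod := by
  intro t
  induction t with
  | nil =>
    intro i b _
    refine ⟨if b then 1 else -1, [(false, -(m i))], rfl, by cases b <;> simp, ?_, ?_, ?_, ?_⟩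
    · intro p hp
      simp only [List.mem_singleton] at hp
      subst hp
      simpa using hm0 i
    · simp [List.Chain']
    · simp
    · cases b <;> simp [eval] <;> group
  | cons q t IH =>
    obtain ⟨j, c⟩ := q
    intro i b hch
    have hch' := hch.tail
    obtain ⟨n2, l2, hcore2, hsgn2, hnz2, hchain2, hlen2, hprod2⟩ := IH j c hch'
    have hn2 : n2 ≠ 0 := by cases c <;> simp at hsgn2 <;> omega
    by_cases hij : i = j
    · -- merged case
      have hbc : b = c := by
        have h0 := List.isChain_cons_cons.1 hch |>.1
        rcases Bool.eq_or_eq_not b c with h1 | h1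
        · exact h1
        · exact absurd ⟨hij, h1⟩ h0
      refine ⟨(if b then 1 else -1) + n2, l2, ?_, ?_, hnz2, ?_, ?_, ?_⟩
      · rw [core_cons_cons, if_pos hij, hcore2]
      · subst hbc
        cases b <;> simp only [Bool.false_eq_true, if_false, if_true] at hsgn2 ⊢ <;> omega
      · rcases List.isChain_cons.1 hchain2 with ⟨h1, h2⟩
        exact List.isChain_cons.2 ⟨h1, h2⟩
      · simp only [List.length_cons] at hlen2 ⊢; omega
      · subst hij; subst hbc
        rw [List.map_cons, List.prod_cons, ← hprod2]
        show g ^ m i * ((f : Γ) ^ ((if b then 1 else -1) + n2) * eval f g l2)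
          = (g ^ m i * (cond b f f⁻¹) * (g ^ m i)⁻¹) * (g ^ m i * (f ^ n2 * eval f g l2))
        cases b <;>
          simp only [Bool.false_eq_true, if_false, if_true, cond_false, cond_true] <;>
          rw [zpow_add] <;> group
    · refine ⟨if b then 1 else -1, (false, m j - m i) :: (true, n2) :: l2, ?_,
        by cases b <;> simp, ?_, ?_, ?_, ?_⟩
      · rw [core_cons_cons, if_neg hij, hcore2]
      · intro p hp
        rcases List.mem_cons.1 hp with rfl | hp
        · simpa [sub_ne_zero] using fun hh => hminj j i (Ne.symm hij) hh
        rcases List.mem_cons.1 hp with rfl | hp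
        · simpa using hn2
        · exact hnz2 p hp
      · exact List.IsChain.cons_cons (by simp) (List.IsChain.cons_cons (by simp) hchain2)
      · simp only [List.length_cons] at hlen2 ⊢; omega
      · rw [List.map_cons, List.prod_cons, ← hprod2]
        show g ^ m i * ((if b then 1 else -1 : ℤ) |> fun e => f ^ e * (g ^ (m j - m i) * (f ^ n2 * eval f g l2)))
          = (g ^ m i * (cond b f f⁻¹) * (g ^ m i)⁻¹) * (g ^ m j * (f ^ n2 * eval f g l2))
        cases b <;>
          simp only [Bool.false_eq_true, if_false, if_true, cond_false, cond_true] <;>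
          rw [zpow_sub] <;> group

end Core

section PingPong

variable {Γ : Type*} [Group Γ] [LinearOrder Γ]
  (hleft : ∀ a b c : Γ, a < b → c * a < c * b)
  (k : ℕ) (hk : 1 ≤ k) (f g : Γ) (h h' hb hb' : ℕ → Γ)
  (hc : ∀ i : ℕ, 1 ≤ i → i ≤ 2 * k + 1 → h i < h' i ∧ h' i < hb i ∧ hb i < hb' i)
  (hsep : ∀ i : ℕ, 1 ≤ i → i ≤ 2 * k → hb' i < h (i + 1))
  (ha : ∀ n : ℤ, n ≠ 0 → ∀ i : ℕ, 2 ≤ i → i ≤ 2 * k + 1 →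
        (hb (i - 1) < f ^ n * h i ∧ f ^ n * h i < f ^ n * h' i ∧
          f ^ n * h' i < hb' (i - 1)) ∨
        (hb i < f ^ n * h i ∧ f ^ n * h i < f ^ n * h' i ∧ f ^ n * h' i < hb' i))
  (hbg : ∀ n : ℤ, n ≠ 0 → ∀ i : ℕ, 1 ≤ i → i ≤ 2 * k →
        (h i < g ^ n * hb i ∧ g ^ n * hb i < g ^ n * hb' i ∧ g ^ n * hb' i < h' i) ∨
        (h (i + 1) < g ^ n * hb i ∧ g ^ n * hb i < g ^ n * hb' i ∧
          g ^ n * hb' i < h' (i + 1)))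

/-- the starting point, determined by the last syllable -/
def st (L : List (Bool × ℤ)) : Γ :=
  if (L.getLastD (true, 0)).1 then h (k+1) else hb (k+1)

/-- the chain of all points as a single sequence -/
def u (n : ℕ) : Γ :=
  if n % 4 = 0 then h (n / 4)
  else if n % 4 = 1 then h' (n / 4)
  else if n % 4 = 2 then hb (n / 4)
  else hb' (n / 4)

lemma u0 (i : ℕ) : u h h' hb hb' (4 * i) = h i := by
  have h1 : (4 * i) % 4 = 0 := by omega
  have h2 : (4 * i) / 4 = i := by omega
  simp [u, h1, h2]

lemma u1 (i : ℕ) : u h h' hb hb' (4 * i + 1) = h' i := by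
  have h1 : (4 * i + 1) % 4 = 1 := by omega
  have h2 : (4 * i + 1) / 4 = i := by omega
  simp [u, h1, h2]

lemma u2 (i : ℕ) : u h h' hb hb' (4 * i + 2) = hb i := by
  have h1 : (4 * i + 2) % 4 = 2 := by omega
  have h2 : (4 * i + 2) / 4 = i := by omega
  simp [u, h1, h2]

lemma u3 (i : ℕ) : u h h' hb hb' (4 * i + 3) = hb' i := by
  have h1 : (4 * i + 3) % 4 = 3 := by omega
  have h2 : (4 * i + 3) / 4 = i := by omega
  simp [u, h1, h2]

include hc hsep in
lemma ustep (n : ℕ) (h4 : 4 ≤ n) (hub : n + 1 ≤ 8 * k + 7) :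
    u h h' hb hb' n < u h h' hb hb' (n + 1) := by
  obtain ⟨q, r, hr, rfl⟩ : ∃ q r, r < 4 ∧ n = 4 * q + r :=
    ⟨n / 4, n % 4, Nat.mod_lt _ (by norm_num), by omega⟩
  have hq1 : 1 ≤ q := by omega
  interval_cases r
  · rw [show 4 * q + 0 = 4 * q from by omega, u0, u1]
    exact (hc q hq1 (by omega)).1
  · rw [u1, show 4 * q + 1 + 1 = 4 * q + 2 from by omega, u2]
    exact (hc q hq1 (by omega)).2.1
  · rw [u2, show 4 * q + 2 + 1 = 4 * q + 3 from by omega, u3]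
    exact (hc q hq1 (by omega)).2.2
  · rw [u3, show 4 * q + 3 + 1 = 4 * (q + 1) from by omega, u0]
    exact hsep q hq1 (by omega)

include hc hsep in
lemma umono (a b : ℕ) (h4 : 4 ≤ a) (hab : a < b) (hub : b ≤ 8 * k + 7) :
    u h h' hb hb' a < u h h' hb hb' b := by
  obtain ⟨d, rfl⟩ : ∃ d, b = a + 1 + d := ⟨b - (a + 1), by omega⟩
  clear hab
  induction d with
  | zero => exact ustep k h h' hb hb' hc hsep a h4 (by omega)
  | succ d IH =>
    exact lt_trans (IH (by omega))
      (ustep k h h' hb hb' hc hsep (a + 1 + d) (by omega) (by omega))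

include hc hsep in
lemma no_between (a c : ℕ) (ha4 : 4 ≤ a) (hc4 : 4 ≤ c) (haub : a + 1 ≤ 8 * k + 7)
    (hcub : c ≤ 8 * k + 7) (h1 : u h h' hb hb' a < u h h' hb hb' c)
    (h2 : u h h' hb hb' c < u h h' hb hb' (a + 1)) : False := by
  rcases lt_trichotomy c a with hlt | rfl | hgt
  · exact absurd (umono k h h' hb hb' hc hsep c a hc4 hlt (by omega)) (not_lt.2 h1.le)
  · exact lt_irrefl _ h1
  · rcases Nat.lt_or_ge (a + 1) c with hgt' | hge
    · exact absurd (umono k h h' hb hb' hc hsep (a + 1) c (by omega) hgt' hcub)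
        (not_lt.2 h2.le)
    · have : c = a + 1 := by omega
      subst this
      exact lt_irrefl _ h2

include hleft hk hc hsep ha hbg

lemma key :
    ∀ (t : List (Bool × ℤ)) (b : Bool) (n : ℤ), n ≠ 0 → (∀ p ∈ t, p.2 ≠ 0) →
    List.Chain' (fun p q : Bool × ℤ => p.1 ≠ q.1) ((b,n)::t) →
    t.length + 1 ≤ k →
    ∃ i : ℕ,
      k + 1 ≤ i + ((b,n)::t).countP (fun p => p.1) ∧
      i ≤ k + 1 + ((b,n)::t).countP (fun p => !p.1) ∧
      (if b then (hb i < eval f g ((b,n)::t) * st k h hb ((b,n)::t) ∧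
                  eval f g ((b,n)::t) * st k h hb ((b,n)::t) < hb' i)
       else (h i < eval f g ((b,n)::t) * st k h hb ((b,n)::t) ∧
             eval f g ((b,n)::t) * st k h hb ((b,n)::t) < h' i)) := by
  intro t
  induction t with
  | nil =>
    intro b n hn _ _ _
    have hev : eval f g [(b,n)] * st k h hb [(b,n)]
        = (if b then f else g) ^ n * (if b then h (k+1) else hb (k+1)) := by
      cases b <;> simp [eval, st, List.getLastD, mul_one]
    cases b
    · -- g-syllable
      simp only [Bool.false_eq_true, if_false] at hev
      rcases hbg n hn (k+1) (by omega) (by omega) with ⟨A, _, C⟩ | ⟨A, _, C⟩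
      · exact ⟨k+1, by simp [List.countP_cons] <;> omega, by simp [List.countP_cons] <;> omega,
          by simp only [Bool.false_eq_true, if_false]; rw [hev]; exact ⟨A, lt_trans (by assumption) C⟩⟩
      · exact ⟨k+2, by simp [List.countP_cons] <;> omega, by simp [List.countP_cons] <;> omega,
          by simp only [Bool.false_eq_true, if_false]; rw [hev]; exact ⟨A, lt_trans (by assumption) C⟩⟩
    · -- f-syllable
      simp only [if_true] at hev
      rcases ha n hn (k+1) (by omega) (by omega) with ⟨A, B, C⟩ | ⟨A, B, C⟩
      · refine ⟨k, ?_, ?_, ?_⟩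
        · simp [List.countP_cons]
        · simp [List.countP_cons] <;> omega
        · simp only [if_true]
          rw [hev]
          have heq : (k+1) - 1 = k := by omega
          rw [heq] at A C
          exact ⟨A, lt_trans B C⟩
      · exact ⟨k+1, by simp [List.countP_cons], by simp [List.countP_cons] <;> omega,
          by simp only [if_true]; rw [hev]; exact ⟨A, lt_trans B C⟩⟩
  | cons q t IH =>
    obtain ⟨b', n'⟩ := q
    intro b n hn hnz hch hlen
    have hbb : b' ≠ b := (List.isChain_cons_cons.1 hch).1.symm
    have hn' : n' ≠ 0 := hnz (b', n') (by simp)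
    obtain ⟨i, hi1, hi2, hint⟩ := IH b' n' hn' (fun p hp => hnz p (by simp [hp]))
      (List.isChain_cons_cons.1 hch).2 (by simp at hlen; omega)
    have hst : st (Γ := Γ) k h hb ((b,n)::(b',n')::t) = st k h hb ((b',n')::t) := by
      simp [st, List.getLastD_cons]
    have hev : eval f g ((b,n)::(b',n')::t) * st k h hb ((b,n)::(b',n')::t)
        = (if b then f else g) ^ n * (eval f g ((b',n')::t) * st k h hb ((b',n')::t)) := by
      rw [hst]; simp [eval, mul_assoc]
    have hlen' : t.length + 2 ≤ k := by simp at hlen; omega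
    have hcf : t.countP (fun p : Bool × ℤ => p.1) ≤ t.length := List.countP_le_length
    have hcg : t.countP (fun p : Bool × ℤ => !p.1) ≤ t.length := List.countP_le_length
    cases b
    · -- applying g-syllable; previous head was f (b' = true)
      have hbt : b' = true := by
        cases b'
        · exact absurd rfl hbb
        · rfl
      subst hbt
      simp only [List.countP_cons] at hi1 hi2
      simp at hi1 hi2
      simp only [if_true] at hint
      have hiub : i ≤ 2 * k := by omega
      have hilb : 1 ≤ i := by omega
      rcases hbg n hn i hilb hiub with ⟨A, B, C⟩ | ⟨A, B, C⟩
      · refine ⟨i, ?_, ?_, ?_⟩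
        · simp [List.countP_cons] <;> omega
        · simp [List.countP_cons] <;> omega
        · simp only [Bool.false_eq_true, if_false]
          rw [hev]
          exact ⟨lt_trans A (hleft _ _ _ hint.1), lt_trans (hleft _ _ _ hint.2) C⟩
      · refine ⟨i+1, ?_, ?_, ?_⟩
        · simp [List.countP_cons] <;> omega
        · simp [List.countP_cons] <;> omega
        · simp only [Bool.false_eq_true, if_false]
          rw [hev]
          exact ⟨lt_trans A (hleft _ _ _ hint.1), lt_trans (hleft _ _ _ hint.2) C⟩
    · -- applying f-syllable; previous head was g (b' = false)
      have hbt : b' = false := by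
        cases b'
        · rfl
        · exact absurd rfl hbb
      subst hbt
      simp only [List.countP_cons] at hi1 hi2
      simp at hi1 hi2
      simp only [Bool.false_eq_true, if_false] at hint
      have hiub : i ≤ 2 * k + 1 := by omega
      have hilb : 2 ≤ i := by omega
      rcases ha n hn i hilb hiub with ⟨A, _, C⟩ | ⟨A, _, C⟩
      · refine ⟨i - 1, ?_, ?_, ?_⟩
        · simp [List.countP_cons] <;> omega
        · simp [List.countP_cons] <;> omega
        · simp only [if_true]
          rw [hev]
          exact ⟨lt_trans A (hleft _ _ _ hint.1), lt_trans (hleft _ _ _ hint.2) C⟩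
      · refine ⟨i, ?_, ?_, ?_⟩
        · simp [List.countP_cons] <;> omega
        · simp [List.countP_cons] <;> omega
        · simp only [if_true]
          rw [hev]
          exact ⟨lt_trans A (hleft _ _ _ hint.1), lt_trans (hleft _ _ _ hint.2) C⟩

lemma pingpong (t : List (Bool × ℤ)) (b : Bool) (n : ℤ) (hn : n ≠ 0)
    (hnz : ∀ p ∈ t, p.2 ≠ 0)
    (hch : List.Chain' (fun p q : Bool × ℤ => p.1 ≠ q.1) ((b,n)::t))
    (hlen : t.length + 1 ≤ k) :
    eval f g ((b,n)::t) ≠ 1 := by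
  intro hone
  obtain ⟨i, hi1, hi2, hint⟩ :=
    key hleft k hk f g h h' hb hb' hc hsep ha hbg t b n hn hnz hch hlen
  rw [hone, one_mul] at hint
  have hcf : ((b,n)::t).countP (fun p : Bool × ℤ => p.1) ≤ k :=
    le_trans List.countP_le_length (by simp; omega)
  have hcg : ((b,n)::t).countP (fun p : Bool × ℤ => !p.1) ≤ k :=
    le_trans List.countP_le_length (by simp; omega)
  have hi1' : 1 ≤ i := by omega
  have hi2' : i ≤ 2 * k + 1 := by omega
  by_cases hl : (((b,n)::t : List (Bool × ℤ)).getLastD (true, 0)).1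
  · -- starting point h (k+1) = u (4(k+1))
    have hstv : st (Γ := Γ) k h hb ((b,n)::t) = h (k+1) := by unfold st; rw [if_pos hl]
    rw [hstv] at hint
    cases b
    · simp only [Bool.false_eq_true, if_false] at hint
      refine no_between k h h' hb hb' hc hsep (4*i) (4*(k+1)) (by omega) (by omega)
        (by omega) (by omega) ?_ ?_
      · rw [u0, u0]; exact hint.1
      · rw [u0, show 4*i+1 = 4*i+1 from rfl, u1]; exact hint.2
    · simp only [if_true] at hint
      refine no_between k h h' hb hb' hc hsep (4*i+2) (4*(k+1)) (by omega) (by omega)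
        (by omega) (by omega) ?_ ?_
      · rw [u2, u0]; exact hint.1
      · rw [u0, show 4*i+2+1 = 4*i+3 from rfl, u3]; exact hint.2
  · -- starting point hb (k+1) = u (4(k+1)+2)
    have hstv : st (Γ := Γ) k h hb ((b,n)::t) = hb (k+1) := by unfold st; rw [if_neg hl]
    rw [hstv] at hint
    cases b
    · simp only [Bool.false_eq_true, if_false] at hint
      refine no_between k h h' hb hb' hc hsep (4*i) (4*(k+1)+2) (by omega) (by omega)
        (by omega) (by omega) ?_ ?_
      · rw [u0, u2]; exact hint.1
      · rw [u2, show 4*i+1 = 4*i+1 from rfl, u1]; exact hint.2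
    · simp only [if_true] at hint
      refine no_between k h h' hb hb' hc hsep (4*i+2) (4*(k+1)+2) (by omega) (by omega)
        (by omega) (by omega) ?_ ?_
      · rw [u2, u2]; exact hint.1
      · rw [u2, show 4*i+2+1 = 4*i+3 from rfl, u3]; exact hint.2

end PingPong

end NoLawPingPongAux

/-- Let `Γ` carry a left-invariant linear order. Suppose that for every `k ≥ 1` there
are `f, g ∈ Γ` and elements `hᵢ ≺ hᵢ' ≺ h̄ᵢ ≺ h̄ᵢ'` (`1 ≤ i ≤ 2k+1`), ordered as a chain
`h₁ ≺ h₁' ≺ h̄₁ ≺ h̄₁' ≺ h₂ ≺ … ≺ h̄_{2k+1}'`, such that for every nonzero integer `n`: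
(a) for `2 ≤ i ≤ 2k+1`, either `h̄_{i-1} ≺ fⁿhᵢ ≺ fⁿhᵢ' ≺ h̄_{i-1}'` or
`h̄ᵢ ≺ fⁿhᵢ ≺ fⁿhᵢ' ≺ h̄ᵢ'`; (b) for `1 ≤ i ≤ 2k`, either `hᵢ ≺ gⁿh̄ᵢ ≺ gⁿh̄ᵢ' ≺ hᵢ'`
or `h_{i+1} ≺ gⁿh̄ᵢ ≺ gⁿh̄ᵢ' ≺ h_{i+1}'`. Then `Γ` satisfies no nontrivial law. -/
theorem no_law_of_order_ping_pong
    {Γ : Type*} [Group Γ] [LinearOrder Γ]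
    (hleft : ∀ a b c : Γ, a < b → c * a < c * b)
    (H : ∀ k : ℕ, 1 ≤ k → ∃ f g : Γ, ∃ h h' hb hb' : ℕ → Γ,
      (∀ i : ℕ, 1 ≤ i → i ≤ 2 * k + 1 →
        h i < h' i ∧ h' i < hb i ∧ hb i < hb' i) ∧
      (∀ i : ℕ, 1 ≤ i → i ≤ 2 * k → hb' i < h (i + 1)) ∧
      (∀ n : ℤ, n ≠ 0 → ∀ i : ℕ, 2 ≤ i → i ≤ 2 * k + 1 →
        (hb (i - 1) < f ^ n * h i ∧ f ^ n * h i < f ^ n * h' i ∧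
          f ^ n * h' i < hb' (i - 1)) ∨
        (hb i < f ^ n * h i ∧ f ^ n * h i < f ^ n * h' i ∧ f ^ n * h' i < hb' i)) ∧
      (∀ n : ℤ, n ≠ 0 → ∀ i : ℕ, 1 ≤ i → i ≤ 2 * k →
        (h i < g ^ n * hb i ∧ g ^ n * hb i < g ^ n * hb' i ∧ g ^ n * hb' i < h' i) ∨
        (h (i + 1) < g ^ n * hb i ∧ g ^ n * hb i < g ^ n * hb' i ∧
          g ^ n * hb' i < h' (i + 1)))) :
    ¬ SatisfiesLaw Γ := by
  open NoLawPingPongAux in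
  rintro ⟨nn, hnn, w, hw, hlaw⟩
  have hlne : w.toWord ≠ [] := fun hnil => hw (FreeGroup.toWord_eq_nil_iff.1 hnil)
  obtain ⟨p, t0, hW⟩ := List.exists_cons_of_ne_nil hlne
  obtain ⟨i0, b0⟩ := p
  set k : ℕ := 2 * (t0.length + 1) + 1 with hkdef
  obtain ⟨f, g, h, h', hb, hb', hc, hsep, ha, hbg⟩ := H k (by omega)
  set m : Fin nn → ℤ := fun i => (i : ℕ) + 1 with hm
  have hminj : ∀ i j : Fin nn, i ≠ j → m i ≠ m j := by
    intro i j hij hEq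
    apply hij
    simp only [hm, add_left_inj, Nat.cast_inj] at hEq
    exact Fin.ext hEq
  have hm0 : ∀ i, m i ≠ 0 := by
    intro i
    simp only [hm]
    omega
  have hred : List.Chain' (fun p q : (Fin nn) × Bool => ¬(p.1 = q.1 ∧ p.2 = !q.2))
      ((i0, b0) :: t0) := by
    rw [← hW, ← FreeGroup.reduce_toWord w]
    exact chain'_reduce _
  obtain ⟨n1, l1, hcoreEq, hsgn, hnz1, hchain1, hlen1, hprod1⟩ :=
    core_spec m hminj hm0 f g t0 i0 b0 hred
  set φ : FreeGroup (Fin nn) →* Γ :=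
    FreeGroup.lift (fun i : Fin nn => g ^ (m i) * f * (g ^ (m i))⁻¹) with hφdef
  have hmap : (fun x : Fin nn × Bool =>
        cond x.2 (g ^ m x.1 * f * (g ^ m x.1)⁻¹) (g ^ m x.1 * f * (g ^ m x.1)⁻¹)⁻¹)
      = fun p : Fin nn × Bool => g ^ m p.1 * (cond p.2 f f⁻¹) * (g ^ m p.1)⁻¹ := by
    funext p
    cases hp : p.2 <;> simp only [hp, cond_false, cond_true] <;> group
  have hφ : φ w = g ^ (m i0) * eval f g ((true, n1) :: l1) := by
    rw [hprod1]
    conv_lhs => rw [← FreeGroup.mk_toWord (x := w)]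
    rw [hφdef, FreeGroup.lift_mk, hW, hmap]
  have hfull : eval f g ((false, m i0) :: (true, n1) :: l1) = φ w := by
    rw [hφ]
    simp [eval]
  have hn1 : n1 ≠ 0 := by cases b0 <;> simp at hsgn <;> omega
  refine pingpong hleft k (by omega) f g h h' hb hb' hc hsep ha hbg
    ((true, n1) :: l1) false (m i0) (hm0 i0) ?_ ?_ ?_ ?_
  · intro p hp
    rcases List.mem_cons.1 hp with rfl | hp
    · simpa using hn1
    · exact hnz1 p hp
  · exact List.IsChain.cons_cons (by simp) hchain1
  · simp only [List.length_cons] at hlen1 ⊢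
    omega
  · rw [hfull]
    exact hlaw φ
end

section
/- Let Γ be a finitely generated group of orientation-preserving homeomorphisms of the real line whose action is minimal (every orbit is dense in ℝ) and not free (some nontrivial element of Γ has a fixed point). Then either there exists an orientation-preserving homeomorphism φ of ℝ without fixed points that commutes with every element of Γ, or for all reals a < b and a' < b' there exists g ∈ Γ with g(a) < a' and g(b) > b'. -/
/-- Let `Γ` be a finitely generated group of orientation-preserving homeomorphisms of
the real line (formalized as order-isomorphisms of `ℝ`) whose action is minimal (every
orbit is dense) and not free (some nontrivial element has a fixed point). Then either
there is a fixed-point-free orientation-preserving homeomorphism of `ℝ` commuting with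
every element of `Γ`, or every interval can be expanded over any other: for all
`a < b` and `a' < b'` there is `g ∈ Γ` with `g a < a'` and `g b > b'`. -/
theorem commuting_homeo_or_expansion
    (Γ : Subgroup (ℝ ≃o ℝ))
    (hfg : Group.FG ↥Γ)
    (hmin : ∀ x : ℝ, Dense {y : ℝ | ∃ g ∈ Γ, g x = y})
    (hnotfree : ∃ g ∈ Γ, g ≠ (1 : ℝ ≃o ℝ) ∧ ∃ x : ℝ, g x = x) :
    (∃ φ : ℝ ≃o ℝ, (∀ x : ℝ, φ x ≠ x) ∧ ∀ g ∈ Γ, ∀ x : ℝ, φ (g x) = g (φ x)) ∨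
    (∀ a b a' b' : ℝ, a < b → a' < b' → ∃ g ∈ Γ, g a < a' ∧ b' < g b) := by
  rcases Classical.em (∀ a b a' b' : ℝ, a < b → a' < b' → ∃ g ∈ Γ, g a < a' ∧ b' < g b) with hexp | hexp
  · exact Or.inr hexp
  left
  push_neg at hexp
  obtain ⟨a, b, a', b', hab, hab', hno⟩ := hexp
  -- orbit density: every orbit meets every open interval
  have orbit : ∀ x p q : ℝ, p < q → ∃ g ∈ Γ, g x ∈ Set.Ioo p q := by
    intro x p q hpq
    obtain ⟨y, hy, hy2⟩ := (hmin x).exists_between hpq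
    obtain ⟨g, hg, rfl⟩ := hy
    exact ⟨g, hg, hy2⟩
  -- key lemma: a Γ-invariant set missing a nonempty open interval is empty
  have key : ∀ A : Set ℝ, (∀ g ∈ Γ, ∀ x ∈ A, g x ∈ A) → ∀ p q : ℝ, p < q →
      (∀ y ∈ A, y ∉ Set.Ioo p q) → ∀ z, z ∉ A := by
    intro A hAinv p q hpq hmiss z hz
    obtain ⟨g, hg, hgz⟩ := orbit z p q hpq
    exact hmiss _ (hAinv g hg z hz) hgz
  set S : ℝ → Set ℝ := fun x => {y | ∃ g ∈ Γ, g a ≤ x ∧ g b = y} with hSdef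
  have hSne : ∀ x, (S x).Nonempty := by
    intro x
    obtain ⟨g, hg, hgx⟩ := orbit a (x - 1) x (by linarith)
    exact ⟨g b, g, hg, le_of_lt hgx.2, rfl⟩
  have hSbdd : ∀ x, BddAbove (S x) := by
    intro x
    obtain ⟨h, hh, hhx⟩ := orbit x (a' - 1) a' (by linarith)
    refine ⟨h.symm b', ?_⟩
    rintro y ⟨g, hg, hga, rfl⟩
    have h1 : (h * g : ℝ ≃o ℝ) a < a' := lt_of_le_of_lt (h.monotone hga) hhx.2
    have h2 : (h * g : ℝ ≃o ℝ) b ≤ b' := hno (h * g) (mul_mem hh hg) h1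
    have h3 := h.symm.monotone h2
    rwa [show h.symm ((h * g : ℝ ≃o ℝ) b) = g b from h.symm_apply_apply _] at h3
  set f : ℝ → ℝ := fun x => sSup (S x) with hfdef
  have hmono : Monotone f := by
    intro x y hxy
    refine csSup_le_csSup (hSbdd y) (hSne x) ?_
    rintro _ ⟨g, hg, hga, rfl⟩
    exact ⟨g, hg, hga.trans hxy, rfl⟩
  -- equivariance
  have heq : ∀ h ∈ Γ, ∀ x, f (h x) = h (f x) := by
    intro h hh x
    have himg : S (h x) = ⇑h '' S x := by
      ext y
      constructor
      · rintro ⟨g, hg, hga, rfl⟩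
        refine ⟨(h⁻¹ * g : ℝ ≃o ℝ) b, ⟨h⁻¹ * g, mul_mem (inv_mem hh) hg, ?_, rfl⟩, ?_⟩
        · have := h.symm.monotone hga
          rwa [show (h⁻¹ * g : ℝ ≃o ℝ) a = h.symm (g a) from rfl,
            show h.symm (h x) = x from h.symm_apply_apply x] at *
        · show h (h.symm (g b)) = g b
          exact h.apply_symm_apply _
      · rintro ⟨y, ⟨g, hg, hga, rfl⟩, rfl⟩
        exact ⟨h * g, mul_mem hh hg, h.monotone hga, rfl⟩
    rw [show f (h x) = sSup (S (h x)) from rfl, himg]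
    exact ((OrderIso.isLUB_image' h).mpr (isLUB_csSup (hSne x) (hSbdd x))).csSup_eq
      ((hSne x).image _)
  -- f x ≥ x
  have hge : ∀ x, x ≤ f x := by
    intro x
    refine le_of_forall_lt fun c hc => ?_
    obtain ⟨g, hg, hga⟩ := orbit a c x hc
    calc c < g a := hga.1
      _ < g b := g.strictMono hab
      _ ≤ f x := le_csSup (hSbdd x) ⟨g, hg, le_of_lt hga.2, rfl⟩
  -- f x > x
  have hgt : ∀ x, x < f x := by
    intro x
    rcases lt_or_ge x (f x) with hlt | hle
    · exact hlt
    exfalso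
    refine key {z | f z ≤ z} ?_ a b hab ?_ x hle
    · intro g hg z hz
      have : f (g z) = g (f z) := heq g hg z
      rw [Set.mem_setOf_eq, this]
      exact g.monotone hz
    · intro y hy hymem
      have hb : b ≤ f y :=
        le_csSup (hSbdd y) ⟨1, one_mem Γ, by simpa using le_of_lt hymem.1, by simp⟩
      exact absurd (hb.trans hy) (not_le.mpr hymem.2)
  -- strict monotonicity
  have hsm : StrictMono f := by
    intro x y hxy
    rcases lt_or_ge (f x) (f y) with hlt | hle
    · exact hlt
    exfalso
    set A : Set ℝ := {z | ∃ u v : ℝ, u < z ∧ z < v ∧ f v ≤ f u} with hAdef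
    have hAinv : ∀ g ∈ Γ, ∀ z ∈ A, g z ∈ A := by
      rintro g hg z ⟨u, v, h1, h2, h3⟩
      exact ⟨g u, g v, g.strictMono h1, g.strictMono h2,
        by rw [heq g hg u, heq g hg v]; exact g.monotone h3⟩
    have hcompl : ∀ g ∈ Γ, ∀ z ∈ Aᶜ, g z ∈ Aᶜ := by
      intro g hg z hz hmem
      have := hAinv g⁻¹ (inv_mem hg) _ hmem
      rw [show (g⁻¹ : ℝ ≃o ℝ) (g z) = z from g.symm_apply_apply z] at this
      exact hz this
    have hallA : ∀ z : ℝ, z ∈ A := by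
      intro z
      by_contra hz
      exact key Aᶜ hcompl x y hxy (fun w hw hmem => hw ⟨x, y, hmem.1, hmem.2, hle⟩) z hz
    -- locally constant monotone function: contradiction
    have hbddc : BddAbove {z | f z ≤ f 0} := ⟨f 0, fun z hz => (hge z).trans hz⟩
    have hnec : ({z : ℝ | f z ≤ f 0}).Nonempty := ⟨(0:ℝ), show f 0 ≤ f 0 from le_rfl⟩
    obtain ⟨u, v, hu, hv, huv⟩ := hallA (sSup {z | f z ≤ f 0})
    obtain ⟨w, hw, huw⟩ := exists_lt_of_lt_csSup hnec hu
    have hfv : f v ≤ f 0 := huv.trans ((hmono huw.le).trans hw)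
    exact absurd (le_csSup hbddc hfv) (not_le.mpr hv)
  -- dense range
  have hdr : ∀ p q : ℝ, p < q → ∃ x, f x ∈ Set.Ioo p q := by
    intro p q hpq
    by_contra hcon
    push_neg at hcon
    refine key (Set.range f) ?_ p q hpq ?_ (f 0) ⟨0, rfl⟩
    · rintro g hg y ⟨x, rfl⟩
      exact ⟨g x, heq g hg x⟩
    · rintro y ⟨x, rfl⟩
      exact hcon x
  -- surjectivity
  have hsurj : Function.Surjective f := by
    intro y
    have hne : ({x : ℝ | f x < y}).Nonempty := by
      obtain ⟨x1, hx1⟩ := hdr (y - 1) y (by linarith)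
      exact ⟨x1, hx1.2⟩
    have hbdd : BddAbove {x : ℝ | f x < y} := ⟨y, fun z hz => (hge z).trans hz.le⟩
    refine ⟨sSup {x : ℝ | f x < y}, le_antisymm ?_ ?_⟩
    · by_contra hgt'
      push_neg at hgt'
      obtain ⟨z, hz⟩ := hdr y _ hgt'
      have hzx : z < sSup {x : ℝ | f x < y} := by
        by_contra hzz
        push_neg at hzz
        exact absurd (hmono hzz) (not_le.mpr hz.2)
      obtain ⟨w, hw, hzw⟩ := exists_lt_of_lt_csSup hne hzx
      exact absurd ((hsm hzw).trans hw) (not_lt.mpr hz.1.le)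
    · by_contra hlt
      push_neg at hlt
      obtain ⟨z, hz⟩ := hdr _ y hlt
      have hzle : z ≤ sSup {x : ℝ | f x < y} := le_csSup hbdd hz.2
      exact absurd (hmono hzle) (not_le.mpr hz.1)
  refine ⟨StrictMono.orderIsoOfSurjective f hsm hsurj, ?_, ?_⟩
  · intro x
    have : (StrictMono.orderIsoOfSurjective f hsm hsurj) x = f x := by
      rw [StrictMono.coe_orderIsoOfSurjective]
    rw [this]
    exact ne_of_gt (hgt x)
  · intro g hg x
    have h1 : (StrictMono.orderIsoOfSurjective f hsm hsurj) (g x) = f (g x) := by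
      rw [StrictMono.coe_orderIsoOfSurjective]
    have h2 : (StrictMono.orderIsoOfSurjective f hsm hsurj) x = f x := by
      rw [StrictMono.coe_orderIsoOfSurjective]
    rw [h1, h2, heq g hg x]
end

section
/- Let W = W(a,b) be a nonempty reduced word in the free group on two generators a, b whose reduced form carries both positive and negative exponents. Then there exist orientation-preserving homeomorphisms f, g of the real line such that f(0) > 0, g(0) > 0, and W(f,g)(0) < 0, where W(f,g) denotes the homeomorphism obtained by substituting f for a and g for b in W. -/
open List Filter

namespace ViolatingWord

noncomputable section



/-- An order isomorphism of `ℝ` fixing `(-∞, c]` and sending `z ↦ y`, for any `z, y > c`. -/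
lemma exists_bump {c z y : ℝ} (hz : c < z) (hy : c < y) :
    ∃ H : ℝ ≃o ℝ, (∀ x, x ≤ c → H x = x) ∧ H z = y := by
  set d : ℝ := z - c with hdd
  have hd0 : 0 < d := by simp [hdd]; linarith
  set r : ℝ → ℝ := fun x => max 0 (min 1 ((x - c) / d)) with hr
  have hr0 : ∀ x, 0 ≤ r x := fun x => le_max_left _ _
  have hr1 : ∀ x, r x ≤ 1 := fun x => max_le (by norm_num) (min_le_left _ _)
  have hrmono : Monotone r := by
    apply monotone_const.max
    apply monotone_const.min
    exact Monotone.div_const (fun a b hab => by linarith) (le_of_lt hd0)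
  have hrlip : ∀ a b : ℝ, a ≤ b → r b - r a ≤ (b - a) / d := by
    intro a b hab
    have hta : (a - c)/d ≤ (b - c)/d := by gcongr <;> linarith
    have key : (b - c)/d - (a - c)/d = (b - a)/d := by field_simp; ring
    rcases max_cases 0 (min 1 ((a - c)/d)) with ⟨e1, le1⟩ | ⟨e1, le1⟩ <;>
    rcases max_cases 0 (min 1 ((b - c)/d)) with ⟨e2, le2⟩ | ⟨e2, le2⟩ <;>
    rcases min_cases 1 ((a - c)/d) with ⟨f1, lf1⟩ | ⟨f1, lf1⟩ <;>
    rcases min_cases 1 ((b - c)/d) with ⟨f2, lf2⟩ | ⟨f2, lf2⟩ <;>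
    simp only [hr] <;> rw [e1, e2] <;>
    first
    | linarith [div_nonneg (by linarith : (0:ℝ) ≤ b - a) (le_of_lt hd0)]
    | (rw [f1] at *; rw [f2] at *; linarith [div_nonneg (by linarith : (0:ℝ) ≤ b - a) (le_of_lt hd0)])
    | (rw [f1] at *; linarith [div_nonneg (by linarith : (0:ℝ) ≤ b - a) (le_of_lt hd0)])
    | (rw [f2] at *; linarith [div_nonneg (by linarith : (0:ℝ) ≤ b - a) (le_of_lt hd0)])
  set H : ℝ → ℝ := fun x => x + (y - z) * r x with hH
  have hmono : StrictMono H := by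
    intro a b hab
    have h1 : r a ≤ r b := hrmono (le_of_lt hab)
    have h2 : r b - r a ≤ (b - a)/d := hrlip a b (le_of_lt hab)
    rcases le_or_gt z y with hzy | hzy
    · have : 0 ≤ (y - z) * (r b - r a) := mul_nonneg (by linarith) (by linarith)
      simp only [hH]; nlinarith
    · have key : (y - z) * ((b - a)/d) ≤ (y - z) * (r b - r a) :=
        mul_le_mul_of_nonpos_left h2 (by linarith)
      have pos : 0 < (b - a) * ((y - c)/d) :=
        mul_pos (by linarith) (div_pos (by linarith) hd0)
      have expand : (b - a) + (y - z) * ((b - a)/d) = (b - a) * ((y - c)/d) := by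
        field_simp; ring
      simp only [hH]; nlinarith
  have hcont : Continuous H := by
    apply continuous_id.add
    apply continuous_const.mul
    exact continuous_const.max (continuous_const.min ((continuous_id.sub continuous_const).div_const d))
  have hbound : ∀ x, x - |y - z| ≤ H x ∧ H x ≤ x + |y - z| := by
    intro x
    have h1 : |(y - z) * r x| ≤ |y - z| := by
      rw [abs_mul]
      calc |y - z| * |r x| ≤ |y - z| * 1 := by
            apply mul_le_mul_of_nonneg_left _ (abs_nonneg _)
            rw [abs_le]; exact ⟨by linarith [hr0 x], hr1 x⟩
        _ = |y - z| := mul_one _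
    have := abs_le.mp h1
    constructor <;> simp only [hH] <;> linarith [this.1, this.2]
  have htop : Tendsto H atTop atTop := by
    apply tendsto_atTop_mono (fun x => (hbound x).1)
    simpa [sub_eq_add_neg] using tendsto_atTop_add_const_right atTop (-|y - z|) tendsto_id
  have hbot : Tendsto H atBot atBot := by
    apply tendsto_atBot_mono (fun x => (hbound x).2)
    simpa using tendsto_atBot_add_const_right atBot (|y - z|) tendsto_id
  have hsurj : Function.Surjective H := hcont.surjective htop hbot
  refine ⟨StrictMono.orderIsoOfSurjective H hmono hsurj, ?_, ?_⟩
  · intro x hx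
    have hrx : r x = 0 := by
      have ht : (x - c)/d ≤ 0 := div_nonpos_of_nonpos_of_nonneg (by linarith) (le_of_lt hd0)
      simp only [hr]
      exact max_eq_left (le_trans (min_le_right _ _) ht)
    show H x = x
    simp [hH, hrx]
  · have hrz : r z = 1 := by
      have : (z - c)/d = 1 := by field_simp; rw [hdd]
      simp only [hr, this]; norm_num
    show H z = y
    simp only [hH, hrz]; ring





/-- A finite "monotone graph": any two pairs are comparably ordered in both coordinates. -/
def MG (S : List (ℝ × ℝ)) : Prop := ∀ p ∈ S, ∀ q ∈ S, (p.1 < q.1 ↔ p.2 < q.2)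

lemma le_foldr_max {l : List ℝ} {a : ℝ} (init : ℝ) (h : a ∈ l) : a ≤ l.foldr max init := by
  induction l with
  | nil => simp at h
  | cons b t ih =>
    rcases mem_cons.mp h with rfl | h'
    · exact le_max_left _ _
    · exact le_trans (ih h') (le_max_right _ _)

lemma init_le_foldr_max (l : List ℝ) (init : ℝ) : init ≤ l.foldr max init := by
  induction l with
  | nil => simp
  | cons b t ih => exact le_trans ih (le_max_right _ _)

lemma foldr_max_lt {l : List ℝ} {init c : ℝ} (h : ∀ a ∈ l, a < c) (h0 : init < c) :
    l.foldr max init < c := by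
  induction l with
  | nil => simpa
  | cons b t ih =>
    simp only [foldr_cons]
    exact max_lt (h b (mem_cons_self)) (ih (fun a ha => h a (mem_cons_of_mem _ ha)))

lemma foldr_min_le {l : List ℝ} {a : ℝ} (init : ℝ) (h : a ∈ l) : l.foldr min init ≤ a := by
  induction l with
  | nil => simp at h
  | cons b t ih =>
    rcases mem_cons.mp h with rfl | h'
    · exact min_le_left _ _
    · exact le_trans (min_le_right _ _) (ih h')

lemma lt_foldr_min {l : List ℝ} {init c : ℝ} (h : ∀ a ∈ l, c < a) (h0 : c < init) :
    c < l.foldr min init := by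
  induction l with
  | nil => simpa
  | cons b t ih =>
    simp only [foldr_cons]
    exact lt_min (h b (mem_cons_self)) (ih (fun a ha => h a (mem_cons_of_mem _ ha)))

lemma exists_max_fst {S : List (ℝ × ℝ)} (h : S ≠ []) : ∃ p ∈ S, ∀ q ∈ S, q.1 ≤ p.1 := by
  induction S with
  | nil => exact absurd rfl h
  | cons a t ih =>
    rcases eq_or_ne t [] with rfl | ht
    · refine ⟨a, mem_cons_self, ?_⟩
      rintro q hq
      rcases mem_cons.mp hq with rfl | hq
      · exact le_refl _
      · simp at hq
    · obtain ⟨p, hp, hmax⟩ := ih ht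
      rcases le_total a.1 p.1 with hle | hle
      · exact ⟨p, mem_cons_of_mem _ hp, by
          rintro q hq; rcases mem_cons.mp hq with rfl | hq
          · exact hle
          · exact hmax q hq⟩
      · exact ⟨a, mem_cons_self, by
          rintro q hq; rcases mem_cons.mp hq with rfl | hq
          · exact le_refl _
          · exact le_trans (hmax q hq) hle⟩

lemma MG_of_sublist {S T : List (ℝ × ℝ)} (h : T ⊆ S) (hS : MG S) : MG T :=
  fun p hp q hq => hS p (h hp) q (h hq)

/-- Main extension lemma: every finite monotone graph extends to an order iso of `ℝ`. -/
lemma ext_aux : ∀ n : ℕ, ∀ S : List (ℝ × ℝ), S.length ≤ n → MG S →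
    ∃ F : ℝ ≃o ℝ, ∀ p ∈ S, F p.1 = p.2 := by
  intro n
  induction n with
  | zero =>
    intro S hlen _
    rw [Nat.le_zero, length_eq_zero_iff] at hlen
    subst hlen
    exact ⟨OrderIso.refl ℝ, by simp⟩
  | succ n ih =>
    intro S hlen hMG
    rcases eq_or_ne S [] with rfl | hne
    · exact ⟨OrderIso.refl ℝ, by simp⟩
    obtain ⟨p₀, hp₀S, hmax⟩ := exists_max_fst hne
    classical
    set S' := S.erase p₀ with hS'
    have hsub : S' ⊆ S := (List.erase_sublist (a := p₀) (l := S)).subset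
    have hS'len : S'.length ≤ n := by
      rw [hS', List.length_erase_of_mem hp₀S]
      have : 1 ≤ S.length := List.length_pos_iff.mpr hne
      omega
    have hMG' : MG S' := MG_of_sublist hsub hMG
    obtain ⟨F₀, hF₀⟩ := ih S' hS'len hMG'
    by_cases hdup : ∃ q ∈ S', q.1 = p₀.1
    · obtain ⟨q, hq, hq1⟩ := hdup
      have hq2 : q.2 = p₀.2 := by
        have h1 := hMG q (hsub hq) p₀ hp₀S
        have h2 := hMG p₀ hp₀S q (hsub hq)
        rw [hq1] at h1 h2
        simp only [lt_irrefl, false_iff] at h1 h2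
        exact le_antisymm (not_lt.mp h2) (not_lt.mp h1)
      have hqp : q = p₀ := Prod.ext hq1 hq2
      refine ⟨F₀, fun p hp => ?_⟩
      by_cases hpp : p = p₀
      · subst hpp; exact hF₀ p (hqp ▸ hq)
      · exact hF₀ p (List.mem_erase_of_ne hpp |>.mpr hp)
    · push_neg at hdup
      have hlt : ∀ q ∈ S', q.1 < p₀.1 :=
        fun q hq => lt_of_le_of_ne (hmax q (hsub hq)) (hdup q hq)
      have hlt2 : ∀ q ∈ S', q.2 < p₀.2 :=
        fun q hq => (hMG q (hsub hq) p₀ hp₀S).mp (hlt q hq)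
      set z := F₀ p₀.1 with hz
      have hq2z : ∀ q ∈ S', q.2 < z := by
        intro q hq
        rw [← hF₀ q hq, hz]
        exact F₀.strictMono (hlt q hq)
      set c := (S'.map Prod.snd).foldr max (min z p₀.2 - 1) with hc
      have hcz : c < z := by
        apply foldr_max_lt
        · intro a ha
          obtain ⟨q, hq, rfl⟩ := mem_map.mp ha
          exact hq2z q hq
        · calc min z p₀.2 - 1 < min z p₀.2 := by linarith
            _ ≤ z := min_le_left _ _
      have hcy : c < p₀.2 := by
        apply foldr_max_lt
        · intro a ha
          obtain ⟨q, hq, rfl⟩ := mem_map.mp ha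
          exact hlt2 q hq
        · calc min z p₀.2 - 1 < min z p₀.2 := by linarith
            _ ≤ p₀.2 := min_le_right _ _
      have hqc : ∀ q ∈ S', q.2 ≤ c :=
        fun q hq => le_foldr_max _ (mem_map.mpr ⟨q, hq, rfl⟩)
      obtain ⟨H, hHfix, hHz⟩ := exists_bump hcz hcy
      refine ⟨F₀.trans H, fun p hp => ?_⟩
      by_cases hpp : p = p₀
      · subst hpp
        show H (F₀ p.1) = p.2
        rw [← hz, hHz]
      · have hp' : p ∈ S' := List.mem_erase_of_ne hpp |>.mpr hp
        show H (F₀ p.1) = p.2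
        rw [hF₀ p hp', hHfix p.2 (hqc p hp')]

/-- Property needed so that the extension can take `0` to a positive value. -/
def BP (S : List (ℝ × ℝ)) : Prop := ∀ p ∈ S, 0 ≤ p.1 → 0 < p.2

lemma exist_F (S : List (ℝ × ℝ)) (hMG : MG S) (hB : BP S) :
    ∃ F : ℝ ≃o ℝ, (∀ p ∈ S, F p.1 = p.2) ∧ 0 < F 0 := by
  classical
  by_cases h0 : ∃ q ∈ S, q.1 = 0
  · obtain ⟨q, hq, hq1⟩ := h0
    obtain ⟨F, hF⟩ := ext_aux S.length S (le_refl _) hMG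
    refine ⟨F, hF, ?_⟩
    have := hF q hq
    rw [hq1] at this
    rw [this]
    exact hB q hq (by rw [hq1])
  · push_neg at h0
    set lo := ((S.filter (fun p => decide (p.1 < 0))).map Prod.snd).foldr max 0 with hlo
    set hi := ((S.filter (fun p => decide (0 < p.1))).map Prod.snd).foldr min (lo + 1) with hhi
    have hmemlo : ∀ q ∈ S, q.1 < 0 → q.2 ≤ lo := by
      intro q hq hq1
      apply le_foldr_max
      exact mem_map.mpr ⟨q, mem_filter.mpr ⟨hq, by simpa⟩, rfl⟩
    have hmemhi : ∀ q ∈ S, 0 < q.1 → hi ≤ q.2 := by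
      intro q hq hq1
      apply foldr_min_le
      exact mem_map.mpr ⟨q, mem_filter.mpr ⟨hq, by simpa⟩, rfl⟩
    have hlo0 : 0 ≤ lo := init_le_foldr_max _ _
    have hlohi : lo < hi := by
      apply lt_foldr_min
      · intro a ha
        obtain ⟨q, hq, rfl⟩ := mem_map.mp ha
        have hq' := mem_filter.mp hq
        have hq1 : 0 < q.1 := by simpa using hq'.2
        apply foldr_max_lt
        · intro b hb
          obtain ⟨q', hq'', rfl⟩ := mem_map.mp hb
          have hq''' := mem_filter.mp hq''
          have hq1' : q'.1 < 0 := by simpa using hq'''.2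
          exact hMG q' hq'''.1 q hq'.1 |>.mp (by linarith)
        · exact hB q hq'.1 (le_of_lt hq1)
      · linarith
    set cc := (lo + hi) / 2 with hcc
    have hc1 : lo < cc := by rw [hcc]; linarith
    have hc2 : cc < hi := by rw [hcc]; linarith
    have hc0 : 0 < cc := lt_of_le_of_lt hlo0 hc1
    have hMG' : MG ((0, cc) :: S) := by
      intro p hp q hq
      rcases mem_cons.mp hp with rfl | hp' <;> rcases mem_cons.mp hq with rfl | hq'
      · simp
      · show (0 < q.1 ↔ cc < q.2)
        rcases lt_trichotomy q.1 0 with h | h | h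
        · constructor
          · intro h'; linarith
          · intro h'; exfalso; have := hmemlo q hq' h; linarith
        · exact absurd h (h0 q hq')
        · constructor
          · intro _; have := hmemhi q hq' h; linarith
          · intro _; exact h
      · show (p.1 < 0 ↔ p.2 < cc)
        rcases lt_trichotomy p.1 0 with h | h | h
        · constructor
          · intro _; have := hmemlo p hp' h; linarith
          · intro _; exact h
        · exact absurd h (h0 p hp')
        · constructor
          · intro h'; linarith
          · intro h'; exfalso; have := hmemhi p hp' h; linarith
      · exact hMG p hp' q hq'
    obtain ⟨F, hF⟩ := ext_aux _ ((0, cc) :: S) (le_refl _) hMG'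
    refine ⟨F, fun p hp => hF p (mem_cons_of_mem _ hp), ?_⟩
    have := hF (0, cc) (mem_cons_self)
    simp only at this
    rw [this]
    exact hc0





/-- Squashing map `ℝ → (0,1)`. -/
def sq (x : ℝ) : ℝ := 1/2 + Real.arctan x / Real.pi

lemma sq_strictMono : StrictMono sq := by
  intro a b hab
  have h := Real.arctan_strictMono hab
  have hπ := Real.pi_pos
  unfold sq
  have : Real.arctan a / Real.pi < Real.arctan b / Real.pi := by
    apply div_lt_div_of_pos_right h hπ
  linarith

lemma sq_pos (x : ℝ) : 0 < sq x := by
  have hπ := Real.pi_pos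
  have h := Real.neg_pi_div_two_lt_arctan x
  have h2 : -(Real.pi/2) / Real.pi < Real.arctan x / Real.pi :=
    div_lt_div_of_pos_right h hπ
  have h3 : -(Real.pi/2) / Real.pi = -(1/2 : ℝ) := by field_simp
  unfold sq
  rw [h3] at h2
  linarith

lemma sq_lt_one (x : ℝ) : sq x < 1 := by
  have hπ := Real.pi_pos
  have h := Real.arctan_lt_pi_div_two x
  have h2 : Real.arctan x / Real.pi < (Real.pi/2) / Real.pi :=
    div_lt_div_of_pos_right h hπ
  have h3 : (Real.pi/2) / Real.pi = (1/2 : ℝ) := by field_simp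
  unfold sq
  rw [h3] at h2
  linarith





abbrev Word := List (Fin 2 × Bool)

/-- `Chn S L x y` : starting from `x` and applying the letters of `L` (rightmost first),
using the partial maps recorded in `S`, one reaches `y`. -/
def Chn (S : Fin 2 → List (ℝ × ℝ)) : Word → ℝ → ℝ → Prop
  | [], x, y => y = x
  | s :: L, x, y => ∃ z, Chn S L x z ∧ (if s.2 = true then (z, y) ∈ S s.1 else (y, z) ∈ S s.1)

def upd (S : Fin 2 → List (ℝ × ℝ)) (i : Fin 2) (p : ℝ × ℝ) : Fin 2 → List (ℝ × ℝ) :=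
  Function.update S i (p :: S i)

lemma upd_self (S : Fin 2 → List (ℝ × ℝ)) (i : Fin 2) (p : ℝ × ℝ) :
    upd S i p i = p :: S i := Function.update_self _ _ _

lemma upd_ne (S : Fin 2 → List (ℝ × ℝ)) {i j : Fin 2} (p : ℝ × ℝ) (h : j ≠ i) :
    upd S i p j = S j := Function.update_of_ne h _ _

lemma subset_upd (S : Fin 2 → List (ℝ × ℝ)) (i : Fin 2) (p : ℝ × ℝ) :
    ∀ j, S j ⊆ upd S i p j := by
  intro j
  by_cases h : j = i
  · subst h; rw [upd_self]; exact subset_cons_self _ _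
  · rw [upd_ne _ _ h]
    exact fun _ h => h

lemma mem_upd_self (S : Fin 2 → List (ℝ × ℝ)) (i : Fin 2) (p : ℝ × ℝ) :
    p ∈ upd S i p i := by rw [upd_self]; exact mem_cons_self

lemma mem_upd_iff {S : Fin 2 → List (ℝ × ℝ)} {i j : Fin 2} {p q : ℝ × ℝ}
    (h : q ∈ upd S i p j) : (j = i ∧ q = p) ∨ q ∈ S j := by
  by_cases hj : j = i
  · subst hj; rw [upd_self] at h
    rcases mem_cons.mp h with rfl | h'
    · exact Or.inl ⟨rfl, rfl⟩
    · exact Or.inr h'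
  · rw [upd_ne _ _ hj] at h; exact Or.inr h

lemma Chn_mono {S S' : Fin 2 → List (ℝ × ℝ)} (hsub : ∀ j, S j ⊆ S' j) :
    ∀ (L : Word) (x y : ℝ), Chn S L x y → Chn S' L x y := by
  intro L
  induction L with
  | nil => intro x y h; exact h
  | cons s L ih =>
    intro x y h
    obtain ⟨z, hz, hm⟩ := h
    refine ⟨z, ih x z hz, ?_⟩
    by_cases hb : s.2 = true
    · rw [if_pos hb] at hm ⊢; exact hsub s.1 hm
    · rw [if_neg hb] at hm ⊢; exact hsub s.1 hm

/-- Builder for all-positive words: generator `d` jumps up by 2, the other squashes into (0,1). -/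
def pbuild (d : Fin 2) : Word → (Fin 2 → List (ℝ × ℝ)) × ℝ
  | [] => (fun _ => [], 0)
  | s :: L =>
    let r := pbuild d L
    if s.1 = d then (upd r.1 d (r.2, r.2 + 2), r.2 + 2)
    else (upd r.1 s.1 (r.2, sq r.2), sq r.2)

lemma pbuild_spec (d : Fin 2) : ∀ L : Word, (∀ s ∈ L, s.2 = true) →
    0 ≤ (pbuild d L).2 ∧
    (∀ p ∈ (pbuild d L).1 d, 0 ≤ p.1 ∧ p.2 = p.1 + 2) ∧
    (∀ j, j ≠ d → ∀ p ∈ (pbuild d L).1 j, 0 ≤ p.1 ∧ p.2 = sq p.1) ∧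
    Chn (pbuild d L).1 L 0 (pbuild d L).2 := by
  intro L
  induction L with
  | nil =>
    intro _
    refine ⟨le_refl _, by simp [pbuild], by simp [pbuild], ?_⟩
    show (0 : ℝ) = 0
    rfl
  | cons s L ih =>
    intro hall
    have hs2 : s.2 = true := hall s (mem_cons_self)
    have hall' : ∀ t ∈ L, t.2 = true := fun t ht => hall t (mem_cons_of_mem _ ht)
    obtain ⟨h0, hd, hj, hchn⟩ := ih hall'
    by_cases hsd : s.1 = d
    · have heq : pbuild d (s :: L) =
        (upd (pbuild d L).1 d ((pbuild d L).2, (pbuild d L).2 + 2), (pbuild d L).2 + 2) := by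
        rw [pbuild, if_pos hsd]
      rw [heq]; dsimp only
      refine ⟨by linarith, ?_, ?_, ?_⟩
      · intro p hp
        rcases mem_upd_iff hp with ⟨_, rfl⟩ | hp'
        · exact ⟨h0, rfl⟩
        · exact hd p hp'
      · intro j hjd p hp
        rw [upd_ne _ _ hjd] at hp
        exact hj j hjd p hp
      · refine ⟨(pbuild d L).2, Chn_mono (subset_upd _ _ _) _ _ _ hchn, ?_⟩
        rw [if_pos hs2, hsd]
        exact mem_upd_self _ _ _
    · have heq : pbuild d (s :: L) =
        (upd (pbuild d L).1 s.1 ((pbuild d L).2, sq (pbuild d L).2), sq (pbuild d L).2) := by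
        rw [pbuild, if_neg hsd]
      rw [heq]; dsimp only
      refine ⟨le_of_lt (sq_pos _), ?_, ?_, ?_⟩
      · intro p hp
        rw [upd_ne _ _ (fun h => hsd h.symm)] at hp
        exact hd p hp
      · intro j hjd p hp
        rcases mem_upd_iff hp with ⟨rfl, rfl⟩ | hp'
        · exact ⟨h0, rfl⟩
        · exact hj j hjd p hp'
      · refine ⟨(pbuild d L).2, Chn_mono (subset_upd _ _ _) _ _ _ hchn, ?_⟩
        rw [if_pos hs2]
        exact mem_upd_self _ _ _

/-- Cancellation of adjacent letters is excluded in reduced words. -/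
lemma chain_head_not {i : Fin 2} {b : Bool} {L' : Word}
    (hred : List.Chain' (fun p q => ¬(p.1 = q.1 ∧ p.2 = !q.2)) (((i, b) : Fin 2 × Bool) :: L'))
    (h : L'.head? = some (i, !b)) : False := by
  cases L' with
  | nil => simp at h
  | cons s'' T =>
    simp only [head?_cons, Option.some_inj] at h
    subst h
    exact (List.isChain_cons_cons.mp hred).1 ⟨rfl, by simp⟩

/-- The main combinatorial lemma: every reduced word containing a negative letter admits a
realization by finite monotone graphs taking `0` to a negative value (the strict minimum). -/
lemma main_lemma : ∀ L : Word,
    List.Chain' (fun p q => ¬(p.1 = q.1 ∧ p.2 = !q.2)) L →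
    (∃ s ∈ L, s.2 = false) →
    ∃ (S : Fin 2 → List (ℝ × ℝ)) (y : ℝ),
      (∀ i, MG (S i)) ∧ (∀ i, BP (S i)) ∧ Chn S L 0 y ∧ y < 0 ∧
      (∀ i, ∀ p ∈ S i, y ≤ p.1 ∧ y ≤ p.2) ∧
      (∀ i, ∀ p ∈ S i,
        (p.1 = y → L.head? = some (i, false)) ∧ (p.2 = y → L.head? = some (i, true))) := by
  intro L
  induction L with
  | nil => intro _ hneg; simp at hneg
  | cons s L' ih =>
    intro hred hneg
    obtain ⟨i, b⟩ := s
    have hredtail : List.Chain' (fun p q => ¬(p.1 = q.1 ∧ p.2 = !q.2)) L' := hred.tail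
    by_cases hbt : b = true
    · -- positive head letter; tail must contain a negative letter
      subst hbt
      have hneg' : ∃ t ∈ L', t.2 = false := by
        obtain ⟨t, ht, ht2⟩ := hneg
        rcases mem_cons.mp ht with rfl | ht'
        · simp at ht2
        · exact ⟨t, ht', ht2⟩
      obtain ⟨S', y', hMG', hBP', hChn', hy', hP5', hPocc'⟩ := ih hredtail hneg'
      refine ⟨upd S' i (y', y' - 1), y' - 1, ?_, ?_, ?_, by linarith, ?_, ?_⟩
      · -- MG
        intro j
        by_cases hj : j = i
        · subst hj
          rw [upd_self]
          intro p hp q hq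
          rcases mem_cons.mp hp with rfl | hp' <;> rcases mem_cons.mp hq with rfl | hq'
          · simp
          · have h5 := hP5' j q hq'
            have hne : q.1 ≠ y' := by
              intro h
              exact chain_head_not hred (by rw [(hPocc' j q hq').1 h]; rfl)
            show y' < q.1 ↔ y' - 1 < q.2
            constructor
            · intro _; linarith [h5.2]
            · intro _; exact lt_of_le_of_ne h5.1 (Ne.symm hne)
          · have h5 := hP5' j p hp'
            show p.1 < y' ↔ p.2 < y' - 1
            constructor
            · intro h; linarith [h5.1]
            · intro h; linarith [h5.2]
          · exact hMG' j p hp' q hq'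
        · rw [upd_ne _ _ hj]; exact hMG' j
      · -- BP
        intro j p hp
        rcases mem_upd_iff hp with ⟨_, rfl⟩ | hp'
        · intro h; linarith
        · exact hBP' j p hp'
      · -- Chn
        refine ⟨y', Chn_mono (subset_upd _ _ _) _ _ _ hChn', ?_⟩
        rw [if_pos rfl]
        exact mem_upd_self _ _ _
      · -- min
        intro j p hp
        rcases mem_upd_iff hp with ⟨_, rfl⟩ | hp'
        · exact ⟨by linarith, le_refl _⟩
        · have h5 := hP5' j p hp'
          exact ⟨by linarith [h5.1], by linarith [h5.2]⟩
      · -- Pocc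
        intro j p hp
        rcases mem_upd_iff hp with ⟨rfl, rfl⟩ | hp'
        · constructor
          · intro h; exfalso; have h' : y' = y' - 1 := h; linarith
          · intro _; rfl
        · have h5 := hP5' j p hp'
          constructor
          · intro h; exfalso; have := h5.1; rw [h] at this; linarith
          · intro h; exfalso; have := h5.2; rw [h] at this; linarith
    · -- negative head letter
      have hbf : b = false := by
        cases b
        · rfl
        · exact absurd rfl hbt
      subst hbf
      by_cases hpos : ∀ t ∈ L', t.2 = true
      · -- tail is an all-positive word
        cases L' with
        | nil =>
          -- base case : a single negative letter
          refine ⟨upd (fun _ => []) i (-1, 0), -1, ?_, ?_, ?_, by norm_num, ?_, ?_⟩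
          · intro j
            by_cases hj : j = i
            · subst hj; rw [upd_self]
              intro p hp q hq
              simp only [mem_singleton] at hp hq
              subst hp; subst hq; simp
            · rw [upd_ne _ _ hj]; intro p hp; simp at hp
          · intro j p hp
            rcases mem_upd_iff hp with ⟨_, rfl⟩ | hp'
            · intro h; norm_num at h
            · simp at hp'
          · refine ⟨0, rfl, ?_⟩
            rw [if_neg (by simp)]
            exact mem_upd_self _ _ _
          · intro j p hp
            rcases mem_upd_iff hp with ⟨_, rfl⟩ | hp'
            · norm_num
            · simp at hp'
          · intro j p hp
            rcases mem_upd_iff hp with ⟨rfl, rfl⟩ | hp'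
            · exact ⟨fun _ => rfl, fun h => by norm_num at h⟩
            · simp at hp'
        | cons s' T =>
          have hs'2 : s'.2 = true := hpos s' (mem_cons_self)
          have hji : s'.1 ≠ i := by
            intro h
            apply chain_head_not hred
            rw [head?_cons]
            exact congrArg some (Prod.ext h hs'2)
          obtain ⟨h0', hdspec, hjspec, hchn'⟩ := pbuild_spec i (s' :: T) hpos
          set S' := (pbuild i (s' :: T)).1 with hS'
          set y' := (pbuild i (s' :: T)).2 with hy'
          have hy'val : y' = sq (pbuild i T).2 := by
            rw [hy', pbuild, if_neg hji]
          have h0y' : 0 < y' := hy'val ▸ sq_pos _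
          have h1y' : y' < 1 := hy'val ▸ sq_lt_one _
          refine ⟨upd S' i (-1, y'), -1, ?_, ?_, ?_, by norm_num, ?_, ?_⟩
          · -- MG
            intro j
            by_cases hj : j = i
            · subst hj
              rw [upd_self]
              intro p hp q hq
              rcases mem_cons.mp hp with rfl | hp' <;> rcases mem_cons.mp hq with rfl | hq'
              · simp
              · obtain ⟨hq1, hq2⟩ := hdspec q hq'
                show -1 < q.1 ↔ y' < q.2
                rw [hq2]
                constructor
                · intro _; linarith
                · intro _; linarith
              · obtain ⟨hp1, hp2⟩ := hdspec p hp'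
                show p.1 < -1 ↔ p.2 < y'
                rw [hp2]
                constructor
                · intro h; linarith
                · intro h; linarith
              · obtain ⟨hp1, hp2⟩ := hdspec p hp'
                obtain ⟨hq1, hq2⟩ := hdspec q hq'
                rw [hp2, hq2]
                constructor
                · intro h; linarith
                · intro h; linarith
            · rw [upd_ne _ _ hj]
              intro p hp q hq
              obtain ⟨hp1, hp2⟩ := hjspec j hj p hp
              obtain ⟨hq1, hq2⟩ := hjspec j hj q hq
              rw [hp2, hq2]
              exact (sq_strictMono.lt_iff_lt).symm
          · -- BP
            intro j p hp
            rcases mem_upd_iff hp with ⟨_, rfl⟩ | hp'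
            · intro h; norm_num at h
            · by_cases hj : j = i
              · subst hj
                obtain ⟨hp1, hp2⟩ := hdspec p hp'
                intro _; rw [hp2]; linarith
              · obtain ⟨hp1, hp2⟩ := hjspec j hj p hp'
                intro _; rw [hp2]; exact sq_pos _
          · -- Chn
            refine ⟨y', Chn_mono (subset_upd _ _ _) _ _ _ hchn', ?_⟩
            rw [if_neg (by simp)]
            exact mem_upd_self _ _ _
          · -- min
            intro j p hp
            rcases mem_upd_iff hp with ⟨_, rfl⟩ | hp'
            · constructor
              · norm_num
              · linarith
            · by_cases hj : j = i
              · subst hj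
                obtain ⟨hp1, hp2⟩ := hdspec p hp'
                exact ⟨by linarith, by rw [hp2]; linarith⟩
              · obtain ⟨hp1, hp2⟩ := hjspec j hj p hp'
                have := sq_pos p.1
                exact ⟨by linarith, by rw [hp2]; linarith⟩
          · -- Pocc
            intro j p hp
            rcases mem_upd_iff hp with ⟨rfl, rfl⟩ | hp'
            · exact ⟨fun _ => rfl, fun h => by exfalso; simp at h; linarith⟩
            · by_cases hj : j = i
              · subst hj
                obtain ⟨hp1, hp2⟩ := hdspec p hp'
                constructor
                · intro h; exfalso; rw [h] at hp1; linarith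
                · intro h; exfalso; rw [hp2] at h; linarith
              · obtain ⟨hp1, hp2⟩ := hjspec j hj p hp'
                have := sq_pos p.1
                constructor
                · intro h; exfalso; rw [h] at hp1; linarith
                · intro h; exfalso; rw [hp2] at h; linarith
      · -- tail contains a negative letter
        have hneg' : ∃ t ∈ L', t.2 = false := by
          push_neg at hpos
          obtain ⟨t, ht, ht2⟩ := hpos
          exact ⟨t, ht, by cases h : t.2; rfl; exact absurd h ht2⟩
        obtain ⟨S', y', hMG', hBP', hChn', hy', hP5', hPocc'⟩ := ih hredtail hneg'
        refine ⟨upd S' i (y' - 1, y'), y' - 1, ?_, ?_, ?_, by linarith, ?_, ?_⟩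
        · -- MG
          intro j
          by_cases hj : j = i
          · subst hj
            rw [upd_self]
            intro p hp q hq
            rcases mem_cons.mp hp with rfl | hp' <;> rcases mem_cons.mp hq with rfl | hq'
            · simp
            · have h5 := hP5' j q hq'
              have hne : q.2 ≠ y' := by
                intro h
                exact chain_head_not hred (by rw [(hPocc' j q hq').2 h]; rfl)
              show y' - 1 < q.1 ↔ y' < q.2
              constructor
              · intro _; exact lt_of_le_of_ne h5.2 (Ne.symm hne)
              · intro _; linarith [h5.1]
            · have h5 := hP5' j p hp'
              show p.1 < y' - 1 ↔ p.2 < y'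
              constructor
              · intro h; linarith [h5.1]
              · intro h; linarith [h5.2]
            · exact hMG' j p hp' q hq'
          · rw [upd_ne _ _ hj]; exact hMG' j
        · -- BP
          intro j p hp
          rcases mem_upd_iff hp with ⟨_, rfl⟩ | hp'
          · intro h; exfalso; have h' : (0:ℝ) ≤ y' - 1 := h; linarith
          · exact hBP' j p hp'
        · -- Chn
          refine ⟨y', Chn_mono (subset_upd _ _ _) _ _ _ hChn', ?_⟩
          rw [if_neg (by simp)]
          exact mem_upd_self _ _ _
        · -- min
          intro j p hp
          rcases mem_upd_iff hp with ⟨_, rfl⟩ | hp'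
          · exact ⟨le_refl _, by linarith⟩
          · have h5 := hP5' j p hp'
            exact ⟨by linarith [h5.1], by linarith [h5.2]⟩
        · -- Pocc
          intro j p hp
          rcases mem_upd_iff hp with ⟨rfl, rfl⟩ | hp'
          · constructor
            · intro _; rfl
            · intro h; exfalso; have h' : y' = y' - 1 := h; linarith
          · have h5 := hP5' j p hp'
            constructor
            · intro h; exfalso; have := h5.1; rw [h] at this; linarith
            · intro h; exfalso; have := h5.2; rw [h] at this; linarith



/-- Words fixed by `FreeGroup.reduce` have no adjacent cancelling letters. -/
lemma reduced_chain' : ∀ L : Word, FreeGroup.reduce L = L →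
    List.Chain' (fun p q => ¬(p.1 = q.1 ∧ p.2 = !q.2)) L := by
  intro L
  induction L with
  | nil => intro _; exact List.isChain_nil
  | cons x L ih =>
    intro h
    rw [FreeGroup.reduce.cons] at h
    cases hL : FreeGroup.reduce L with
    | nil =>
      rw [hL] at h
      have hnil : L = [] := by
        have := h
        simp only [List.cons.injEq] at this
        exact this.2.symm
      subst hnil
      exact List.isChain_singleton _
    | cons hd tl =>
      rw [hL] at h
      dsimp only at h
      by_cases hc : x.1 = hd.1 ∧ x.2 = !hd.2
      · rw [if_pos hc] at h
        exfalso
        have hredL : FreeGroup.Red L (FreeGroup.reduce L) := FreeGroup.reduce.red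
        rw [hL] at hredL
        have hle := FreeGroup.Red.length_le hredL
        rw [h] at hle
        simp at hle
      · rw [if_neg hc] at h
        have hL' : L = hd :: tl := by
          simp only [List.cons.injEq] at h
          exact h.2.symm
        have hLred : FreeGroup.reduce L = L := by rw [hL, hL']
        have hchain := ih hLred
        rw [hL'] at hchain ⊢
        exact List.isChain_cons_cons.mpr ⟨hc, hchain⟩

/-- Evaluating the lifted word along a chain. -/
lemma eval_chain (F : Fin 2 → ℝ ≃o ℝ) (S : Fin 2 → List (ℝ × ℝ))
    (hF : ∀ i, ∀ p ∈ S i, F i p.1 = p.2) :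
    ∀ (L : Word) (x y : ℝ), Chn S L x y →
      (FreeGroup.lift F (FreeGroup.mk L) : ℝ ≃o ℝ) x = y := by
  intro L
  induction L with
  | nil =>
    intro x y h
    have h' : y = x := h
    subst h'
    rw [← FreeGroup.one_eq_mk, map_one]
    rfl
  | cons s L ih =>
    intro x y h
    obtain ⟨z, hz, hm⟩ := h
    have hmk : FreeGroup.mk (s :: L) = FreeGroup.mk [s] * FreeGroup.mk L := by
      rw [FreeGroup.mul_mk]; rfl
    rw [hmk, map_mul]
    have happ : (FreeGroup.lift F (FreeGroup.mk [s]) * FreeGroup.lift F (FreeGroup.mk L)) x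
        = (FreeGroup.lift F (FreeGroup.mk [s])) ((FreeGroup.lift F (FreeGroup.mk L)) x) := rfl
    rw [happ, ih x z hz]
    obtain ⟨i, b⟩ := s
    cases b
    · rw [if_neg (by simp)] at hm
      have hofinv : FreeGroup.mk [((i : Fin 2), false)] = (FreeGroup.of i)⁻¹ := by
        rw [show (FreeGroup.of i) = FreeGroup.mk [(i, true)] from rfl, FreeGroup.inv_mk]
        rfl
      rw [hofinv, map_inv, FreeGroup.lift_apply_of]
      have hFz : F i y = z := hF i (y, z) hm
      rw [← hFz]
      exact RelIso.inv_apply_self _ _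
    · rw [if_pos rfl] at hm
      rw [show FreeGroup.mk [((i : Fin 2), true)] = FreeGroup.of i from rfl, FreeGroup.lift_apply_of]
      exact hF i (z, y) hm



end

end ViolatingWord

/-- A reduced word `w` in two letters carries both positive and negative exponents. -/
def HasBothSigns (w : FreeGroup (Fin 2)) : Prop :=
  (∃ x, (x, true) ∈ w.toWord) ∧ (∃ x, (x, false) ∈ w.toWord)

/-- For every nonempty reduced word `W(a,b)` in two letters carrying both positive and
negative exponents, there are orientation-preserving homeomorphisms `f, g` of the real
line (formalized as order-isomorphisms of `ℝ`) with `f(0) > 0`, `g(0) > 0`, and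
`W(f,g)(0) < 0`. -/
theorem exists_homeos_violating_word
    (w : FreeGroup (Fin 2)) (hw : w ≠ 1) (hsigns : HasBothSigns w) :
    ∃ f g : ℝ ≃o ℝ, 0 < f 0 ∧ 0 < g 0 ∧ ((FreeGroup.lift ![f, g]) w) 0 < 0 := by
  classical
  set L := w.toWord with hLdef
  have hred : FreeGroup.reduce L = L := FreeGroup.reduce_toWord w
  have hchain := ViolatingWord.reduced_chain' L hred
  have hneg : ∃ s ∈ L, s.2 = false := by
    obtain ⟨x, hx⟩ := hsigns.2
    exact ⟨(x, false), hx, rfl⟩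
  obtain ⟨S, y, hMG, hBP, hChn, hy, _, _⟩ := ViolatingWord.main_lemma L hchain hneg
  choose F hFspec using fun i => ViolatingWord.exist_F (S i) (hMG i) (hBP i)
  have heval : (FreeGroup.lift F (FreeGroup.mk L) : ℝ ≃o ℝ) 0 = y :=
    ViolatingWord.eval_chain F S (fun i => (hFspec i).1) L 0 y hChn
  have hmkL : FreeGroup.mk L = w := FreeGroup.mk_toWord
  refine ⟨F 0, F 1, (hFspec 0).2, (hFspec 1).2, ?_⟩
  have hFF : ![F 0, F 1] = F := by
    funext i
    fin_cases i <;> rfl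
  rw [hFF, ← hmkL, heval]
  exact hy
end

section
/- Let W = W(a,b) be a nonempty reduced word in the free group F₂ = ⟨a,b⟩ on two generators whose reduced form carries both positive and negative exponents. Then F₂ admits a left-order ≼ such that a ≻ 1, b ≻ 1, and W(a,b) ≺ 1; in particular, F₂ admits a left-order that is not a W-order. -/
/-- A subset of a group (given by its indicator function `P : Γ → Bool`) is the positive
cone of a left-order if it is closed under multiplication, does not contain `1`, and
every `g ≠ 1` lies in exactly one of `P`, `P⁻¹`. -/
def IsLeftOrderCone {Γ : Type*} [Group Γ] (P : Γ → Bool) : Prop :=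
  (∀ a b : Γ, P a = true → P b = true → P (a * b) = true) ∧
  P 1 = false ∧
  (∀ g : Γ, g ≠ 1 → (P g = true ↔ P g⁻¹ = false))

/-- A left-order with positive cone `P` is a `W`-order if `W(f,g)` is positive whenever
`f` and `g` are. -/
def IsWOrder {Γ : Type*} [Group Γ] (w : FreeGroup (Fin 2)) (P : Γ → Bool) : Prop :=
  ∀ f g : Γ, P f = true → P g = true → P ((FreeGroup.lift ![f, g]) w) = true

namespace LOrd

def Ser : Type := List (Fin 2) → ℤ

instance : AddCommGroup Ser := inferInstanceAs (AddCommGroup (List (Fin 2) → ℤ))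

def oneSer : Ser := fun w => if w = [] then 1 else 0

instance : One Ser := ⟨oneSer⟩

lemma one_apply (w : List (Fin 2)) : (1 : Ser) w = if w = [] then 1 else 0 := rfl

lemma add_apply (f g : Ser) (w : List (Fin 2)) : (f + g) w = f w + g w := rfl
lemma neg_apply (f : Ser) (w : List (Fin 2)) : (-f) w = -(f w) := rfl
lemma sub_apply (f g : Ser) (w : List (Fin 2)) : (f - g) w = f w - g w := rfl
lemma zero_apply (w : List (Fin 2)) : (0 : Ser) w = 0 := rfl

def mulSer (f g : Ser) : Ser := fun w =>
  ∑ i ∈ Finset.range (w.length + 1), f (w.take i) * g (w.drop i)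

instance : Mul Ser := ⟨mulSer⟩

lemma mul_apply (f g : Ser) (w : List (Fin 2)) :
    (f * g) w = ∑ i ∈ Finset.range (w.length + 1), f (w.take i) * g (w.drop i) := rfl

lemma mul_nil (f g : Ser) : (f * g) [] = f [] * g [] := by
  simp [mul_apply]

/-- shift a series by a letter on the left -/
def shf (x : Fin 2) (f : Ser) : Ser := fun u => f (x :: u)

lemma shf_apply (x : Fin 2) (f : Ser) (u : List (Fin 2)) : shf x f u = f (x :: u) := rfl

lemma mul_cons (f g : Ser) (x : Fin 2) (w : List (Fin 2)) :
    (f * g) (x :: w) = f [] * g (x :: w) + (shf x f * g) w := by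
  rw [mul_apply, mul_apply]
  have h1 : (x :: w).length + 1 = w.length + 1 + 1 := rfl
  rw [h1, Finset.sum_range_succ']
  simp only [List.take_succ_cons, List.drop_succ_cons, List.take_zero, List.drop_zero]
  rw [add_comm]
  rfl

lemma add_mul' (f f' g : Ser) : (f + f') * g = f * g + f' * g := by
  funext w
  simp [mul_apply, add_apply, add_mul, Finset.sum_add_distrib]

lemma mul_add' (f g g' : Ser) : f * (g + g') = f * g + f * g' := by
  funext w
  simp [mul_apply, add_apply, mul_add, Finset.sum_add_distrib]

def cmul (c : ℤ) (f : Ser) : Ser := fun u => c * f u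

lemma cmul_apply (c : ℤ) (f : Ser) (u : List (Fin 2)) : cmul c f u = c * f u := rfl

lemma cmul_mul' (c : ℤ) (f g : Ser) : (cmul c f) * g = cmul c (f * g) := by
  funext w
  simp [mul_apply, cmul_apply, Finset.mul_sum, mul_assoc]

lemma zero_mul' (g : Ser) : (0 : Ser) * g = 0 := by
  funext w
  simp [mul_apply, zero_apply]

lemma mul_assoc' (f g h : Ser) : f * g * h = f * (g * h) := by
  funext w
  induction w generalizing f with
  | nil => simp [mul_nil, mul_assoc]
  | cons x w ih =>
    rw [mul_cons (f * g) h, mul_cons f (g * h)]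
    have e1 : shf x (f * g) = cmul (f []) (shf x g) + (shf x f * g) := by
      funext u
      rw [shf_apply, mul_cons, add_apply, cmul_apply, shf_apply]
    rw [e1, add_mul', add_apply, cmul_mul', cmul_apply, ih, mul_nil, mul_cons g h x w]
    ring

lemma one_mul' (f : Ser) : (1 : Ser) * f = f := by
  funext w
  cases w with
  | nil => simp [mul_nil, one_apply]
  | cons x w =>
    rw [mul_cons]
    have h0 : shf x (1 : Ser) = (0 : Ser) := by
      funext u; simp [shf_apply, one_apply, zero_apply]
    rw [h0, zero_mul']
    simp [one_apply, zero_apply]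

lemma mul_one' (f : Ser) : f * (1 : Ser) = f := by
  funext w
  induction w generalizing f with
  | nil => simp [mul_nil, one_apply]
  | cons x w ih =>
    rw [mul_cons, ih]
    simp [one_apply, shf_apply]

instance : Monoid Ser where
  mul_assoc := mul_assoc'
  one_mul := one_mul'
  mul_one := mul_one'


-- ## Units 1 + X_j

def Xs (j : Fin 2) : Ser := fun w => if w = [j] then 1 else 0

def vS (j : Fin 2) : Ser := fun w => if w.all (· = j) then (-1)^w.length else 0

lemma uv (j : Fin 2) : ((1 : Ser) + Xs j) * vS j = 1 := by
  funext w
  induction w with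
  | nil => simp [mul_nil, add_apply, one_apply, Xs, vS]
  | cons x w _ =>
    rw [mul_cons]
    have h1 : ((1 : Ser) + Xs j) [] = 1 := by simp [add_apply, one_apply, Xs]
    have h2 : shf x ((1 : Ser) + Xs j) = if x = j then (1 : Ser) else 0 := by
      funext u
      by_cases hx : x = j
      · subst hx
        simp only [shf_apply, add_apply, one_apply, Xs, if_neg (List.cons_ne_nil x u), if_pos rfl]
        by_cases hu : u = [] <;> simp [hu, one_apply]
      · rw [if_neg hx]
        simp only [shf_apply, add_apply, one_apply, Xs, if_neg (List.cons_ne_nil x u),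
          zero_apply, zero_add]
        rw [if_neg]
        intro h
        exact hx (List.cons_eq_cons.mp h).1
    rw [h1, h2, one_mul]
    by_cases hx : x = j
    · subst hx
      rw [if_pos rfl, one_mul']
      have hv : vS x (x :: w) = -(vS x w) := by
        by_cases hw : w.all (· = x)
        · simp [vS, hw, pow_succ]
        · simp [vS, hw]
      rw [hv]
      simp [one_apply]
    · rw [if_neg hx, zero_mul']
      have hv : vS j (x :: w) = 0 := by
        rw [vS, if_neg]
        simp only [List.all_cons, Bool.and_eq_true, decide_eq_true_eq]
        rintro ⟨h, -⟩
        exact hx h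
      rw [hv]
      simp [one_apply, zero_apply]

lemma vu (j : Fin 2) : vS j * ((1 : Ser) + Xs j) = 1 := by
  funext w
  induction w with
  | nil => simp [mul_nil, add_apply, one_apply, Xs, vS]
  | cons x w ih =>
    rw [mul_cons]
    have h1 : vS j [] = 1 := by simp [vS]
    have h2 : shf x (vS j) = if x = j then cmul (-1) (vS j) else 0 := by
      funext u
      by_cases hx : x = j
      · subst hx
        rw [if_pos rfl, shf_apply, cmul_apply]
        by_cases hu : u.all (· = x)
        · simp [vS, hu, pow_succ]
        · simp [vS, hu]
      · rw [if_neg hx, shf_apply, vS, if_neg, zero_apply]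
        simp only [List.all_cons, Bool.and_eq_true, decide_eq_true_eq]
        rintro ⟨h, -⟩
        exact hx h
    rw [h1, h2, one_mul]
    by_cases hx : x = j
    · subst hx
      rw [if_pos rfl, cmul_mul', cmul_apply, ih]
      have hu : ((1:Ser) + Xs x) (x :: w) = if w = [] then 1 else 0 := by
        by_cases hw : w = [] <;> simp [hw, add_apply, one_apply, Xs]
      rw [hu]
      by_cases hw : w = [] <;> simp [hw, one_apply]
    · rw [if_neg hx, zero_mul']
      have hu : ((1:Ser) + Xs j) (x :: w) = 0 := by
        simp only [add_apply, one_apply, Xs, if_neg (List.cons_ne_nil x w)]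
        rw [if_neg, add_zero]
        intro h
        exact hx (List.cons_eq_cons.mp h).1
      rw [hu]
      simp [one_apply, zero_apply]

/-- The Magnus units `1 + X_j`. -/
def uS (j : Fin 2) : Serˣ := ⟨(1 : Ser) + Xs j, vS j, uv j, vu j⟩

/-- The Magnus homomorphism. -/
noncomputable def mu : FreeGroup (Fin 2) →* Serˣ := FreeGroup.lift uS


-- ## constant coefficient

/-- evaluation at the empty word, as a monoid hom. -/
def evS : Ser →* ℤ where
  toFun f := f []
  map_one' := by simp [one_apply]
  map_mul' f g := mul_nil f g

lemma coeff_nil (u : FreeGroup (Fin 2)) : (mu u).val [] = 1 := by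
  have h : (Units.map evS).comp mu = 1 := by
    apply FreeGroup.ext_hom
    intro a
    apply Units.ext
    show evS ((mu (FreeGroup.of a)).val) = 1
    rw [mu, FreeGroup.lift_apply_of]
    show ((1 : Ser) + Xs a) [] = 1
    simp [add_apply, one_apply, Xs]
  have h2 : (Units.map evS) (mu u) = 1 := by
    have := congrArg (fun F : FreeGroup (Fin 2) →* ℤˣ => F u) h
    simpa using this
  have h3 : ((Units.map evS) (mu u)).val = (1 : ℤ) := by rw [h2]; rfl
  rwa [Units.coe_map] at h3

-- ## support on powers of one letter

def jpow (j : Fin 2) (f : Ser) : Prop := ∀ w, f w ≠ 0 → ∀ x ∈ w, x = j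

lemma jpow_mul {j : Fin 2} {f g : Ser} (hf : jpow j f) (hg : jpow j g) : jpow j (f * g) := by
  intro w hw x hx
  rw [mul_apply] at hw
  obtain ⟨i, -, hi⟩ := Finset.exists_ne_zero_of_sum_ne_zero hw
  rcases mul_ne_zero_iff.mp hi with ⟨h1, h2⟩
  rcases (List.mem_append.mp (by rw [List.take_append_drop]; exact hx : x ∈ w.take i ++ w.drop i)) with h | h
  · exact hf _ h1 x h
  · exact hg _ h2 x h

lemma jpow_unit (j : Fin 2) : jpow j ((uS j).val) := by
  intro w hw x hx
  simp only [uS, add_apply, one_apply, Xs] at hw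
  by_cases h1 : w = []
  · subst h1; simp at hx
  · by_cases h2 : w = [j]
    · subst h2; simpa using hx
    · simp [h1, h2] at hw

lemma jpow_unit_inv (j : Fin 2) : jpow j (((uS j)⁻¹).val) := by
  intro w hw x hx
  simp only [uS, Units.inv_mk] at hw
  change vS j w ≠ 0 at hw
  rw [vS] at hw
  by_cases hall : w.all (· = j)
  · have := List.all_eq_true.mp hall x hx
    simpa using this
  · simp [hall] at hw

lemma coeff_single {f g : Ser} {j : Fin 2} (hf : jpow j f) :
    (f * g) [j] = f [] * g [j] + f [j] * g [] := by
  rw [mul_apply]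
  show ∑ i ∈ Finset.range 2, _ = _
  rw [Finset.sum_range_succ, Finset.sum_range_one]
  simp

lemma jpow_zpow (j : Fin 2) (e : ℤ) :
    jpow j (((uS j)^e).val) ∧ ((uS j)^e).val [j] = e := by
  have hnat : ∀ n : ℕ, jpow j (((uS j)^n).val) ∧ ((uS j)^n).val [j] = n := by
    intro n
    induction n with
    | zero =>
      constructor
      · intro w hw x hx
        simp only [pow_zero, Units.val_one, one_apply] at hw
        by_cases h : w = []
        · subst h; simp at hx
        · simp [h] at hw
      · simp [one_apply]
    | succ n ih =>
      have hval : ((uS j)^(n+1)).val = ((uS j)^n).val * (uS j).val := by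
        rw [pow_succ, Units.val_mul]
      constructor
      · rw [hval]; exact jpow_mul ih.1 (jpow_unit j)
      · rw [hval, coeff_single ih.1, ih.2]
        have h1 : (uS j).val [j] = 1 := by simp [uS, add_apply, one_apply, Xs]
        have h2 : (uS j).val [] = 1 := by simp [uS, add_apply, one_apply, Xs]
        have h3 : ((uS j)^n).val [] = 1 := by
          have : (uS j)^n = mu ((FreeGroup.of j)^n) := by
            rw [map_pow, mu, FreeGroup.lift_apply_of]
          rw [this, coeff_nil]
        rw [h1, h2, h3]
        push_cast
        ring
  have hnatinv : ∀ n : ℕ, jpow j ((((uS j)⁻¹)^n).val) ∧ (((uS j)⁻¹)^n).val [j] = -n := by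
    intro n
    induction n with
    | zero =>
      constructor
      · intro w hw x hx
        simp only [pow_zero, Units.val_one, one_apply] at hw
        by_cases h : w = []
        · subst h; simp at hx
        · simp [h] at hw
      · simp [one_apply]
    | succ n ih =>
      have hval : (((uS j)⁻¹)^(n+1)).val = (((uS j)⁻¹)^n).val * ((uS j)⁻¹).val := by
        rw [pow_succ, Units.val_mul]
      constructor
      · rw [hval]; exact jpow_mul ih.1 (jpow_unit_inv j)
      · rw [hval, coeff_single ih.1, ih.2]
        have h1 : ((uS j)⁻¹).val [j] = -1 := by
          simp only [uS, Units.inv_mk]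
          show vS j [j] = -1
          simp [vS]
        have h2 : ((uS j)⁻¹).val [] = 1 := by
          simp only [uS, Units.inv_mk]
          show vS j [] = 1
          simp [vS]
        have h3 : (((uS j)⁻¹)^n).val [] = 1 := by
          have : ((uS j)⁻¹)^n = mu ((FreeGroup.of j)⁻¹^n) := by
            rw [map_pow, map_inv, mu, FreeGroup.lift_apply_of]
          rw [this, coeff_nil]
        rw [h1, h2, h3]
        push_cast
        ring
  rcases e with n | n
  · rw [Int.ofNat_eq_coe, zpow_natCast]
    exact ⟨(hnat n).1, by rw [(hnat n).2]⟩
  · rw [zpow_negSucc, ← inv_pow]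
    refine ⟨(hnatinv (n+1)).1, ?_⟩
    rw [(hnatinv (n+1)).2]
    simp [Int.negSucc_eq]


-- ## reduced words, runs, and the leading monomial

def Red (L : List (Fin 2 × Bool)) : Prop :=
  List.Chain' (fun p q => p.1 = q.1 → p.2 = q.2) L

lemma reduce_cons_eq (hd : Fin 2 × Bool) (L : List (Fin 2 × Bool)) :
    FreeGroup.reduce (hd :: L) =
      List.casesOn (FreeGroup.reduce L) [hd]
        (fun hd2 tl2 => if hd.1 = hd2.1 ∧ hd.2 = !hd2.2 then tl2 else hd :: hd2 :: tl2) := rfl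

lemma red_reduce (L : List (Fin 2 × Bool)) : Red (FreeGroup.reduce L) := by
  induction L with
  | nil => exact List.isChain_nil
  | cons hd L ih =>
    rw [reduce_cons_eq]
    cases hr : FreeGroup.reduce L with
    | nil => exact List.isChain_singleton hd
    | cons hd2 tl2 =>
      rw [hr] at ih
      show Red (if hd.1 = hd2.1 ∧ hd.2 = !hd2.2 then tl2 else hd :: hd2 :: tl2)
      by_cases hc : hd.1 = hd2.1 ∧ hd.2 = !hd2.2
      · rw [if_pos hc]
        exact ih.tail
      · rw [if_neg hc]
        refine List.isChain_cons_cons.mpr ⟨?_, ih⟩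
        intro h1
        by_contra h2
        exact hc ⟨h1, by
          rcases Bool.eq_false_or_eq_true hd2.2 with h | h <;>
            rcases Bool.eq_false_or_eq_true hd.2 with h' | h' <;>
              simp [h, h'] at h2 ⊢⟩

lemma red_toWord (u : FreeGroup (Fin 2)) : Red u.toWord := by
  rw [← FreeGroup.reduce_toWord]
  exact red_reduce _

def tau : List (Fin 2 × Bool) → List (Fin 2)
  | [] => []
  | p :: L => p.1 :: tau (L.dropWhile (fun q => q.1 = p.1))
termination_by L => L.length
decreasing_by
  simp only [List.length_cons]
  exact Nat.lt_succ_of_le (List.dropWhile_sublist _).length_le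

lemma tau_nil : tau [] = [] := by rw [tau]

lemma tau_cons (p : Fin 2 × Bool) (L : List (Fin 2 × Bool)) :
    tau (p :: L) = p.1 :: tau (L.dropWhile (fun q => q.1 = p.1)) := by rw [tau]

lemma dropWhile_head_not {α : Type*} (pr : α → Bool) :
    ∀ (L : List α), ∀ q ∈ (List.dropWhile pr L).head?, pr q = false := by
  intro L
  induction L with
  | nil => intro q hq; simp at hq
  | cons a L ih =>
    intro q hq
    by_cases ha : pr a
    · rw [List.dropWhile_cons_of_pos ha] at hq
      exact ih q hq
    · rw [List.dropWhile_cons_of_neg ha] at hq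
      simp at hq
      subst hq
      simpa using ha

def AltW (w : List (Fin 2)) : Prop := List.Chain' (· ≠ ·) w

lemma tau_alt_aux : ∀ (n : ℕ) (L : List (Fin 2 × Bool)), L.length ≤ n → AltW (tau L) := by
  intro n
  induction n with
  | zero =>
    intro L hL
    have : L = [] := List.length_eq_zero_iff.mp (Nat.le_zero.mp hL)
    subst this
    rw [tau_nil]
    exact List.isChain_nil
  | succ n ih =>
    intro L hL
    cases L with
    | nil => rw [tau_nil]; exact List.isChain_nil
    | cons p L' =>
      rw [tau_cons]
      have hsub : (L'.dropWhile (fun q => decide (q.1 = p.1))).length ≤ L'.length :=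
        (List.dropWhile_sublist _).length_le
      cases hL2 : L'.dropWhile (fun q => decide (q.1 = p.1)) with
      | nil => rw [tau_nil]; exact List.isChain_singleton _
      | cons q M =>
        rw [tau_cons]
        have hlenM : (q :: M).length ≤ n := by
          rw [← hL2]
          simp only [List.length_cons] at hL
          omega
        have htail := ih (q :: M) hlenM
        rw [tau_cons] at htail
        refine List.isChain_cons_cons.mpr ⟨?_, htail⟩
        have := dropWhile_head_not (fun q => decide (q.1 = p.1)) L' q (by rw [hL2]; rfl)
        simp only [decide_eq_false_iff_not] at this
        exact fun h => this h.symm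

lemma tau_alt (L : List (Fin 2 × Bool)) : AltW (tau L) := tau_alt_aux L.length L le_rfl

lemma takeWhile_run :
    ∀ (L : List (Fin 2 × Bool)) (p : Fin 2 × Bool), Red (p :: L) →
    ∃ r : ℕ, p :: L = List.replicate (r+1) p ++ L.dropWhile (fun q => q.1 = p.1) := by
  intro L
  induction L with
  | nil =>
    intro p _
    exact ⟨0, by simp⟩
  | cons q L' ih =>
    intro p hred
    by_cases hq : q.1 = p.1
    · have hqp : q = p := by
        have h1 := List.isChain_cons_cons.mp hred |>.1
        have : p.2 = q.2 := h1 hq.symm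
        exact Prod.ext hq (this.symm)
      subst hqp
      have hred' : Red (q :: L') := (List.isChain_cons_cons.mp hred).2
      obtain ⟨r, hr⟩ := ih q hred'
      refine ⟨r + 1, ?_⟩
      have hdw : (q :: L').dropWhile (fun s => s.1 = q.1) = L'.dropWhile (fun s => s.1 = q.1) := by
        rw [List.dropWhile_cons_of_pos]
        simp
      rw [hdw]
      calc q :: q :: L' = q :: (q :: L') := rfl
        _ = q :: (List.replicate (r+1) q ++ L'.dropWhile (fun s => s.1 = q.1)) := by rw [← hr]
        _ = List.replicate (r+1+1) q ++ L'.dropWhile (fun s => s.1 = q.1) := by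
            rw [List.replicate_succ]; rfl
    · refine ⟨0, ?_⟩
      rw [List.dropWhile_cons_of_neg (by simpa using hq)]
      simp

lemma mk_replicate (p : Fin 2 × Bool) :
    ∀ n : ℕ, FreeGroup.mk (List.replicate n p)
      = (if p.2 then FreeGroup.of p.1 else (FreeGroup.of p.1)⁻¹)^n := by
  intro n
  induction n with
  | zero => rfl
  | succ n ih =>
    rw [List.replicate_succ, pow_succ']
    have h1 : FreeGroup.mk [p] = (if p.2 then FreeGroup.of p.1 else (FreeGroup.of p.1)⁻¹) := by
      rcases p with ⟨x, b⟩
      cases b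
      · simp only [if_neg Bool.false_ne_true]
        show FreeGroup.mk [(x, false)] = (FreeGroup.mk [(x, true)])⁻¹
        rw [FreeGroup.inv_mk]
        rfl
      · rfl
    calc FreeGroup.mk (p :: List.replicate n p) = FreeGroup.mk ([p] ++ List.replicate n p) := rfl
      _ = FreeGroup.mk [p] * FreeGroup.mk (List.replicate n p) := (FreeGroup.mul_mk).symm
      _ = _ := by rw [h1, ih]

lemma mul_alt_coeff {j : Fin 2} {A S : Ser} (hA : jpow j A) :
    ∀ (w : List (Fin 2)), AltW w →
    (A * S) w = A [] * S w + (if w.head? = some j then A [j] * S w.tail else 0) := by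
  intro w hw
  cases w with
  | nil =>
    rw [mul_nil]
    simp
  | cons x w' =>
    rw [mul_cons]
    by_cases hx : x = j
    · subst hx
      rw [if_pos (by simp : (x :: w').head? = some x)]
      congr 1
      cases w' with
      | nil =>
        rw [mul_nil, shf_apply, List.tail_cons]
      | cons x' w'' =>
        have hxx' : x ≠ x' := (List.isChain_cons_cons.mp hw).1
        rw [mul_cons]
        have hz : shf x' (shf x A) = 0 := by
          funext u
          by_contra h
          have := hA (x :: x' :: u) (by simpa [shf_apply, zero_apply] using h) x' (by simp)
          exact hxx' (this ▸ rfl)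
        rw [hz, zero_mul', shf_apply]
        simp [zero_apply]
    · rw [if_neg (by simp only [List.head?_cons, Option.some_inj]; exact fun h => hx h)]
      have hz : shf x A = 0 := by
        funext u
        by_contra h
        exact hx (hA (x :: u) (by simpa [shf_apply, zero_apply] using h) x (by simp))
      rw [hz, zero_mul']
      simp [zero_apply]

lemma magnus_main :
    ∀ (n : ℕ) (L : List (Fin 2 × Bool)), L.length ≤ n → Red L →
    (∀ w, AltW w → (tau L).length < w.length → (mu (FreeGroup.mk L)).val w = 0)
    ∧ (L ≠ [] → (mu (FreeGroup.mk L)).val (tau L) ≠ 0) := by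
  intro n
  induction n with
  | zero =>
    intro L hlen _
    have : L = [] := List.length_eq_zero_iff.mp (Nat.le_zero.mp hlen)
    subst this
    constructor
    · intro w _ hw
      have : FreeGroup.mk ([] : List (Fin 2 × Bool)) = 1 := rfl
      rw [this, map_one]
      show (1 : Ser) w = 0
      rw [one_apply, if_neg]
      intro h
      rw [h] at hw
      simp [tau_nil] at hw
    · intro h; exact absurd rfl h
  | succ n ih =>
    intro L hlen hred
    cases L with
    | nil =>
      exact (ih [] (by simp) hred)
    | cons p L' =>
      obtain ⟨r, hrun⟩ := takeWhile_run L' p hred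
      set L'' := L'.dropWhile (fun q => q.1 = p.1) with hL''def
      have hlen'' : L''.length ≤ n := by
        have h1 : (p :: L').length = (r+1) + L''.length := by
          rw [hrun]; simp
        have h2 : (p :: L').length ≤ n + 1 := hlen
        omega
      have hred'' : Red L'' := hred.suffix
        ((List.dropWhile_suffix _).trans (List.suffix_cons p L'))
      have ihz := (ih L'' hlen'' hred'').1
      have iha := (ih L'' hlen'' hred'').2
      -- the Magnus image of the run
      set e : ℤ := if p.2 then ((r:ℤ)+1) else -((r:ℤ)+1) with he
      have he0 : e ≠ 0 := by
        rcases p.2 <;> simp [he] <;> omega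
      have hmk : FreeGroup.mk (p :: L') = (FreeGroup.of p.1)^e * FreeGroup.mk L'' := by
        rw [hrun, ← FreeGroup.mul_mk, mk_replicate]
        congr 1
        have hcast : ((r:ℤ)+1) = ((r+1 : ℕ) : ℤ) := by push_cast; ring
        rcases hb : p.2
        · rw [if_neg (by simp [hb]), he, if_neg (by simp [hb]), hcast, zpow_neg,
            zpow_natCast, inv_pow]
        · rw [if_pos (by simp [hb]), he, if_pos (by simp [hb]), hcast, zpow_natCast]
      have hval : (mu (FreeGroup.mk (p :: L'))).val
          = ((uS p.1)^e).val * (mu (FreeGroup.mk L'')).val := by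
        rw [hmk, map_mul, Units.val_mul, map_zpow, mu, FreeGroup.lift_apply_of]
      set A : Ser := ((uS p.1)^e).val with hA
      set S : Ser := (mu (FreeGroup.mk L'')).val with hS
      have hjp : jpow p.1 A := (jpow_zpow p.1 e).1
      have hAnil : A [] = 1 := by
        rw [hA]
        have : (uS p.1)^e = mu ((FreeGroup.of p.1)^e) := by
          rw [map_zpow, mu, FreeGroup.lift_apply_of]
        rw [this, coeff_nil]
      have hAj : A [p.1] = e := (jpow_zpow p.1 e).2
      have htau : tau (p :: L') = p.1 :: tau L'' := tau_cons p L'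
      constructor
      · intro w hw hlw
        rw [hval, mul_alt_coeff hjp w hw, hAnil, one_mul]
        rw [htau] at hlw
        simp only [List.length_cons] at hlw
        have h1 : S w = 0 := ihz w hw (by omega)
        rw [h1]
        by_cases hhead : w.head? = some p.1
        · rw [if_pos hhead]
          have h2 : S w.tail = 0 := by
            apply ihz w.tail hw.tail
            have : w.tail.length = w.length - 1 := by simp
            omega
          rw [h2, mul_zero, add_zero]
        · rw [if_neg hhead, add_zero]
      · intro _
        have haltf : AltW (p.1 :: tau L'') := by
          have := tau_alt (p :: L')
          rwa [htau] at this
        rw [htau, hval, mul_alt_coeff hjp _ haltf, hAnil, one_mul]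
        rw [if_pos (by simp : (p.1 :: tau L'').head? = some p.1)]
        have h1 : S (p.1 :: tau L'') = 0 := by
          apply ihz _ haltf
          simp
        rw [h1, zero_add]
        simp only [List.tail_cons]
        rw [hAj]
        apply mul_ne_zero he0
        cases hL2 : L'' with
        | nil =>
          rw [hS, hL2]
          show (mu (FreeGroup.mk [])).val (tau []) ≠ 0
          have : FreeGroup.mk ([] : List (Fin 2 × Bool)) = 1 := rfl
          rw [this, map_one, tau_nil]
          show (1 : Ser) [] ≠ 0
          simp [one_apply]
        | cons q M =>
          have hne : L'' ≠ [] := by rw [hL2]; simp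
          have h := iha hne
          rwa [hL2] at h


-- ## the Magnus bi-order positive cone

open Classical in
noncomputable def dS (u : FreeGroup (Fin 2)) : Ser := (mu u).val - 1

lemma dS_nil (u : FreeGroup (Fin 2)) : dS u [] = 0 := by
  rw [dS, sub_apply, coeff_nil, one_apply]
  simp

lemma one_add_dS (u : FreeGroup (Fin 2)) : (1 : Ser) + dS u = (mu u).val := by
  rw [dS]; abel

lemma dS_one : dS 1 = (0 : Ser) := by
  rw [dS, map_one]
  show (1 : Serˣ).val - 1 = 0
  rw [Units.val_one]
  abel

lemma tau_ne_nil {L : List (Fin 2 × Bool)} (h : L ≠ []) : tau L ≠ [] := by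
  cases L with
  | nil => exact absurd rfl h
  | cons p L' => rw [tau_cons]; simp

lemma dS_ne_zero {u : FreeGroup (Fin 2)} (hu : u ≠ 1) : dS u (tau u.toWord) ≠ 0 := by
  have hL : u.toWord ≠ [] := fun h => hu (FreeGroup.toWord_eq_nil_iff.mp h)
  have h1 := (magnus_main u.toWord.length u.toWord le_rfl (red_toWord u)).2 hL
  rw [FreeGroup.mk_toWord] at h1
  rw [dS, sub_apply, one_apply, if_neg (tau_ne_nil hL)]
  simpa using h1

def DD (u : FreeGroup (Fin 2)) (d : ℕ) : Prop := ∃ v : Fin d → Fin 2, dS u (List.ofFn v) ≠ 0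

lemma exists_DD {u : FreeGroup (Fin 2)} (hu : u ≠ 1) : ∃ d, DD u d := by
  refine ⟨(tau u.toWord).length, fun k => (tau u.toWord).get k, ?_⟩
  rw [List.ofFn_get]
  exact dS_ne_zero hu

open Classical in
noncomputable def dlen (u : FreeGroup (Fin 2)) : ℕ :=
  if h : ∃ d, DD u d then Nat.find h else 0

open Classical in
noncomputable def leadSet (u : FreeGroup (Fin 2)) : Finset (List (Fin 2)) :=
  ((Finset.univ : Finset (Fin (dlen u) → Fin 2)).image List.ofFn).filter (fun w => dS u w ≠ 0)

open Classical in
noncomputable def lead (u : FreeGroup (Fin 2)) : List (Fin 2) :=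
  if h : (leadSet u).Nonempty then (leadSet u).min' h else []

noncomputable def lc (u : FreeGroup (Fin 2)) : ℤ := dS u (lead u)

def Bpos (u : FreeGroup (Fin 2)) : Prop := 0 < lc u

lemma mem_leadSet {u : FreeGroup (Fin 2)} {w : List (Fin 2)} :
    w ∈ leadSet u ↔ w.length = dlen u ∧ dS u w ≠ 0 := by
  classical
  constructor
  · intro h
    rw [leadSet, Finset.mem_filter, Finset.mem_image] at h
    obtain ⟨⟨v, -, hv⟩, h2⟩ := h
    exact ⟨by rw [← hv, List.length_ofFn], by simpa using h2⟩
  · rintro ⟨h1, h2⟩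
    rw [leadSet, Finset.mem_filter, Finset.mem_image]
    refine ⟨⟨fun k => w.get (Fin.cast h1.symm k), Finset.mem_univ _, ?_⟩, by simpa using h2⟩
    apply List.ext_getElem
    · simp [h1]
    · intro i hi hi2
      simp

/-- characterization of the leading data -/
lemma lead_spec {u : FreeGroup (Fin 2)} {w₀ : List (Fin 2)}
    (h0 : dS u w₀ ≠ 0)
    (hlow : ∀ w : List (Fin 2), w.length < w₀.length → dS u w = 0)
    (hlex : ∀ w : List (Fin 2), w.length = w₀.length → w < w₀ → dS u w = 0) :
    dlen u = w₀.length ∧ lead u = w₀ ∧ lc u = dS u w₀ := by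
  classical
  have hex : ∃ d, DD u d := ⟨w₀.length, fun k => w₀.get k, by rw [List.ofFn_get]; exact h0⟩
  have hd : dlen u = w₀.length := by
    rw [dlen, dif_pos hex, Nat.find_eq_iff]
    constructor
    · exact ⟨fun k => w₀.get k, by rw [List.ofFn_get]; exact h0⟩
    · intro m hm ⟨v, hv⟩
      exact hv (hlow _ (by rw [List.length_ofFn]; exact hm))
  have hmem : w₀ ∈ leadSet u := mem_leadSet.mpr ⟨hd.symm, h0⟩
  have hne : (leadSet u).Nonempty := ⟨w₀, hmem⟩
  have hlead : lead u = w₀ := by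
    rw [lead, dif_pos hne]
    apply le_antisymm (Finset.min'_le _ _ hmem)
    apply Finset.le_min'
    intro x hx
    obtain ⟨hx1, hx2⟩ := mem_leadSet.mp hx
    by_contra hcon
    push_neg at hcon
    exact hx2 (hlex x (by omega) hcon)
  exact ⟨hd, hlead, by rw [lc, hlead]⟩

lemma lead_basic {u : FreeGroup (Fin 2)} (hu : u ≠ 1) :
    (lead u).length = dlen u ∧ lc u ≠ 0 := by
  classical
  have hex := exists_DD hu
  have hDD : DD u (dlen u) := by
    rw [dlen, dif_pos hex]
    exact Nat.find_spec hex
  obtain ⟨v, hv⟩ := hDD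
  have hne : (leadSet u).Nonempty :=
    ⟨List.ofFn v, mem_leadSet.mpr ⟨List.length_ofFn, hv⟩⟩
  have hmem : lead u ∈ leadSet u := by
    rw [lead, dif_pos hne]
    exact Finset.min'_mem _ _
  obtain ⟨h1, h2⟩ := mem_leadSet.mp hmem
  exact ⟨h1, h2⟩

lemma dS_low {u : FreeGroup (Fin 2)} {w : List (Fin 2)} (h : w.length < dlen u) :
    dS u w = 0 := by
  classical
  by_cases hex : ∃ d, DD u d
  · rw [dlen, dif_pos hex] at h
    by_contra hcon
    have : DD u w.length := ⟨fun k => w.get k, by rw [List.ofFn_get]; exact hcon⟩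
    exact Nat.find_min hex h this
  · rw [dlen, dif_neg hex] at h
    omega

lemma dS_lex {u : FreeGroup (Fin 2)} {w : List (Fin 2)}
    (h1 : w.length = dlen u) (h2 : w < lead u) : dS u w = 0 := by
  classical
  by_contra hcon
  have hmem : w ∈ leadSet u := mem_leadSet.mpr ⟨h1, hcon⟩
  have hne : (leadSet u).Nonempty := ⟨w, hmem⟩
  have := Finset.min'_le _ _ hmem
  rw [lead, dif_pos hne] at h2
  exact absurd (lt_of_le_of_lt this h2) (lt_irrefl _)

lemma dlen_pos {u : FreeGroup (Fin 2)} (hu : u ≠ 1) : 1 ≤ dlen u := by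
  by_contra h
  push_neg at h
  have h0 : dlen u = 0 := by omega
  have hb := lead_basic hu
  have : lead u = [] := List.length_eq_zero_iff.mp (by rw [hb.1, h0])
  exact hb.2 (by rw [lc, this, dS_nil])

lemma lowmul {f g : Ser} {a b : ℕ}
    (hf : ∀ w : List (Fin 2), w.length < a → f w = 0)
    (hg : ∀ w : List (Fin 2), w.length < b → g w = 0) :
    ∀ w : List (Fin 2), w.length < a + b → (f * g) w = 0 := by
  intro w hw
  rw [mul_apply]
  apply Finset.sum_eq_zero
  intro i hi
  rw [Finset.mem_range] at hi
  by_cases hia : i < a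
  · rw [hf (w.take i) (by rw [List.length_take]; omega), zero_mul]
  · rw [hg (w.drop i) (by rw [List.length_drop]; omega), mul_zero]

lemma dS_mul (u v : FreeGroup (Fin 2)) :
    dS (u * v) = dS u + dS v + dS u * dS v := by
  have h1 : (mu (u*v)).val = (mu u).val * (mu v).val := by
    rw [map_mul, Units.val_mul]
  have h2 : ((1:Ser) + dS u) * ((1:Ser) + dS v)
      = 1 + (dS u + dS v + dS u * dS v) := by
    simp only [mul_add', add_mul', one_mul', mul_one']
    abel
  have h3 := one_add_dS (u*v)
  rw [h1, ← one_add_dS u, ← one_add_dS v, h2] at h3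
  exact add_left_cancel h3

lemma dS_agree_lead {u x : FreeGroup (Fin 2)} {c : ℤ} (hc : c ≠ 0) (hu : u ≠ 1)
    (hagree : ∀ w : List (Fin 2), w.length ≤ dlen u → dS x w = c * dS u w) :
    dlen x = dlen u ∧ lead x = lead u ∧ lc x = c * lc u := by
  have hb := lead_basic hu
  have h0 : dS x (lead u) ≠ 0 := by
    rw [hagree _ (le_of_eq hb.1)]
    exact mul_ne_zero hc (by rw [← lc]; exact hb.2)
  have hlow : ∀ w : List (Fin 2), w.length < (lead u).length → dS x w = 0 := by
    intro w hw
    rw [hb.1] at hw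
    rw [hagree _ (le_of_lt hw), dS_low hw, mul_zero]
  have hlex : ∀ w : List (Fin 2), w.length = (lead u).length → w < lead u → dS x w = 0 := by
    intro w hw hw2
    rw [hb.1] at hw
    rw [hagree _ (le_of_eq hw), dS_lex hw hw2, mul_zero]
  obtain ⟨e1, e2, e3⟩ := lead_spec h0 hlow hlex
  refine ⟨by rw [e1, hb.1], e2, ?_⟩
  rw [e3, hagree _ (le_of_eq hb.1), lc]

lemma ne_one_of_Bpos {u : FreeGroup (Fin 2)} (h : Bpos u) : u ≠ 1 := by
  intro he
  rw [Bpos, he, lc, dS_one] at h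
  exact absurd h (by simp [zero_apply])

lemma Bpos_mul {u v : FreeGroup (Fin 2)} (hu : Bpos u) (hv : Bpos v) : Bpos (u * v) := by
  have hu1 := ne_one_of_Bpos hu
  have hv1 := ne_one_of_Bpos hv
  have hbu := lead_basic hu1
  have hbv := lead_basic hv1
  have hdu := dlen_pos hu1
  have hdv := dlen_pos hv1
  have hmulz : ∀ w : List (Fin 2), w.length < dlen u + dlen v →
      (dS u * dS v) w = 0 :=
    lowmul (fun w h => dS_low h) (fun w h => dS_low h)
  rcases lt_trichotomy (dlen u) (dlen v) with hlt | heq | hgt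
  · have hagree : ∀ w : List (Fin 2), w.length ≤ dlen u → dS (u*v) w = 1 * dS u w := by
      intro w hw
      rw [dS_mul, add_apply, add_apply, dS_low (by omega : w.length < dlen v),
        hmulz w (by omega), one_mul]
      ring
    obtain ⟨-, -, h3⟩ := dS_agree_lead one_ne_zero hu1 hagree
    rw [Bpos, h3, one_mul]
    exact hu
  · have hlen_u : (lead u).length = dlen u := hbu.1
    have hlen_v : (lead v).length = dlen v := hbv.1
    have hlow : ∀ w : List (Fin 2), w.length < dlen u → dS (u*v) w = 0 := by
      intro w hw
      rw [dS_mul, add_apply, add_apply, dS_low hw, dS_low (by omega : w.length < dlen v),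
        hmulz w (by omega), add_zero, add_zero]
    rcases lt_trichotomy (lead u) (lead v) with hll | hle | hlg
    · have hval : dS (u*v) (lead u) = lc u := by
        rw [dS_mul, add_apply, add_apply, hmulz _ (by omega), add_zero,
          dS_lex (u := v) (by rw [hlen_u, heq]) hll, add_zero, lc]
      have hlex : ∀ w : List (Fin 2), w.length = (lead u).length → w < lead u →
          dS (u*v) w = 0 := by
        intro w hw hw2
        rw [dS_mul, add_apply, add_apply, dS_lex (u := u) (by rw [hw, hlen_u]) hw2,
          dS_lex (u := v) (by rw [hw, hlen_u, heq]) (lt_trans hw2 hll),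
          hmulz w (by rw [hw, hlen_u]; omega), add_zero, add_zero]
      obtain ⟨-, -, h3⟩ := lead_spec (by rw [hval]; exact ne_of_gt hu)
        (by intro w hw; exact hlow w (by omega)) hlex
      rw [Bpos, h3, hval]
      exact hu
    · have hval : dS (u*v) (lead u) = lc u + lc v := by
        rw [dS_mul, add_apply, add_apply, hmulz _ (by omega), add_zero, lc, lc, hle]
      have hlex : ∀ w : List (Fin 2), w.length = (lead u).length → w < lead u →
          dS (u*v) w = 0 := by
        intro w hw hw2
        rw [dS_mul, add_apply, add_apply, dS_lex (u := u) (by rw [hw, hlen_u]) hw2,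
          dS_lex (u := v) (by rw [hw, hlen_u, heq]) (hle ▸ hw2),
          hmulz w (by rw [hw, hlen_u]; omega), add_zero, add_zero]
      obtain ⟨-, -, h3⟩ := lead_spec (by rw [hval]; exact ne_of_gt (add_pos hu hv))
        (by intro w hw; exact hlow w (by omega)) hlex
      rw [Bpos, h3, hval]
      exact add_pos hu hv
    · have hval : dS (u*v) (lead v) = lc v := by
        rw [dS_mul, add_apply, add_apply, hmulz _ (by omega),
          dS_lex (u := u) (by rw [hlen_v, heq]) hlg, add_zero, zero_add, lc]
      have hlex : ∀ w : List (Fin 2), w.length = (lead v).length → w < lead v →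
          dS (u*v) w = 0 := by
        intro w hw hw2
        rw [dS_mul, add_apply, add_apply,
          dS_lex (u := u) (by rw [hw, hlen_v, ← heq]) (lt_trans hw2 hlg),
          dS_lex (u := v) (by rw [hw, hlen_v]) hw2,
          hmulz w (by rw [hw, hlen_v]; omega), add_zero, add_zero]
      obtain ⟨-, -, h3⟩ := lead_spec (by rw [hval]; exact ne_of_gt hv)
        (by intro w hw; exact hlow w (by omega)) hlex
      rw [Bpos, h3, hval]
      exact hv
  · have hagree : ∀ w : List (Fin 2), w.length ≤ dlen v → dS (u*v) w = 1 * dS v w := by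
      intro w hw
      rw [dS_mul, add_apply, add_apply, dS_low (by omega : w.length < dlen u),
        hmulz w (by omega), one_mul]
      ring
    obtain ⟨-, -, h3⟩ := dS_agree_lead one_ne_zero hv1 hagree
    rw [Bpos, h3, one_mul]
    exact hv

lemma Bpos_inv {u : FreeGroup (Fin 2)} (hu : u ≠ 1) : Bpos u ↔ ¬ Bpos u⁻¹ := by
  have hbu := lead_basic hu
  have key : ∀ w : List (Fin 2), w.length ≤ dlen u → dS u⁻¹ w = (-1) * dS u w := by
    intro w hw
    have h1 : (mu u).val * (mu u⁻¹).val = 1 := by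
      rw [← Units.val_mul, ← map_mul, mul_inv_cancel, map_one, Units.val_one]
    rw [← one_add_dS u, ← one_add_dS u⁻¹] at h1
    have h2 : ((1:Ser) + dS u) * ((1:Ser) + dS u⁻¹)
        = 1 + (dS u + dS u⁻¹ + dS u * dS u⁻¹) := by
      simp only [mul_add', add_mul', one_mul', mul_one']
      abel
    rw [h2] at h1
    have h3 : dS u + dS u⁻¹ + dS u * dS u⁻¹ = 0 := by
      have := congrArg (fun s => s - (1:Ser)) h1
      simpa using this
    have h4 := congrArg (fun s => s w) h3
    simp only [add_apply, zero_apply] at h4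
    have h5 : (dS u * dS u⁻¹) w = 0 := by
      apply lowmul (a := dlen u) (b := 1) (fun w h => dS_low h) ?_ w (by omega)
      intro w hw
      have : w = [] := List.length_eq_zero_iff.mp (by omega)
      rw [this, dS_nil]
    rw [h5] at h4
    have : dS u⁻¹ w = - dS u w := by linarith
    rw [this]
    ring
  obtain ⟨-, -, h3⟩ := dS_agree_lead (by norm_num : (-1:ℤ) ≠ 0) hu key
  rw [Bpos, Bpos, h3]
  have := hbu.2
  constructor
  · intro h hcon
    omega
  · intro h
    rcases lt_or_gt_of_ne this with hc | hc
    · exact absurd (by omega : 0 < (-1) * lc u) h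
    · exact hc

lemma Bpos_one_false : ¬ Bpos 1 := by
  rw [Bpos, lc, dS_one]
  simp [zero_apply]


-- ## the dynamical positive cone on the group of order automorphisms of ℚ

noncomputable def enQ : ℕ → ℚ := fun n =>
  (Denumerable.eqv ℚ).symm ((Equiv.swap (0:ℕ) ((Denumerable.eqv ℚ) 0)) n)

lemma enQ_surj : Function.Surjective enQ := by
  intro q
  exact ⟨(Equiv.swap (0:ℕ) ((Denumerable.eqv ℚ) 0)).symm ((Denumerable.eqv ℚ) q), by
    rw [enQ]; simp⟩

lemma enQ_zero : enQ 0 = 0 := by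
  rw [enQ, Equiv.swap_apply_left]
  simp

def movesQ (h : ℚ ≃o ℚ) (n : ℕ) : Prop := h (enQ n) ≠ enQ n

lemma exists_movesQ {h : ℚ ≃o ℚ} (hh : h ≠ 1) : ∃ n, movesQ h n := by
  by_contra hcon
  push_neg at hcon
  apply hh
  ext q
  obtain ⟨n, rfl⟩ := enQ_surj q
  have := hcon n
  rw [movesQ, not_not] at this
  exact this

open Classical in
noncomputable def NQ (h : ℚ ≃o ℚ) : ℕ :=
  if hh : ∃ n, movesQ h n then Nat.find hh else 0

/-- The positive cone on `ℚ ≃o ℚ`. -/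
def Cp (h : ℚ ≃o ℚ) : Prop := h ≠ 1 ∧ enQ (NQ h) < h (enQ (NQ h))

lemma NQ_spec {h : ℚ ≃o ℚ} (hh : h ≠ 1) : movesQ h (NQ h) := by
  classical
  rw [NQ, dif_pos (exists_movesQ hh)]
  exact Nat.find_spec (exists_movesQ hh)

lemma NQ_min {h : ℚ ≃o ℚ} (hh : h ≠ 1) {m : ℕ} (hm : m < NQ h) : h (enQ m) = enQ m := by
  classical
  rw [NQ, dif_pos (exists_movesQ hh)] at hm
  have := Nat.find_min (exists_movesQ hh) hm
  rwa [movesQ, not_not] at this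

lemma NQ_eq {h : ℚ ≃o ℚ} (hh : h ≠ 1) {n : ℕ} (h1 : movesQ h n)
    (h2 : ∀ m < n, ¬ movesQ h m) : NQ h = n := by
  classical
  rw [NQ, dif_pos (exists_movesQ hh)]
  rw [Nat.find_eq_iff]
  exact ⟨h1, h2⟩

lemma one_apply_Q (x : ℚ) : (1 : ℚ ≃o ℚ) x = x := rfl

lemma mul_apply_Q (h k : ℚ ≃o ℚ) (x : ℚ) : (h * k) x = h (k x) := rfl

lemma inv_apply_Q (h : ℚ ≃o ℚ) (x : ℚ) : (h⁻¹) x = h.symm x := rfl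

lemma Cp_mul {h k : ℚ ≃o ℚ} (hh : Cp h) (hk : Cp k) : Cp (h * k) := by
  obtain ⟨h1, h2⟩ := hh
  obtain ⟨k1, k2⟩ := hk
  set n : ℕ := min (NQ h) (NQ k) with hn
  have key : enQ n < (h * k) (enQ n) := by
    rw [mul_apply_Q]
    rcases lt_trichotomy (NQ h) (NQ k) with hc | hc | hc
    · have hmin : n = NQ h := by omega
      rw [hmin, NQ_min k1 (by omega)]
      exact h2
    · have hmin : n = NQ h := by omega
      rw [hmin]
      calc enQ (NQ h) < h (enQ (NQ h)) := h2
        _ < h (k (enQ (NQ h))) := by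
            apply h.strictMono
            rw [hc]
            exact k2
    · have hmin : n = NQ k := by omega
      rw [hmin]
      calc enQ (NQ k) = h (enQ (NQ k)) := (NQ_min h1 (by omega)).symm
        _ < h (k (enQ (NQ k))) := h.strictMono k2
  have hfix : ∀ m < n, (h * k) (enQ m) = enQ m := by
    intro m hm
    rw [mul_apply_Q, NQ_min k1 (by omega), NQ_min h1 (by omega)]
  have hne : h * k ≠ 1 := by
    intro he
    rw [he, one_apply_Q] at key
    exact lt_irrefl _ key
  have hNQ : NQ (h * k) = n := by
    apply NQ_eq hne
    · exact ne_of_gt key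
    · intro m hm hmv
      exact hmv (hfix m hm)
  exact ⟨hne, by rw [hNQ]; exact key⟩

lemma Cp_not_one : ¬ Cp 1 := fun h => h.1 rfl

lemma NQ_inv {h : ℚ ≃o ℚ} (hh : h ≠ 1) : NQ h⁻¹ = NQ h := by
  have hinv1 : h⁻¹ ≠ 1 := inv_ne_one.mpr hh
  have hiff : ∀ m, movesQ h⁻¹ m ↔ movesQ h m := by
    intro m
    rw [movesQ, movesQ, inv_apply_Q, not_iff_not]
    rw [OrderIso.symm_apply_eq]
    exact eq_comm
  apply NQ_eq hinv1
  · rw [hiff]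
    exact NQ_spec hh
  · intro m hm
    rw [hiff, movesQ, not_not]
    exact NQ_min hh hm

lemma Cp_inv {h : ℚ ≃o ℚ} (hh : h ≠ 1) : Cp h ↔ ¬ Cp h⁻¹ := by
  have hinv1 : h⁻¹ ≠ 1 := inv_ne_one.mpr hh
  have hmv := NQ_spec hh
  set e : ℚ := enQ (NQ h) with he
  have hkey : e < h⁻¹ e ↔ h e < e := by
    rw [inv_apply_Q]
    constructor
    · intro hlt
      have := h.strictMono hlt
      rwa [OrderIso.apply_symm_apply] at this
    · intro hlt
      have := h.symm.strictMono hlt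
      rwa [OrderIso.symm_apply_apply] at this
  constructor
  · rintro ⟨-, hpos⟩ ⟨-, hneg⟩
    rw [NQ_inv hh, ← he] at hneg
    rw [hkey] at hneg
    exact lt_irrefl _ (lt_trans hpos hneg)
  · intro hnot
    refine ⟨hh, ?_⟩
    by_contra hcon
    apply hnot
    refine ⟨hinv1, ?_⟩
    rw [NQ_inv hh, ← he, hkey]
    rcases lt_trichotomy (h e) e with hc | hc | hc
    · exact hc
    · exact absurd hc hmv
    · exact absurd hc hcon

lemma Cp_of_up (h : ℚ ≃o ℚ) (hup : (0:ℚ) < h 0) : Cp h := by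
  have hmv : movesQ h 0 := by
    rw [movesQ, enQ_zero]
    exact ne_of_gt hup
  have hne : h ≠ 1 := by
    intro he
    rw [he, one_apply_Q] at hup
    exact lt_irrefl _ hup
  have hNQ : NQ h = 0 := NQ_eq hne hmv (by omega)
  exact ⟨hne, by rw [hNQ, enQ_zero]; exact hup⟩

lemma not_Cp_of_down (h : ℚ ≃o ℚ) (hdown : h 0 < 0) : ¬ Cp h := by
  have hmv : movesQ h 0 := by
    rw [movesQ, enQ_zero]
    exact ne_of_lt hdown
  have hne : h ≠ 1 := by
    intro he
    rw [he, one_apply_Q] at hdown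
    exact lt_irrefl _ hdown
  have hNQ : NQ h = 0 := NQ_eq hne hmv (by omega)
  rintro ⟨-, hpos⟩
  rw [hNQ, enQ_zero] at hpos
  exact lt_irrefl _ (lt_trans hpos hdown)


-- ## piecewise linear automorphisms of ℚ

def interpQ (s₁ t₁ s₂ t₂ x : ℚ) : ℚ := t₁ + (x - s₁) * (t₂ - t₁) / (s₂ - s₁)

def pl : List (ℚ × ℚ) → ℚ → ℚ
  | [], x => x
  | [(s,t)], x => x - s + t
  | (s₁,t₁) :: (s₂,t₂) :: l, x =>
    if x ≤ s₁ then x - s₁ + t₁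
    else if x ≤ s₂ then interpQ s₁ t₁ s₂ t₂ x
    else pl ((s₂,t₂) :: l) x

lemma pl_nil (x : ℚ) : pl [] x = x := rfl
lemma pl_single (s t x : ℚ) : pl [(s,t)] x = x - s + t := rfl
lemma pl_cons2 (s₁ t₁ s₂ t₂ : ℚ) (l : List (ℚ × ℚ)) (x : ℚ) :
    pl ((s₁,t₁) :: (s₂,t₂) :: l) x =
      if x ≤ s₁ then x - s₁ + t₁
      else if x ≤ s₂ then interpQ s₁ t₁ s₂ t₂ x
      else pl ((s₂,t₂) :: l) x := rfl

def ltP (p q : ℚ × ℚ) : Prop := p.1 < q.1 ∧ p.2 < q.2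

instance : IsTrans (ℚ × ℚ) ltP :=
  ⟨fun _ _ _ h1 h2 => ⟨lt_trans h1.1 h2.1, lt_trans h1.2 h2.2⟩⟩

def SortedP (l : List (ℚ × ℚ)) : Prop := List.Chain' ltP l

lemma SortedP.pairwise {l : List (ℚ × ℚ)} (h : SortedP l) : List.Pairwise ltP l :=
  List.isChain_iff_pairwise.mp h

lemma pl_left {l : List (ℚ × ℚ)} {s t x : ℚ} (hx : x ≤ s) :
    pl ((s,t) :: l) x = x - s + t := by
  cases l with
  | nil => rfl
  | cons p l' =>
    rcases p with ⟨s₂, t₂⟩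
    rw [pl_cons2, if_pos hx]

lemma interp_self (s₁ t₁ s₂ t₂ : ℚ) (h : s₁ < s₂) : interpQ s₁ t₁ s₂ t₂ s₁ = t₁ := by
  rw [interpQ, sub_self, zero_mul, zero_div, add_zero]

lemma interp_right (s₁ t₁ s₂ t₂ : ℚ) (h : s₁ < s₂) : interpQ s₁ t₁ s₂ t₂ s₂ = t₂ := by
  have hne : s₂ - s₁ ≠ 0 := by linarith
  rw [interpQ, mul_comm, mul_div_assoc, div_self hne, mul_one]
  ring

lemma interp_mono (s₁ t₁ s₂ t₂ : ℚ) (hs : s₁ < s₂) (ht : t₁ < t₂) :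
    StrictMono (interpQ s₁ t₁ s₂ t₂) := by
  intro x y hxy
  rw [interpQ, interpQ]
  have h1 : (0:ℚ) < (t₂ - t₁) / (s₂ - s₁) := by
    apply div_pos <;> linarith
  have := mul_lt_mul_of_pos_right (by linarith : x - s₁ < y - s₁) h1
  rw [mul_div_assoc, mul_div_assoc]
  linarith

lemma pl_eval : ∀ (l : List (ℚ × ℚ)), SortedP l → ∀ s t : ℚ, (s,t) ∈ l → pl l s = t := by
  intro l
  induction l with
  | nil => intro _ s t h; simp at h
  | cons p l' ih =>
    rcases p with ⟨s₁, t₁⟩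
    intro hs s t hmem
    rcases List.mem_cons.mp hmem with h | h
    · have he : s = s₁ ∧ t = t₁ := by simpa [Prod.ext_iff] using h
      obtain ⟨e1, e2⟩ := he
      subst e1; subst e2
      rw [pl_left le_rfl]
      ring
    · have hpw := hs.pairwise
      have hgt : s₁ < s := ((List.pairwise_cons.mp hpw).1 (s, t) h).1
      cases l' with
      | nil => simp at h
      | cons q l'' =>
        rcases q with ⟨s₂, t₂⟩
        have hs' : SortedP ((s₂,t₂) :: l'') := (List.isChain_cons_cons.mp hs).2
        have h12 : s₁ < s₂ := (List.isChain_cons_cons.mp hs).1.1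
        rw [pl_cons2, if_neg (not_le.mpr hgt)]
        rcases List.mem_cons.mp h with h2 | h2
        · have he : s = s₂ ∧ t = t₂ := by simpa [Prod.ext_iff] using h2
          obtain ⟨e1, e2⟩ := he
          subst e1; subst e2
          rw [if_pos le_rfl]
          exact interp_right _ _ _ _ h12
        · have hgt2 : s₂ < s := ((List.pairwise_cons.mp hs'.pairwise).1 (s, t) h2).1
          rw [if_neg (not_le.mpr hgt2)]
          exact ih hs' s t h

lemma strictMono_ite {c : ℚ} {F G : ℚ → ℚ} (hF : StrictMono F) (hG : StrictMono G)
    (hFG : F c = G c) : StrictMono (fun x => if x ≤ c then F x else G x) := by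
  intro x y hxy
  by_cases hx : x ≤ c <;> by_cases hy : y ≤ c <;> simp only [hx, hy, if_pos, if_neg, if_true,
    if_false]
  · exact hF hxy
  · calc F x ≤ F c := hF.monotone hx
      _ = G c := hFG
      _ < G y := hG (not_le.mp hy)
  · exact absurd (lt_of_lt_of_le hxy hy) (not_lt.mpr (le_of_not_ge hx))
  · exact hG hxy

lemma pl_mono : ∀ (l : List (ℚ × ℚ)), SortedP l → StrictMono (pl l) := by
  intro l
  induction l with
  | nil => intro _ x y h; exact h
  | cons p l' ih =>
    rcases p with ⟨s₁, t₁⟩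
    intro hs
    cases l' with
    | nil =>
      intro x y hxy
      rw [pl_single, pl_single]
      linarith
    | cons q l'' =>
      rcases q with ⟨s₂, t₂⟩
      have hs' : SortedP ((s₂,t₂) :: l'') := (List.isChain_cons_cons.mp hs).2
      have h12 : s₁ < s₂ := (List.isChain_cons_cons.mp hs).1.1
      have ht12 : t₁ < t₂ := (List.isChain_cons_cons.mp hs).1.2
      have hinner : StrictMono (fun x => if x ≤ s₂ then interpQ s₁ t₁ s₂ t₂ x
          else pl ((s₂,t₂) :: l'') x) := by
        apply strictMono_ite (interp_mono _ _ _ _ h12 ht12) (ih hs')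
        rw [interp_right _ _ _ _ h12, pl_left le_rfl]
        ring
      have hlin : StrictMono (fun x : ℚ => x - s₁ + t₁) := by
        intro x y hxy
        show x - s₁ + t₁ < y - s₁ + t₁
        linarith
      have houter : StrictMono (fun x => if x ≤ s₁ then x - s₁ + t₁
          else if x ≤ s₂ then interpQ s₁ t₁ s₂ t₂ x else pl ((s₂,t₂) :: l'') x) := by
        apply strictMono_ite hlin hinner
        show s₁ - s₁ + t₁ = if s₁ ≤ s₂ then interpQ s₁ t₁ s₂ t₂ s₁ else pl ((s₂,t₂) :: l'') s₁
        rw [if_pos (le_of_lt h12), interp_self _ _ _ _ h12]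
        ring
      intro x y hxy
      rw [pl_cons2, pl_cons2]
      exact houter hxy

def swapP (l : List (ℚ × ℚ)) : List (ℚ × ℚ) := l.map Prod.swap

lemma swapP_sorted {l : List (ℚ × ℚ)} (h : SortedP l) : SortedP (swapP l) := by
  rw [SortedP, swapP, List.Chain', List.isChain_map]
  exact List.IsChain.imp (fun p q hpq => ⟨hpq.2, hpq.1⟩) h

lemma swapP_swapP (l : List (ℚ × ℚ)) : swapP (swapP l) = l := by
  rw [swapP, swapP, List.map_map]
  simp [Prod.swap_swap_eq]

lemma pl_inv : ∀ (l : List (ℚ × ℚ)), SortedP l → ∀ x : ℚ, pl (swapP l) (pl l x) = x := by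
  intro l
  induction l with
  | nil => intro _ x; rfl
  | cons p l' ih =>
    rcases p with ⟨s₁, t₁⟩
    intro hs x
    cases l' with
    | nil =>
      show pl [(t₁, s₁)] (pl [(s₁,t₁)] x) = x
      rw [pl_single, pl_single]
      ring
    | cons q l'' =>
      rcases q with ⟨s₂, t₂⟩
      have hs' : SortedP ((s₂,t₂) :: l'') := (List.isChain_cons_cons.mp hs).2
      have h12 : s₁ < s₂ := (List.isChain_cons_cons.mp hs).1.1
      have ht12 : t₁ < t₂ := (List.isChain_cons_cons.mp hs).1.2
      have hswap : swapP ((s₁,t₁) :: (s₂,t₂) :: l'')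
          = (t₁,s₁) :: (t₂,s₂) :: swapP l'' := rfl
      rw [hswap]
      by_cases hx : x ≤ s₁
      · have hy : pl ((s₁,t₁) :: (s₂,t₂) :: l'') x = x - s₁ + t₁ := pl_left hx
        rw [hy, pl_cons2, if_pos (by linarith : x - s₁ + t₁ ≤ t₁)]
        ring
      · by_cases hx2 : x ≤ s₂
        · have hy : pl ((s₁,t₁) :: (s₂,t₂) :: l'') x = interpQ s₁ t₁ s₂ t₂ x := by
            rw [pl_cons2, if_neg hx, if_pos hx2]
          have hy1 : t₁ < interpQ s₁ t₁ s₂ t₂ x := by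
            have := interp_mono s₁ t₁ s₂ t₂ h12 ht12 (not_le.mp hx)
            rwa [interp_self _ _ _ _ h12] at this
          have hy2 : interpQ s₁ t₁ s₂ t₂ x ≤ t₂ := by
            rcases eq_or_lt_of_le hx2 with he | hlt
            · rw [he, interp_right _ _ _ _ h12]
            · have := interp_mono s₁ t₁ s₂ t₂ h12 ht12 hlt
              rw [interp_right _ _ _ _ h12] at this
              exact le_of_lt this
          rw [hy, pl_cons2, if_neg (not_le.mpr hy1), if_pos hy2]
          rw [interpQ, interpQ]
          have d1 : s₂ - s₁ ≠ 0 := by linarith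
          have d2 : t₂ - t₁ ≠ 0 := by linarith
          field_simp
          ring
        · have hy : pl ((s₁,t₁) :: (s₂,t₂) :: l'') x = pl ((s₂,t₂) :: l'') x := by
            rw [pl_cons2, if_neg hx, if_neg hx2]
          have hyg : t₂ < pl ((s₂,t₂) :: l'') x := by
            have := pl_mono _ hs' (not_le.mp hx2)
            rwa [pl_left le_rfl, sub_self, zero_add] at this
          rw [hy, pl_cons2, if_neg (by linarith : ¬ pl ((s₂,t₂) :: l'') x ≤ t₁),
            if_neg (not_le.mpr hyg)]
          exact ih hs' x

/-- The order automorphism of `ℚ` interpolating a sorted list of pairs. -/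
noncomputable def mkIsoQ (l : List (ℚ × ℚ)) (h : SortedP l) : ℚ ≃o ℚ :=
  StrictMono.orderIsoOfSurjective (pl l) (pl_mono l h)
    (fun y => ⟨pl (swapP l) y, by
      have := pl_inv (swapP l) (swapP_sorted h) y
      rwa [swapP_swapP] at this⟩)

lemma mkIsoQ_apply (l : List (ℚ × ℚ)) (h : SortedP l) (x : ℚ) :
    mkIsoQ l h x = pl l x := by
  rw [mkIsoQ]
  exact congrFun (StrictMono.coe_orderIsoOfSurjective (pl l) _ _) x

lemma mkIsoQ_symm_apply (l : List (ℚ × ℚ)) (h : SortedP l) {x y : ℚ}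
    (hxy : pl l x = y) : (mkIsoQ l h).symm y = x := by
  rw [OrderIso.symm_apply_eq, mkIsoQ_apply, hxy]


lemma pl_skip : ∀ (l₁ : List (ℚ × ℚ)) {s₂ t₂ : ℚ} {l₂ : List (ℚ × ℚ)} {x : ℚ},
    (∀ p ∈ l₁, p.1 < x) → s₂ < x →
    pl (l₁ ++ (s₂,t₂) :: l₂) x = pl ((s₂,t₂) :: l₂) x := by
  intro l₁
  induction l₁ with
  | nil => intro _ _ _ _ _ _; rfl
  | cons p l₁' ih =>
    rcases p with ⟨a, b⟩
    intro s₂ t₂ l₂ x h1 h2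
    have ha : a < x := h1 (a,b) (by simp)
    cases l₁' with
    | nil =>
      show pl ((a,b) :: (s₂,t₂) :: l₂) x = _
      rw [pl_cons2, if_neg (not_le.mpr ha), if_neg (not_le.mpr h2)]
    | cons q l₁'' =>
      rcases q with ⟨a2, b2⟩
      have ha2 : a2 < x := h1 (a2,b2) (by simp)
      show pl ((a,b) :: (a2,b2) :: (l₁'' ++ (s₂,t₂) :: l₂)) x = _
      rw [pl_cons2, if_neg (not_le.mpr ha), if_neg (not_le.mpr ha2)]
      exact ih (fun p hp => h1 p (by simp [hp])) h2

lemma pl_affine_seg {l₁ : List (ℚ × ℚ)} {s₁ t₁ s₂ t₂ x : ℚ}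
    (hsorted : SortedP (l₁ ++ [(s₁,t₁),(s₂,t₂)])) (h1 : s₁ < x) (h2 : x ≤ s₂) :
    pl (l₁ ++ [(s₁,t₁),(s₂,t₂)]) x = interpQ s₁ t₁ s₂ t₂ x := by
  have hall : ∀ p ∈ l₁, p.1 < x := by
    intro p hp
    have := (List.pairwise_append.mp hsorted.pairwise).2.2 p hp (s₁,t₁) (by simp)
    exact lt_trans this.1 h1
  rw [pl_skip l₁ hall h1, pl_cons2, if_neg (not_le.mpr h1), if_pos h2]

-- ## the construction from the word

def wsign (U : List (Fin 2 × Bool)) (j : ℕ) : Bool := (U.getD j (0, true)).2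
def wlet (U : List (Fin 2 × Bool)) (j : ℕ) : Fin 2 := (U.getD j (0, true)).1

def mQ (j : ℕ) : ℚ := -(2 + (j:ℚ))

lemma mQ_lt_mQ {a b : ℕ} (h : b < a) : mQ a < mQ b := by
  rw [mQ, mQ]
  have : (b:ℚ) < a := by exact_mod_cast h
  linarith

lemma mQ_le_mQ {a b : ℕ} (h : b ≤ a) : mQ a ≤ mQ b := by
  rcases eq_or_lt_of_le h with rfl | h2
  · exact le_refl _
  · exact le_of_lt (mQ_lt_mQ h2)

lemma mQ_le_neg2 (j : ℕ) : mQ j ≤ -2 := by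
  rw [show (-2 : ℚ) = mQ 0 by rw [mQ]; norm_num]
  exact mQ_le_mQ (Nat.zero_le j)

lemma mQ_neg (j : ℕ) : mQ j < 0 := lt_of_le_of_lt (mQ_le_neg2 j) (by norm_num)

def wpr (U : List (Fin 2 × Bool)) (j : ℕ) : ℚ × ℚ :=
  if wsign U j then (mQ j, mQ (j+1)) else (mQ (j+1), mQ j)

def walkPairs (U : List (Fin 2 × Bool)) (i : Fin 2) : List (ℚ × ℚ) :=
  ((List.range U.length).reverse).filterMap
    (fun j => if wlet U j = i then some (wpr U j) else none)

def ccQ (d i : Fin 2) : ℚ := if i = d then 7/2 else 3/2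

lemma ccQ_ge (d i : Fin 2) : 3/2 ≤ ccQ d i := by
  rw [ccQ]; split <;> norm_num

lemma ccQ_le (d i : Fin 2) : ccQ d i ≤ 7/2 := by
  rw [ccQ]; split <;> norm_num

def flist (d : Fin 2) (y : ℚ) (U : List (Fin 2 × Bool)) (i : Fin 2) : List (ℚ × ℚ) :=
  (walkPairs U i ++ (if i = d then [((-2 : ℚ), y)] else []))
    ++ [(0, ccQ d i), (4, ccQ d i + 1/2)]

lemma mem_walkPairs {U : List (Fin 2 × Bool)} {i : Fin 2} {j : ℕ}
    (hj : j < U.length) (hl : wlet U j = i) : wpr U j ∈ walkPairs U i := by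
  rw [walkPairs, List.mem_filterMap]
  exact ⟨j, by rw [List.mem_reverse, List.mem_range]; exact hj, by rw [if_pos hl]⟩

lemma wpr_src_le {U : List (Fin 2 × Bool)} (j : ℕ) : (wpr U j).1 ≤ -2 := by
  rw [wpr]; split
  · exact mQ_le_neg2 j
  · exact mQ_le_neg2 (j+1)

lemma wpr_tgt_le {U : List (Fin 2 × Bool)} (j : ℕ) : (wpr U j).2 ≤ -2 := by
  rw [wpr]; split
  · exact mQ_le_neg2 (j+1)
  · exact mQ_le_neg2 j

lemma wpr_ltP {U : List (Fin 2 × Bool)}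
    (HU1 : ∀ j, j + 1 < U.length → wlet U j = wlet U (j+1) → wsign U j = wsign U (j+1))
    {a b : ℕ} (ha : a < U.length) (hab : b < a) (hlet : wlet U b = wlet U a) :
    ltP (wpr U a) (wpr U b) := by
  have hsucc : b + 1 = a → wsign U b = wsign U a := by
    intro hba
    have := HU1 b (by omega) (by rw [hba]; exact hlet)
    rwa [hba] at this
  rcases hsa : wsign U a <;> rcases hsb : wsign U b <;>
    simp only [wpr, hsa, hsb, Bool.false_eq_true, if_false, if_true]
  · exact ⟨mQ_lt_mQ (by omega), mQ_lt_mQ (by omega)⟩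
  · -- sign a = false, sign b = true : tight case is target
    have hne : b + 1 ≠ a := by
      intro hba
      have h2 := hsucc hba
      rw [hsb, hsa] at h2
      exact absurd h2 (by simp)
    exact ⟨mQ_lt_mQ (by omega), mQ_lt_mQ (by omega)⟩
  · -- sign a = true, sign b = false : tight case is source
    have hne : b + 1 ≠ a := by
      intro hba
      have h2 := hsucc hba
      rw [hsb, hsa] at h2
      exact absurd h2 (by simp)
    exact ⟨mQ_lt_mQ (by omega), mQ_lt_mQ (by omega)⟩
  · exact ⟨mQ_lt_mQ (by omega), mQ_lt_mQ (by omega)⟩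

lemma flist_sorted (d : Fin 2) (y : ℚ) (U : List (Fin 2 × Bool))
    (hy0 : 0 ≤ y) (hy2 : y < 2)
    (HU1 : ∀ j, j + 1 < U.length → wlet U j = wlet U (j+1) → wsign U j = wsign U (j+1))
    (HU0 : 0 < U.length → ¬(wlet U 0 = d ∧ wsign U 0 = true))
    (i : Fin 2) : SortedP (flist d y U i) := by
  apply List.Pairwise.isChain
  rw [flist]
  have hwalk_mem : ∀ p ∈ walkPairs U i, ∃ j, j < U.length ∧ wlet U j = i ∧ p = wpr U j := by
    intro p hp
    rw [walkPairs, List.mem_filterMap] at hp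
    obtain ⟨j, hj1, hj2⟩ := hp
    rw [List.mem_reverse, List.mem_range] at hj1
    by_cases hc : wlet U j = i
    · rw [if_pos hc, Option.some_inj] at hj2
      exact ⟨j, hj1, hc, hj2.symm⟩
    · rw [if_neg hc] at hj2
      simp at hj2
  have hsrc_lt_dive : i = d → ∀ j, j < U.length → wlet U j = i → (wpr U j).1 < -2 := by
    intro hid j hj hl
    rw [show (-2:ℚ) = mQ 0 by rw [mQ]; norm_num]
    rcases Nat.eq_zero_or_pos j with rfl | hpos
    · have hnot := HU0 (by omega)
      have hs : wsign U 0 = false := by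
        by_contra hcon
        exact hnot ⟨by rw [hl, hid], by simpa using hcon⟩
      rw [wpr, hs]
      simp only [Bool.false_eq_true, if_false]
      exact mQ_lt_mQ (by omega)
    · rw [wpr]
      split
      · exact mQ_lt_mQ (by omega)
      · exact mQ_lt_mQ (by omega)
  apply List.pairwise_append.mpr
  refine ⟨?_, ?_, ?_⟩
  · apply List.pairwise_append.mpr
    refine ⟨?_, ?_, ?_⟩
    · -- within walkPairs
      rw [walkPairs, List.pairwise_filterMap]
      have hrange : List.Pairwise (fun a b => b < a ∧ a < U.length)
          (List.range U.length).reverse := by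
        rw [List.pairwise_reverse]
        apply List.Pairwise.imp_of_mem ?_ List.pairwise_lt_range
        intro a b _ hb hab
        exact ⟨hab, List.mem_range.mp hb⟩
      apply List.Pairwise.imp_of_mem ?_ hrange
      intro a b _ _ hab p hp q hq
      by_cases hca : wlet U a = i
      · rw [if_pos hca] at hp
        simp only [Option.some_inj] at hp
        by_cases hcb : wlet U b = i
        · rw [if_pos hcb] at hq
          simp only [Option.some_inj] at hq
          subst hp; subst hq
          exact wpr_ltP HU1 hab.2 hab.1 (by rw [hca, hcb])
        · rw [if_neg hcb] at hq
          simp at hq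
      · rw [if_neg hca] at hp
        simp at hp
    · -- within dive part
      by_cases hc : i = d
      · rw [if_pos hc]
        exact List.pairwise_singleton _ _
      · rw [if_neg hc]
        exact List.Pairwise.nil
    · -- walkPairs vs dive part
      intro p hp q hq
      by_cases hc : i = d
      · rw [if_pos hc] at hq
        simp only [List.mem_singleton] at hq
        subst hq
        obtain ⟨j, hj, hl, rfl⟩ := hwalk_mem p hp
        refine ⟨hsrc_lt_dive hc j hj hl, ?_⟩
        calc (wpr U j).2 ≤ -2 := wpr_tgt_le j
          _ < 0 := by norm_num
          _ ≤ y := hy0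
      · rw [if_neg hc] at hq
        simp at hq
  · -- within the last two
    refine List.pairwise_cons.mpr ⟨?_, List.pairwise_singleton _ _⟩
    intro q hq
    simp only [List.mem_singleton] at hq
    subst hq
    exact ⟨by norm_num, by norm_num⟩
  · -- first part vs last two
    intro p hp q hq
    have hq' : q = ((0:ℚ), ccQ d i) ∨ q = ((4:ℚ), ccQ d i + 1/2) := by simpa using hq
    have hcc := ccQ_ge d i
    have hp' : p.1 ≤ -2 ∧ p.2 < ccQ d i := by
      rcases List.mem_append.mp hp with h | h
      · obtain ⟨j, hj, hl, rfl⟩ := hwalk_mem p h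
        exact ⟨wpr_src_le j, lt_of_le_of_lt (wpr_tgt_le j) (by linarith)⟩
      · by_cases hc : i = d
        · rw [if_pos hc] at h
          simp only [List.mem_singleton] at h
          subst h
          refine ⟨le_refl _, ?_⟩
          show y < ccQ d i
          rw [hc, ccQ, if_pos rfl]
          linarith
        · rw [if_neg hc] at h
          simp at h
    rcases hq' with rfl | rfl
    · refine ⟨?_, ?_⟩
      · show p.1 < (0:ℚ)
        linarith [hp'.1]
      · show p.2 < ccQ d i
        linarith [hp'.2]
    · refine ⟨?_, ?_⟩
      · show p.1 < (4:ℚ)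
        linarith [hp'.1]
      · show p.2 < ccQ d i + 1/2
        linarith [hp'.2]


-- ## evaluation of the interpolated automorphisms

lemma mQ_zero : mQ 0 = -2 := by rw [mQ]; norm_num

section eval

variable {d : Fin 2} {y : ℚ} {U : List (Fin 2 × Bool)}

lemma flist_eval_zero (i : Fin 2) (hs : SortedP (flist d y U i)) :
    pl (flist d y U i) 0 = ccQ d i := by
  apply pl_eval _ hs
  rw [flist]
  simp

lemma flist_eval_seg (i : Fin 2) (hs : SortedP (flist d y U i)) {x : ℚ}
    (h0 : 0 ≤ x) (h4 : x < 4) :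
    pl (flist d y U i) x = x/8 + ccQ d i := by
  rcases eq_or_lt_of_le h0 with he | hpos
  · rw [← he, flist_eval_zero i hs]
    norm_num
  · rw [flist] at hs ⊢
    rw [pl_affine_seg hs hpos (le_of_lt h4), interpQ]
    ring

lemma flist_eval_dive (hs : SortedP (flist d y U d)) :
    pl (flist d y U d) (-2) = y := by
  apply pl_eval _ hs
  rw [flist]
  apply List.mem_append.mpr
  left
  apply List.mem_append.mpr
  right
  rw [if_pos rfl]
  simp

lemma flist_eval_walk (i : Fin 2) (hs : SortedP (flist d y U i)) {j : ℕ}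
    (hj : j < U.length) (hl : wlet U j = i) :
    pl (flist d y U i) ((wpr U j).1) = (wpr U j).2 := by
  apply pl_eval _ hs
  rw [flist]
  apply List.mem_append.mpr
  left
  apply List.mem_append.mpr
  left
  have := mem_walkPairs hj hl
  rwa [← Prod.mk.eta (p := wpr U j)] at this

end eval

-- ## the action and the path

def actP (F : Fin 2 → ℚ ≃o ℚ) (p : Fin 2 × Bool) (x : ℚ) : ℚ :=
  if p.2 then F p.1 x else (F p.1).symm x

lemma phi_eval (F : Fin 2 → ℚ ≃o ℚ) :
    ∀ (L : List (Fin 2 × Bool)) (x : ℚ),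
    (FreeGroup.lift F) (FreeGroup.mk L) x = L.foldr (actP F) x := by
  intro L
  induction L with
  | nil =>
    intro x
    show (FreeGroup.lift F) 1 x = x
    rw [map_one, one_apply_Q]
  | cons p L' ih =>
    intro x
    have hsplit : FreeGroup.mk (p :: L') = FreeGroup.mk [p] * FreeGroup.mk L' := by
      rw [FreeGroup.mul_mk]
      rfl
    rw [hsplit, map_mul, mul_apply_Q, ih]
    show (FreeGroup.lift F) (FreeGroup.mk [p]) _ = actP F p _
    rcases p with ⟨i, b⟩
    cases b
    · have : FreeGroup.mk [(i, false)] = (FreeGroup.of i)⁻¹ := by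
        show FreeGroup.mk [(i, false)] = (FreeGroup.mk [(i, true)])⁻¹
        rw [FreeGroup.inv_mk]
        rfl
      rw [this, map_inv, FreeGroup.lift_apply_of, inv_apply_Q]
      rfl
    · show (FreeGroup.lift F) (FreeGroup.of i) _ = _
      rw [FreeGroup.lift_apply_of]
      rfl

def yval (d : Fin 2) (V : List (Fin 2 × Bool)) : ℚ :=
  V.foldl (fun z p => z/8 + ccQ d p.1) 0

lemma ybounds (d : Fin 2) :
    ∀ (V : List (Fin 2 × Bool)) (x : ℚ), 0 ≤ x → x < 4 →
    0 ≤ V.foldl (fun z p => z/8 + ccQ d p.1) x ∧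
      V.foldl (fun z p => z/8 + ccQ d p.1) x < 4 := by
  intro V
  induction V with
  | nil => intro x h0 h4; exact ⟨h0, h4⟩
  | cons p V' ih =>
    intro x h0 h4
    rw [List.foldl_cons]
    apply ih
    · have := ccQ_ge d p.1
      linarith
    · have := ccQ_le d p.1
      linarith

lemma vfold (F : Fin 2 → ℚ ≃o ℚ) (d : Fin 2)
    (hF : ∀ i x, 0 ≤ x → x < 4 → F i x = x/8 + ccQ d i) :
    ∀ (V : List (Fin 2 × Bool)), (∀ p ∈ V, p.2 = true) → ∀ x, 0 ≤ x → x < 4 →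
    V.foldl (fun z p => actP F p z) x = V.foldl (fun z p => z/8 + ccQ d p.1) x := by
  intro V
  induction V with
  | nil => intro _ x _ _; rfl
  | cons p V' ih =>
    intro hV x h0 h4
    rw [List.foldl_cons, List.foldl_cons]
    have hp2 : p.2 = true := hV p (by simp)
    have hstep : actP F p x = x/8 + ccQ d p.1 := by
      rw [actP, hp2, if_pos rfl]
      exact hF p.1 x h0 h4
    rw [hstep]
    apply ih (fun q hq => hV q (by simp [hq]))
    · have := ccQ_ge d p.1
      linarith
    · have := ccQ_le d p.1
      linarith

lemma yval_lt_two {d : Fin 2} {V : List (Fin 2 × Bool)}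
    (hlast : V = [] ∨ ∃ V' q, V = V' ++ [q] ∧ q.1 ≠ d) : yval d V < 2 := by
  rcases hlast with rfl | ⟨V', q, rfl, hq⟩
  · rw [yval]
    norm_num
  · rw [yval, List.foldl_concat]
    have hb := ybounds d V' 0 (le_refl _) (by norm_num)
    have hc : ccQ d q.1 = 3/2 := by rw [ccQ, if_neg hq]
    rw [hc]
    set z := V'.foldl (fun z p => z/8 + ccQ d p.1) 0
    obtain ⟨h1, h2⟩ := hb
    linarith

lemma getD_mid {α : Type*} : ∀ (s : List α) (p : α) (t : List α) (z : α),
    (s ++ p :: t).getD s.length z = p := by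
  intro s
  induction s with
  | nil => intro p t z; rfl
  | cons a s' ih => intro p t z; exact ih p t z

lemma ufold (F : Fin 2 → ℚ ≃o ℚ) (U : List (Fin 2 × Bool))
    (heval : ∀ j, j < U.length →
      (wsign U j = true → F (wlet U j) (mQ j) = mQ (j+1)) ∧
      (wsign U j = false → (F (wlet U j)).symm (mQ j) = mQ (j+1))) :
    ∀ (t s : List (Fin 2 × Bool)), U = s ++ t →
    t.foldl (fun z p => actP F p z) (mQ s.length) = mQ U.length := by
  intro t
  induction t with
  | nil =>
    intro s hs
    rw [List.foldl_nil, hs]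
    simp
  | cons p t' ih =>
    intro s hs
    rw [List.foldl_cons]
    have hj : s.length < U.length := by
      rw [hs, List.length_append]
      simp
    have hp1 : wlet U s.length = p.1 := by
      rw [wlet, hs, getD_mid]
    have hp2 : wsign U s.length = p.2 := by
      rw [wsign, hs, getD_mid]
    have hstep : actP F p (mQ s.length) = mQ (s.length + 1) := by
      rcases hb : p.2
      · rw [actP, hb, if_neg (by simp)]
        rw [← hp1]
        exact (heval s.length hj).2 (by rw [hp2, hb])
      · rw [actP, hb, if_pos rfl, ← hp1]
        exact (heval s.length hj).1 (by rw [hp2, hb])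
    rw [hstep]
    have := ih (s ++ [p]) (by rw [hs]; simp)
    rwa [List.length_append, List.length_singleton] at this

-- ## reducedness transport

lemma red_reverse {L : List (Fin 2 × Bool)} (h : Red L) : Red L.reverse := by
  rw [Red, List.Chain', List.isChain_reverse]
  apply List.IsChain.imp ?_ h
  intro p q hpq
  intro e
  exact (hpq e.symm).symm

lemma chainsym {L : List (Fin 2 × Bool)} (h : Red L) :
    ∀ j, j + 1 < L.length →
      ((L.getD j (0,true)).1 = (L.getD (j+1) (0,true)).1 →
        (L.getD j (0,true)).2 = (L.getD (j+1) (0,true)).2) := by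
  intro j hj
  rw [List.getD_eq_getElem _ _ (by omega), List.getD_eq_getElem _ _ (by omega)]
  have := List.isChain_iff_getElem.mp h j (by omega)
  simpa [List.get_eq_getElem] using this

end LOrd

open LOrd

/-- For every nonempty reduced word `W` in two letters carrying both positive and
negative exponents, the free group `F₂ = ⟨a,b⟩` admits a left-order (given by its
positive cone `P`) with `a ≻ 1`, `b ≻ 1`, and `W(a,b) ≺ 1`; in particular, a left-order
that is not a `W`-order. -/
theorem exists_left_order_violating_word
    (w : FreeGroup (Fin 2)) (hw : w ≠ 1) (hsigns : HasBothSigns w) :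
    ∃ P : FreeGroup (Fin 2) → Bool, IsLeftOrderCone P ∧
      P (FreeGroup.of 0) = true ∧ P (FreeGroup.of 1) = true ∧ P w⁻¹ = true ∧
      ¬ IsWOrder w P := by

  classical
  obtain ⟨-, hneg⟩ := hsigns
  set LW := w.toWord with hLW
  have hRedLW : Red LW := red_toWord w
  set R : List (Fin 2 × Bool) := LW.reverse with hR
  have hRedR : Red R := red_reverse hRedLW
  have hex : ∃ p ∈ R, (fun p : Fin 2 × Bool => !p.2) p = true := by
    obtain ⟨x, hx⟩ := hneg
    exact ⟨(x, false), List.mem_reverse.mpr hx, rfl⟩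
  set k := R.findIdx (fun p => !p.2) with hk
  have hkR : k < R.length := List.findIdx_lt_length_of_exists hex
  have hsnd : (R[k]'hkR).2 = false := by
    have := List.findIdx_getElem (w := hkR)
    simpa using this
  have hbef : ∀ j (hj : j < k), (R[j]'(by omega)).2 = true := by
    intro j hj
    have := List.not_of_lt_findIdx (p := fun p : Fin 2 × Bool => !p.2) (xs := R) hj
    simpa using this
  set d : Fin 2 := (R[k]'hkR).1 with hd
  set V := R.take k with hV
  set U := R.drop (k+1) with hU
  have hVlen : V.length = k := by
    rw [hV, List.length_take]
    omega
  have hUlen : U.length = R.length - (k+1) := by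
    rw [hU, List.length_drop]
  have hUR : ∀ j, j < U.length → U.getD j (0,true) = R.getD (k+1+j) (0,true) := by
    intro j hj
    rw [List.getD_eq_getElem _ _ hj, List.getD_eq_getElem _ _ (by omega)]
    exact List.getElem_drop
  have HU1 : ∀ j, j + 1 < U.length → wlet U j = wlet U (j+1) → wsign U j = wsign U (j+1) := by
    intro j hj
    have e1 := hUR j (by omega)
    have e2 := hUR (j+1) (by omega)
    have e3 : k+1+(j+1) = (k+1+j)+1 := rfl
    rw [e3] at e2
    rw [wlet, wlet, wsign, wsign, e1, e2]
    exact chainsym hRedR (k+1+j) (by omega)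
  have hgetDk : R.getD k (0, true) = (R[k]'hkR) := List.getD_eq_getElem _ _ hkR
  have HU0 : 0 < U.length → ¬(wlet U 0 = d ∧ wsign U 0 = true) := by
    rintro h0 ⟨h1, h2⟩
    have e1 := hUR 0 (by omega)
    have hadj := chainsym hRedR k (by omega)
    rw [hgetDk] at hadj
    rw [wlet, e1] at h1
    rw [wsign, e1] at h2
    have : (R[k]'hkR).2 = (R.getD (k+1+0) (0,true)).2 := hadj (by rw [h1, hd])
    rw [hsnd, h2] at this
    exact Bool.noConfusion this
  have HV : ∀ p ∈ V, p.2 = true := by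
    intro p hp
    obtain ⟨m, hm, he⟩ := List.mem_iff_getElem.mp hp
    have hmk : m < k := by omega
    have h2 : V[m]'hm = R[m]'(by omega) := List.getElem_take
    rw [← he, h2]
    exact hbef m hmk
  have hdecomp : R = V ++ (R[k]'hkR) :: U := by
    rw [hV, hU]
    conv_lhs => rw [← List.take_append_drop k R]
    congr 1
    exact List.drop_eq_getElem_cons hkR
  have hsplit := List.isChain_append.mp (by rw [← hdecomp]; exact hRedR)
  have Hlast : V = [] ∨ ∃ V' q, V = V' ++ [q] ∧ q.1 ≠ d := by
    rcases List.eq_nil_or_concat V with h | ⟨V', q, hq⟩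
    · exact Or.inl h
    · right
      have hq' : V = V' ++ [q] := by rw [hq, List.concat_eq_append]
      refine ⟨V', q, hq', ?_⟩
      intro hqd
      have hlq : q ∈ V.getLast? := Option.mem_def.mpr (by rw [hq']; exact List.getLast?_concat)
      have hhd : (R[k]'hkR) ∈ ((R[k]'hkR) :: U).head? := Option.mem_def.mpr rfl
      have hrel := hsplit.2.2 q hlq (R[k]'hkR) hhd
      have hq2 : q.2 = true := HV q (by rw [hq']; simp)
      have hcon := hrel (by rw [hqd, hd])
      rw [hq2, hsnd] at hcon
      exact Bool.noConfusion hcon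
  have hyb := ybounds d V 0 le_rfl (by norm_num)
  set y := yval d V with hyeq
  have hy0 : 0 ≤ y := hyb.1
  have hy4 : y < 4 := hyb.2
  have hy2 : y < 2 := yval_lt_two Hlast
  have hs : ∀ i, SortedP (flist d y U i) := flist_sorted d y U hy0 hy2 HU1 HU0
  set F : Fin 2 → ℚ ≃o ℚ := fun i => mkIsoQ _ (hs i) with hF
  have hFdef : ∀ i, F i = mkIsoQ _ (hs i) := fun i => rfl
  set phi := FreeGroup.lift F with hphi
  have hFeval : ∀ i x, 0 ≤ x → x < 4 → F i x = x/8 + ccQ d i := by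
    intro i x h0 h4
    rw [hFdef i, mkIsoQ_apply]
    exact flist_eval_seg i (hs i) h0 h4
  have hF0 : ∀ i, F i 0 = ccQ d i := by
    intro i
    rw [hFeval i 0 le_rfl (by norm_num)]
    norm_num
  have hFdive : (F d).symm y = -2 := by
    rw [hFdef d]
    exact mkIsoQ_symm_apply _ _ (flist_eval_dive (hs d))
  have hwalk : ∀ j, j < U.length →
      (wsign U j = true → F (wlet U j) (mQ j) = mQ (j+1)) ∧
      (wsign U j = false → (F (wlet U j)).symm (mQ j) = mQ (j+1)) := by
    intro j hj
    constructor
    · intro hsg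
      have hev := flist_eval_walk (wlet U j) (hs _) hj rfl
      simp only [wpr, hsg, if_true] at hev
      rw [hFdef, mkIsoQ_apply]
      exact hev
    · intro hsg
      have hev := flist_eval_walk (wlet U j) (hs _) hj rfl
      simp only [wpr, hsg, Bool.false_eq_true, if_false] at hev
      rw [hFdef]
      exact mkIsoQ_symm_apply _ _ hev
  have hfold : phi w 0 = mQ U.length := by
    have h1 : phi w 0 = LW.foldr (actP F) 0 := by
      conv_lhs => rw [hphi, ← FreeGroup.mk_toWord (x := w)]
      exact phi_eval F LW 0
    have h2 : LW.foldr (actP F) 0 = R.foldl (fun x p => actP F p x) 0 := by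
      conv_lhs => rw [show LW = R.reverse by rw [hR, List.reverse_reverse]]
      exact List.foldr_reverse
    rw [h1, h2, hdecomp, List.foldl_append, List.foldl_cons]
    have hv : V.foldl (fun x p => actP F p x) 0 = y := by
      rw [vfold F d hFeval V HV 0 le_rfl (by norm_num), hyeq]
      rfl
    rw [hv]
    have hRk : (R[k]'hkR) = (d, false) := by
      rw [Prod.ext_iff]
      exact ⟨rfl, hsnd⟩
    rw [hRk]
    have hdive : actP F (d, false) y = mQ 0 := by
      rw [actP]
      simp only [Bool.false_eq_true, if_false]
      rw [mQ_zero]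
      exact hFdive
    rw [hdive]
    exact ufold F U hwalk U [] rfl
  have hW0 : phi w 0 < 0 := by
    rw [hfold]
    exact mQ_neg _
  have hphine : phi w ≠ 1 := by
    intro he
    rw [he, one_apply_Q] at hW0
    exact lt_irrefl _ hW0
  -- the positive cone
  set Pp : FreeGroup (Fin 2) → Prop :=
    fun u => (phi u ≠ 1 ∧ Cp (phi u)) ∨ (phi u = 1 ∧ Bpos u) with hPp
  have hof : ∀ i : Fin 2, phi (FreeGroup.of i) = F i := fun i => by
    rw [hphi, FreeGroup.lift_apply_of]
  have hPpa : Pp (FreeGroup.of 0) := by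
    have hup : Cp (phi (FreeGroup.of 0)) := by
      rw [hof]
      exact Cp_of_up (F 0) (by rw [hF0]; linarith [ccQ_ge d 0])
    exact Or.inl ⟨hup.1, hup⟩
  have hPpb : Pp (FreeGroup.of 1) := by
    have hup : Cp (phi (FreeGroup.of 1)) := by
      rw [hof]
      exact Cp_of_up (F 1) (by rw [hF0]; linarith [ccQ_ge d 1])
    exact Or.inl ⟨hup.1, hup⟩
  have hPpwinv : Pp w⁻¹ := by
    have hinvup : (0:ℚ) < (phi w)⁻¹ 0 := by
      by_contra hle
      push_neg at hle
      have h0 : (phi w) ((phi w)⁻¹ 0) = 0 := by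
        rw [inv_apply_Q, OrderIso.apply_symm_apply]
      have hmono := (phi w).monotone hle
      rw [h0] at hmono
      linarith
    have hCp : Cp (phi w⁻¹) := by
      rw [map_inv]
      exact Cp_of_up _ hinvup
    exact Or.inl ⟨hCp.1, hCp⟩
  have hPpw : ¬ Pp w := by
    rintro (⟨-, hCw⟩ | ⟨he, -⟩)
    · exact not_Cp_of_down (phi w) hW0 hCw
    · exact hphine he
  refine ⟨fun u => @ite Bool (Pp u) (Classical.propDecidable _) true false, ⟨?_, ?_, ?_⟩,
    by exact if_pos hPpa, by exact if_pos hPpb, by exact if_pos hPpwinv, ?_⟩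
  · -- closure under multiplication
    intro a b ha hb
    have ha' : Pp a := by
      by_contra hcon
      have ha2 : (@ite Bool (Pp a) (Classical.propDecidable _) true false) = true := ha
      rw [if_neg hcon] at ha2
      exact Bool.noConfusion ha2
    have hb' : Pp b := by
      by_contra hcon
      have hb2 : (@ite Bool (Pp b) (Classical.propDecidable _) true false) = true := hb
      rw [if_neg hcon] at hb2
      exact Bool.noConfusion hb2
    show (@ite Bool (Pp (a * b)) (Classical.propDecidable _) true false) = true
    apply if_pos
    rcases ha' with ⟨hna, hca⟩ | ⟨hea, hba⟩ <;> rcases hb' with ⟨hnb, hcb⟩ | ⟨heb, hbb⟩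
    · left
      have hc := Cp_mul hca hcb
      rw [map_mul]
      exact ⟨hc.1, hc⟩
    · left
      rw [map_mul, heb, mul_one]
      exact ⟨hna, hca⟩
    · left
      rw [map_mul, hea, one_mul]
      exact ⟨hnb, hcb⟩
    · right
      rw [map_mul, hea, heb, mul_one]
      exact ⟨rfl, Bpos_mul hba hbb⟩
  · -- 1 is not positive
    show (@ite Bool (Pp 1) (Classical.propDecidable _) true false) = false
    apply if_neg
    rintro (⟨hn, -⟩ | ⟨-, hB⟩)
    · exact hn (map_one phi)
    · exact Bpos_one_false hB
  · -- trichotomy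
    intro g hg
    show (@ite Bool (Pp g) (Classical.propDecidable _) true false) = true
      ↔ (@ite Bool (Pp g⁻¹) (Classical.propDecidable _) true false) = false
    have hiff : Pp g ↔ ¬ Pp g⁻¹ := by
      by_cases hphig : phi g = 1
      · have h2 : phi g⁻¹ = 1 := by rw [map_inv, hphig, inv_one]
        constructor
        · rintro (⟨hn, -⟩ | ⟨-, hB⟩)
          · exact absurd hphig hn
          · rintro (⟨hn', -⟩ | ⟨-, hB'⟩)
            · exact hn' h2
            · exact (Bpos_inv hg).mp hB hB'
        · intro hnot
          right
          refine ⟨hphig, ?_⟩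
          by_contra hnB
          apply hnot
          right
          refine ⟨h2, ?_⟩
          by_contra hnB'
          exact hnB ((Bpos_inv hg).mpr hnB')
      · have h2 : phi g⁻¹ ≠ 1 := by
          rw [map_inv]
          exact inv_ne_one.mpr hphig
        constructor
        · rintro (⟨-, hC⟩ | ⟨he, -⟩)
          · rintro (⟨-, hC'⟩ | ⟨he', -⟩)
            · rw [map_inv] at hC'
              exact (Cp_inv hphig).mp hC hC'
            · exact h2 he'
          · exact absurd he hphig
        · intro hnot
          left
          refine ⟨hphig, ?_⟩
          by_contra hnC
          have hC' : Cp ((phi g)⁻¹) := by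
            by_contra hnC'
            exact hnC ((Cp_inv hphig).mpr hnC')
          exact hnot (Or.inl ⟨h2, by rw [map_inv]; exact hC'⟩)
    by_cases h : Pp g
    · rw [if_pos h, if_neg (hiff.mp h)]
      simp
    · have h2 : Pp g⁻¹ := by
        by_contra h'
        exact h (hiff.mpr h')
      rw [if_neg h, if_pos h2]
      simp
  · -- not a W-order
    intro hIs
    have hab : FreeGroup.lift ![FreeGroup.of 0, FreeGroup.of 1] w = w := by
      have hh : (FreeGroup.lift ![FreeGroup.of 0, FreeGroup.of 1] :
          FreeGroup (Fin 2) →* FreeGroup (Fin 2)) = MonoidHom.id _ := by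
        apply FreeGroup.ext_hom
        intro a
        fin_cases a <;> simp [FreeGroup.lift_apply_of]
      rw [hh]
      rfl
    have h1 := hIs (FreeGroup.of 0) (FreeGroup.of 1)
      (by exact if_pos hPpa) (by exact if_pos hPpb)
    rw [hab] at h1
    have h1' : (@ite Bool (Pp w) (Classical.propDecidable _) true false) = true := h1
    rw [if_neg hPpw] at h1'
    exact Bool.noConfusion h1'
end

section
/- The group Diff^ω_+([0,1]) is residually solvable: for every element f ≠ id of Diff^ω_+([0,1]) there exist a solvable group S and a group homomorphism φ : Diff^ω_+([0,1]) → S with φ(f) ≠ 1. -/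
open Filter Asymptotics Set Topology

noncomputable section
namespace RSAux

abbrev II := (Set.Icc (0:ℝ) 1)
abbrev OI := (↥II) ≃o (↥II)

lemma OI_mul_apply (σ τ : OI) (x : ↥II) : (σ * τ) x = σ (τ x) := rfl
lemma OI_inv_apply (σ : OI) (x : ↥II) : σ⁻¹ x = σ.symm x := rfl
lemma OI_one_apply (x : ↥II) : (1 : OI) x = x := rfl

def zz : ↥II := ⟨0, by constructor <;> norm_num⟩

lemma zz_le (y : ↥II) : zz ≤ y := Subtype.mk_le_mk.2 y.2.1

lemma sigma_zz (σ : OI) : σ zz = zz := by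
  have h1 : σ zz ≤ zz := by
    conv_rhs => rw [show zz = σ (σ.symm zz) from (σ.apply_symm_apply zz).symm]
    exact σ.monotone (zz_le _)
  exact le_antisymm h1 (zz_le _)

def Agrees (σ : OI) (F : ℝ → ℝ) : Prop := ∀ x : ↥II, ((σ x : ↥II) : ℝ) = F ↑x

lemma Agrees.f_zero {σ : OI} {F : ℝ → ℝ} (h : Agrees σ F) : F 0 = 0 := by
  have := h zz
  rw [sigma_zz] at this
  simpa [zz] using this.symm

def Triv (σ : OI) (n : ℕ) : Prop :=
  ∃ F, AnalyticAt ℝ F 0 ∧ Agrees σ F ∧ (fun x => F x - x) =o[𝓝 (0:ℝ)] fun x : ℝ => x ^ n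

/-- Two analytic-at-0 functions agreeing with the same order iso on `[0,1]` are
eventually equal near `0`. -/
lemma agrees_eventuallyEq {σ : OI} {F₁ F₂ : ℝ → ℝ} (h₁ : AnalyticAt ℝ F₁ 0)
    (h₂ : AnalyticAt ℝ F₂ 0) (a₁ : Agrees σ F₁) (a₂ : Agrees σ F₂) :
    F₁ =ᶠ[𝓝 (0:ℝ)] F₂ := by
  have hfreq : ∃ᶠ z in 𝓝[≠] (0:ℝ), F₁ z = F₂ z := by
    have hu : Tendsto (fun m : ℕ => (1:ℝ) / (m + 1)) atTop (𝓝[≠] (0:ℝ)) := by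
      apply tendsto_nhdsWithin_of_tendsto_nhds_of_eventually_within
      · exact tendsto_one_div_add_atTop_nhds_zero_nat
      · filter_upwards with m
        have : (0:ℝ) < 1 / (m + 1) := by positivity
        exact ne_of_gt this
    apply hu.frequently
    apply Filter.Frequently.of_forall
    intro m
    have hm : (1:ℝ) / (m + 1) ∈ II := by
      constructor
      · positivity
      · rw [div_le_one (by positivity)]; linarith [(Nat.cast_nonneg m : (0:ℝ) ≤ m)]
    have e1 := a₁ ⟨_, hm⟩
    have e2 := a₂ ⟨_, hm⟩
    simp only at e1 e2
    rw [← e1, ← e2]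
  exact (h₁.frequently_eq_iff_eventually_eq h₂).1 hfreq

-- powers comparison at 0
lemma pow_littleO {m k : ℕ} (h : k < m) :
    (fun x : ℝ => x ^ m) =o[𝓝 (0:ℝ)] fun x : ℝ => x ^ k := by
  have : (fun x : ℝ => x ^ m) = fun x : ℝ => x ^ (m - k) * x ^ k := by
    funext x; rw [← pow_add]; congr 1; omega
  rw [this]
  have h1 : (fun x : ℝ => x ^ (m - k)) =o[𝓝 (0:ℝ)] (fun _ : ℝ => (1:ℝ)) := by
    rw [isLittleO_one_iff]
    have h2 := (continuous_pow (m-k)).tendsto (0:ℝ)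
    rwa [zero_pow (show m - k ≠ 0 by omega)] at h2
  simpa using h1.mul_isBigO (isBigO_refl (fun x : ℝ => x ^ k) _)

lemma isBigO_norm_pow (n : ℕ) :
    (fun y : ℝ => ‖y‖ ^ n) =O[𝓝 (0:ℝ)] fun y : ℝ => y ^ n := by
  apply IsBigO.of_bound 1
  filter_upwards with y
  simp [abs_pow]

-- coefficient vanishing from littleO
lemma coeff_zero_of_littleO {h : ℝ → ℝ} {p : FormalMultilinearSeries ℝ ℝ ℝ}
    (hp : HasFPowerSeriesAt h p 0) {n : ℕ}
    (ho : (fun x => h x) =o[𝓝 (0:ℝ)] fun x : ℝ => x ^ n) :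
    ∀ j ≤ n, p.coeff j = 0 := by
  intro j hj
  induction j using Nat.strong_induction_on with
  | _ j ih =>
    have hps : ∀ y : ℝ, p.partialSum (j+1) y = p.coeff j * y ^ j := by
      intro y
      rw [FormalMultilinearSeries.partialSum]
      rw [Finset.sum_eq_single j]
      · simp [FormalMultilinearSeries.apply_eq_pow_smul_coeff, mul_comm]
      · intro k hk hkj
        have hk' : k < j + 1 := Finset.mem_range.1 hk
        have : p.coeff k = 0 := ih k (by omega) (by omega)
        simp [FormalMultilinearSeries.apply_eq_pow_smul_coeff, this]
      · intro hj'; simp at hj'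
    have hbig := hp.isBigO_sub_partialSum_pow (j+1)
    simp only [zero_add] at hbig
    have hbig' : (fun y : ℝ => h y - p.partialSum (j+1) y) =o[𝓝 (0:ℝ)] fun y : ℝ => y ^ j :=
      (hbig.trans (isBigO_norm_pow (j+1))).trans_isLittleO (pow_littleO (by omega))
    have ho' : (fun x => h x) =o[𝓝 (0:ℝ)] fun x : ℝ => x ^ j := by
      rcases Nat.eq_or_lt_of_le hj with rfl | hlt
      · exact ho
      · exact ho.trans_isBigO (pow_littleO hlt).isBigO
    have hcoeff : (fun y : ℝ => p.coeff j * y ^ j) =o[𝓝 (0:ℝ)] fun y : ℝ => y ^ j := by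
      have := ho'.sub hbig'
      simpa [hps] using this
    by_contra hc
    have hb := hcoeff.def (show (0:ℝ) < |p.coeff j| / 2 by positivity)
    rw [Filter.eventually_iff_exists_mem] at hb
    obtain ⟨s, hs, hbd⟩ := hb
    obtain ⟨ε, hε, hball⟩ := Metric.mem_nhds_iff.1 hs
    have hy : (ε/2) ∈ s := by
      apply hball
      simp only [Metric.mem_ball, dist_zero_right, Real.norm_eq_abs]
      rw [abs_of_pos (by linarith)]
      linarith
    have := hbd _ hy
    rw [norm_mul] at this
    have hyn : (0:ℝ) < ‖(ε/2 : ℝ)‖ ^ j := by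
      apply pow_pos
      simp only [Real.norm_eq_abs]
      rw [abs_of_pos (by linarith)]
      linarith
    rw [norm_pow] at this
    have hcp : (0:ℝ) < ‖p.coeff j‖ := norm_pos_iff.2 hc
    simp only [Real.norm_eq_abs] at this hyn hcp
    nlinarith

/-- Refinement: an analytic function which is `o(x^n)` is `a x^(n+1) + o(x^(n+1))`. -/
lemma exists_coeff {h : ℝ → ℝ} (ha : AnalyticAt ℝ h 0) {n : ℕ}
    (ho : (fun x => h x) =o[𝓝 (0:ℝ)] fun x : ℝ => x ^ n) :
    ∃ a : ℝ, (fun x => h x - a * x ^ (n+1)) =o[𝓝 (0:ℝ)] fun x : ℝ => x ^ (n+1) := by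
  obtain ⟨p, hp⟩ := ha
  refine ⟨p.coeff (n+1), ?_⟩
  have hz := coeff_zero_of_littleO hp ho
  have hps : ∀ y : ℝ, p.partialSum (n+2) y = p.coeff (n+1) * y ^ (n+1) := by
    intro y
    rw [FormalMultilinearSeries.partialSum, Finset.sum_eq_single (n+1)]
    · simp [FormalMultilinearSeries.apply_eq_pow_smul_coeff, mul_comm]
    · intro k hk hkj
      have hk' : k < n + 2 := Finset.mem_range.1 hk
      rw [FormalMultilinearSeries.apply_eq_pow_smul_coeff, hz k (by omega)]
      simp
    · intro hj'; simp at hj'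
  have hbig := hp.isBigO_sub_partialSum_pow (n+2)
  simp only [zero_add] at hbig
  have : (fun y : ℝ => h y - p.partialSum (n+2) y) =o[𝓝 (0:ℝ)] fun y : ℝ => y ^ (n+1) :=
    (hbig.trans (isBigO_norm_pow (n+2))).trans_isLittleO (pow_littleO (by omega))
  simpa [hps] using this

/-- All-orders flatness: analytic and `o(x^n)` for all `n` means eventually zero. -/
lemma eventually_zero_of_forall_littleO {h : ℝ → ℝ} (ha : AnalyticAt ℝ h 0)
    (ho : ∀ n : ℕ, (fun x => h x) =o[𝓝 (0:ℝ)] fun x : ℝ => x ^ n) :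
    ∀ᶠ x in 𝓝 (0:ℝ), h x = 0 := by
  obtain ⟨p, hp⟩ := ha
  have hz : p = 0 := by
    funext k; refine ContinuousMultilinearMap.ext (fun v => ?_)
    have hc : p.coeff k = 0 := coeff_zero_of_littleO hp (ho k) k le_rfl
    have hsm := (p k).map_smul_univ v (fun _ => (1:ℝ))
    have e : (fun i => v i • (1:ℝ)) = v := by funext i; simp
    rw [e] at hsm
    have : p k (fun _ => (1:ℝ)) = p.coeff k := rfl
    rw [this, hc] at hsm
    simp [hsm]
  rw [hz] at hp
  exact hp.eventually_eq_zero

-- analytic F with F 0 = 0 facts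
lemma tendsto_zero {F : ℝ → ℝ} (hF : AnalyticAt ℝ F 0) (h0 : F 0 = 0) :
    Tendsto F (𝓝 (0:ℝ)) (𝓝 (0:ℝ)) := by
  have := hF.continuousAt.tendsto
  rwa [h0] at this

lemma isBigO_id {F : ℝ → ℝ} (hF : AnalyticAt ℝ F 0) (h0 : F 0 = 0) :
    F =O[𝓝 (0:ℝ)] fun x : ℝ => x := by
  have := hF.differentiableAt.isBigO_sub
  simpa [h0] using this

lemma comp_littleO {h w : ℝ → ℝ} {n : ℕ}
    (hh : h =o[𝓝 (0:ℝ)] fun x : ℝ => x ^ n)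
    (hw : Tendsto w (𝓝 (0:ℝ)) (𝓝 (0:ℝ)))
    (hwO : w =O[𝓝 (0:ℝ)] fun x : ℝ => x) :
    (fun x => h (w x)) =o[𝓝 (0:ℝ)] fun x : ℝ => x ^ n :=
  (hh.comp_tendsto hw).trans_isBigO (hwO.pow n)

/-- transfer the `Triv` bound to any analytic representative -/
lemma Triv.rep {σ : OI} {n : ℕ} {F : ℝ → ℝ} (h : Triv σ n)
    (hFa : AnalyticAt ℝ F 0) (hag : Agrees σ F) :
    (fun x => F x - x) =o[𝓝 (0:ℝ)] fun x : ℝ => x ^ n := by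
  obtain ⟨F₀, h₀a, h₀g, h₀o⟩ := h
  refine h₀o.congr' ?_ EventuallyEq.rfl
  filter_upwards [agrees_eventuallyEq h₀a hFa h₀g hag] with x hx
  rw [hx]

lemma triv_mul {σ τ : OI} {n : ℕ} (hσ : Triv σ n) (hτ : Triv τ n) : Triv (σ * τ) n := by
  obtain ⟨F, Fa, Fg, Fo⟩ := hσ
  obtain ⟨T, Ta, Tg, To⟩ := hτ
  refine ⟨fun x => F (T x), ?_, ?_, ?_⟩
  · have : AnalyticAt ℝ F (T 0) := by rw [Tg.f_zero]; exact Fa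
    exact this.comp Ta
  · intro x
    rw [OI_mul_apply, Fg (τ x)]
    show F ↑(τ x) = F (T ↑x)
    rw [Tg x]
  · have t1 : (fun x => F (T x) - T x) =o[𝓝 (0:ℝ)] fun x : ℝ => x ^ n :=
      comp_littleO Fo (tendsto_zero Ta Tg.f_zero) (isBigO_id Ta Tg.f_zero)
    have := t1.add To
    refine this.congr' ?_ EventuallyEq.rfl
    filter_upwards with x; ring

lemma triv_inv {σ : OI} {n : ℕ} (h : Triv σ n) {Fi : ℝ → ℝ}
    (hFia : AnalyticAt ℝ Fi 0) (hFig : Agrees σ.symm Fi) : Triv σ⁻¹ n := by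
  obtain ⟨F, Fa, Fg, Fo⟩ := h
  have hFi0 : Fi 0 = 0 := hFig.f_zero
  have hFFi_a : AnalyticAt ℝ (fun x => F (Fi x)) 0 := by
    have : AnalyticAt ℝ F (Fi 0) := by rw [hFi0]; exact Fa
    exact this.comp hFia
  have hFFi_g : Agrees 1 (fun x => F (Fi x)) := by
    intro x
    rw [OI_one_apply]
    show (↑x : ℝ) = F (Fi ↑x)
    rw [show F (Fi ↑x) = F ↑(σ.symm x) by rw [← hFig x]]
    rw [← Fg (σ.symm x), σ.apply_symm_apply]
  have hid_g : Agrees 1 (fun x : ℝ => x) := fun x => by rw [OI_one_apply]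
  have e : (fun x => F (Fi x)) =ᶠ[𝓝 (0:ℝ)] fun x => x :=
    agrees_eventuallyEq hFFi_a analyticAt_id hFFi_g hid_g
  refine ⟨Fi, hFia, hFig, ?_⟩
  have t1 : (fun x => -(F (Fi x) - Fi x)) =o[𝓝 (0:ℝ)] fun x : ℝ => x ^ n :=
    (comp_littleO Fo (tendsto_zero hFia hFi0) (isBigO_id hFia hFi0)).neg_left
  refine t1.congr' ?_ EventuallyEq.rfl
  filter_upwards [e] with x hx
  rw [hx]; ring

/-- a locally-Lipschitz composition estimate -/
lemma lip_comp {T F : ℝ → ℝ} {n : ℕ} (hTa : AnalyticAt ℝ T 0)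
    (hFa : AnalyticAt ℝ F 0) (hF0 : F 0 = 0)
    (hFo : (fun x => F x - x) =o[𝓝 (0:ℝ)] fun x : ℝ => x ^ n) :
    (fun w => T (F w) - T w) =o[𝓝 (0:ℝ)] fun x : ℝ => x ^ n := by
  have hcd : ContDiffAt ℝ 1 T 0 := hTa.contDiffAt
  obtain ⟨K, t, ht, hlip⟩ := hcd.exists_lipschitzOnWith
  have hbig : (fun w => T (F w) - T w) =O[𝓝 (0:ℝ)] fun w => F w - w := by
    apply IsBigO.of_bound K
    have h1 : ∀ᶠ w in 𝓝 (0:ℝ), w ∈ t := ht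
    have h2 : ∀ᶠ w in 𝓝 (0:ℝ), F w ∈ t := (tendsto_zero hFa hF0).eventually ht
    filter_upwards [h1, h2] with w hw hFw
    have := hlip.dist_le_mul (x := F w) (y := w) hFw hw
    simpa [Real.dist_eq, Real.norm_eq_abs] using this
  exact hbig.trans_isLittleO hFo

lemma triv_conj {σ τ : OI} {n : ℕ} (hσ : Triv σ n) {T Ti : ℝ → ℝ}
    (hTa : AnalyticAt ℝ T 0) (hTg : Agrees τ T)
    (hTia : AnalyticAt ℝ Ti 0) (hTig : Agrees τ.symm Ti) :
    Triv (τ * σ * τ⁻¹) n := by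
  obtain ⟨F, Fa, Fg, Fo⟩ := hσ
  have hTi0 : Ti 0 = 0 := hTig.f_zero
  have hF0 : F 0 = 0 := Fg.f_zero
  have hFTi_a : AnalyticAt ℝ (fun x => F (Ti x)) 0 := by
    have : AnalyticAt ℝ F (Ti 0) := by rw [hTi0]; exact Fa
    exact this.comp hTia
  have hK_a : AnalyticAt ℝ (fun x => T (F (Ti x))) 0 := by
    have h3 : AnalyticAt ℝ F (Ti 0) := by rw [hTi0]; exact Fa
    have h2 : AnalyticAt ℝ T (F (Ti 0)) := by rw [hTi0, hF0]; exact hTa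
    have : AnalyticAt ℝ (T ∘ (F ∘ Ti)) 0 :=
      AnalyticAt.comp (f := F ∘ Ti) (x := 0) h2 (h3.comp hTia)
    exact this
  refine ⟨fun x => T (F (Ti x)), hK_a, ?_, ?_⟩
  · intro x
    rw [show (τ * σ * τ⁻¹) x = τ (σ (τ.symm x)) from rfl]
    rw [hTg (σ (τ.symm x))]
    show T ↑(σ (τ.symm x)) = T (F (Ti ↑x))
    rw [Fg (τ.symm x)]
    show T (F ↑(τ.symm x)) = T (F (Ti ↑x))
    rw [hTig x]
  · -- T (F (Ti x)) - x = [T (F (Ti x)) - T (Ti x)] + [T (Ti x) - x]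
    have hD : (fun w => T (F w) - T w) =o[𝓝 (0:ℝ)] fun x : ℝ => x ^ n :=
      lip_comp hTa Fa hF0 Fo
    have t1 : (fun x => T (F (Ti x)) - T (Ti x)) =o[𝓝 (0:ℝ)] fun x : ℝ => x ^ n :=
      comp_littleO hD (tendsto_zero hTia hTi0) (isBigO_id hTia hTi0)
    -- T ∘ Ti agrees with identity
    have hTTi_a : AnalyticAt ℝ (fun x => T (Ti x)) 0 := by
      have : AnalyticAt ℝ T (Ti 0) := by rw [hTi0]; exact hTa
      exact this.comp hTia
    have hTTi_g : Agrees 1 (fun x => T (Ti x)) := by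
      intro x
      rw [OI_one_apply]
      show (↑x : ℝ) = T (Ti ↑x)
      rw [show T (Ti ↑x) = T ↑(τ.symm x) by rw [← hTig x]]
      rw [← hTg (τ.symm x), τ.apply_symm_apply]
    have e : (fun x => T (Ti x)) =ᶠ[𝓝 (0:ℝ)] fun x => x :=
      agrees_eventuallyEq hTTi_a analyticAt_id hTTi_g (fun x => by rw [OI_one_apply])
    refine t1.congr' ?_ EventuallyEq.rfl
    filter_upwards [e] with x hx
    have hx' : T (Ti x) = x := hx
    show T (F (Ti x)) - T (Ti x) = T (F (Ti x)) - x
    rw [hx']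

/-- eventual identity for inverse representatives -/
lemma inv_eventuallyEq {σ : OI} {F Fi : ℝ → ℝ}
    (Fa : AnalyticAt ℝ F 0) (Fg : Agrees σ F)
    (hFia : AnalyticAt ℝ Fi 0) (hFig : Agrees σ.symm Fi) :
    (fun y => F (Fi y)) =ᶠ[𝓝 (0:ℝ)] fun y => y := by
  have hFi0 : Fi 0 = 0 := hFig.f_zero
  have hFFi_a : AnalyticAt ℝ (fun x => F (Fi x)) 0 := by
    have : AnalyticAt ℝ F (Fi 0) := by rw [hFi0]; exact Fa
    exact this.comp hFia
  have hFFi_g : Agrees 1 (fun x => F (Fi x)) := by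
    intro x
    rw [OI_one_apply]
    show (↑x : ℝ) = F (Fi ↑x)
    rw [show F (Fi ↑x) = F ↑(σ.symm x) by rw [← hFig x]]
    rw [← Fg (σ.symm x), σ.apply_symm_apply]
  exact agrees_eventuallyEq hFFi_a analyticAt_id hFFi_g (fun x => by rw [OI_one_apply])

lemma comp_expand {F T : ℝ → ℝ} {m : ℕ} {a b : ℝ}
    (Ta : AnalyticAt ℝ T 0) (hT0 : T 0 = 0)
    (ha : (fun x => F x - x - a * x ^ (m+2)) =o[𝓝 (0:ℝ)] fun x : ℝ => x ^ (m+2))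
    (hb : (fun x => T x - x - b * x ^ (m+2)) =o[𝓝 (0:ℝ)] fun x : ℝ => x ^ (m+2)) :
    (fun x => F (T x) - x - (a+b) * x ^ (m+2)) =o[𝓝 (0:ℝ)] fun x : ℝ => x ^ (m+2) := by
  have tT : Tendsto T (𝓝 (0:ℝ)) (𝓝 (0:ℝ)) := tendsto_zero Ta hT0
  have TO : T =O[𝓝 (0:ℝ)] fun x : ℝ => x := isBigO_id Ta hT0
  have t1 : (fun x => F (T x) - T x - a * (T x) ^ (m+2)) =o[𝓝 (0:ℝ)]
      fun x : ℝ => x ^ (m+2) := comp_littleO ha tT TO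
  have hd : (fun x => T x - x) =O[𝓝 (0:ℝ)] fun x : ℝ => x ^ (m+2) := by
    have h1 : (fun x : ℝ => b * x ^ (m+2)) =O[𝓝 (0:ℝ)] fun x : ℝ => x ^ (m+2) :=
      (isBigO_refl (fun x : ℝ => x ^ (m+2)) _).const_mul_left b
    have := hb.isBigO.add h1
    refine this.congr (fun x => by ring) (fun x => rfl)
  have hsum : (fun x => ∑ i ∈ Finset.range (m+2), (T x) ^ i * x ^ (m+1-i))
      =O[𝓝 (0:ℝ)] fun x : ℝ => x ^ (m+1) := by
    refine (IsBigO.sum (s := Finset.range (m+2)) (A := fun i x => (T x) ^ i * x ^ (m+1-i)) ?_).congr_left (fun x => by simp [Finset.sum_apply])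
    intro i hi
    have hi' : i ≤ m + 1 := by have := Finset.mem_range.1 hi; omega
    have h1 : (fun x => (T x) ^ i * x ^ (m+1-i)) =O[𝓝 (0:ℝ)]
        fun x : ℝ => x ^ i * x ^ (m+1-i) :=
      (TO.pow i).mul (isBigO_refl (fun x : ℝ => x ^ (m+1-i)) _)
    refine h1.congr (fun x => rfl) (fun x => ?_)
    rw [← pow_add]
    congr 1
    omega
  have t3' : (fun x => (T x) ^ (m+2) - x ^ (m+2)) =O[𝓝 (0:ℝ)]
      fun x : ℝ => x ^ (2*m+3) := by
    have h2 := hsum.mul hd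
    refine h2.congr (fun x => ?_) (fun x => ?_)
    · exact geom_sum₂_mul (T x) x (m+2)
    · rw [← pow_add]; congr 1; omega
  have t3 : (fun x => a * ((T x) ^ (m+2) - x ^ (m+2))) =o[𝓝 (0:ℝ)]
      fun x : ℝ => x ^ (m+2) :=
    (t3'.const_mul_left a).trans_isLittleO (pow_littleO (by omega))
  have := (t1.add t3).add hb
  refine this.congr' ?_ EventuallyEq.rfl
  filter_upwards with x
  ring

lemma triv_comm {σ τ : OI} {n : ℕ} (hσ : Triv σ n) (hτ : Triv τ n)
    {Fi Ti : ℝ → ℝ}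
    (hFia : AnalyticAt ℝ Fi 0) (hFig : Agrees σ.symm Fi)
    (hTia : AnalyticAt ℝ Ti 0) (hTig : Agrees τ.symm Ti) :
    Triv (σ * τ * σ⁻¹ * τ⁻¹) (n+1) := by
  obtain ⟨F, Fa, Fg, Fo⟩ := hσ
  obtain ⟨T, Ta, Tg, To⟩ := hτ
  have hF0 : F 0 = 0 := Fg.f_zero
  have hT0 : T 0 = 0 := Tg.f_zero
  have hFi0 : Fi 0 = 0 := hFig.f_zero
  have hTi0 : Ti 0 = 0 := hTig.f_zero
  -- inner composite w = Fi ∘ Ti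
  have aw : AnalyticAt ℝ (fun x => Fi (Ti x)) 0 := by
    have : AnalyticAt ℝ Fi (Ti 0) := by rw [hTi0]; exact hFia
    exact this.comp hTia
  have hw0 : Fi (Ti 0) = 0 := by rw [hTi0, hFi0]
  have aTw : AnalyticAt ℝ (fun x => T (Fi (Ti x))) 0 := by
    have h1 : AnalyticAt ℝ T (Fi (Ti 0)) := by rw [hw0]; exact Ta
    have : AnalyticAt ℝ (T ∘ fun x => Fi (Ti x)) 0 :=
      AnalyticAt.comp (f := fun x => Fi (Ti x)) (x := 0) h1 aw
    exact this
  have hTw0 : T (Fi (Ti 0)) = 0 := by rw [hw0, hT0]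
  have aK : AnalyticAt ℝ (fun x => F (T (Fi (Ti x)))) 0 := by
    have h1 : AnalyticAt ℝ F (T (Fi (Ti 0))) := by rw [hTw0]; exact Fa
    have : AnalyticAt ℝ (F ∘ fun x => T (Fi (Ti x))) 0 :=
      AnalyticAt.comp (f := fun x => T (Fi (Ti x))) (x := 0) h1 aTw
    exact this
  refine ⟨fun x => F (T (Fi (Ti x))), aK, ?_, ?_⟩
  · intro x
    rw [show (σ * τ * σ⁻¹ * τ⁻¹) x = σ (τ (σ.symm (τ.symm x))) from rfl]
    rw [Fg (τ (σ.symm (τ.symm x)))]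
    show F ↑(τ (σ.symm (τ.symm x))) = F (T (Fi (Ti ↑x)))
    rw [Tg (σ.symm (τ.symm x))]
    show F (T ↑(σ.symm (τ.symm x))) = F (T (Fi (Ti ↑x)))
    rw [hFig (τ.symm x)]
    show F (T (Fi ↑(τ.symm x))) = F (T (Fi (Ti ↑x)))
    rw [hTig x]
  · -- asymptotics
    have eFFi : (fun y => F (Fi y)) =ᶠ[𝓝 (0:ℝ)] fun y => y :=
      inv_eventuallyEq Fa Fg hFia hFig
    have eTTi : (fun y => T (Ti y)) =ᶠ[𝓝 (0:ℝ)] fun y => y :=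
      inv_eventuallyEq Ta Tg hTia hTig
    have tTi : Tendsto Ti (𝓝 (0:ℝ)) (𝓝 (0:ℝ)) := tendsto_zero hTia hTi0
    have tw : Tendsto (fun x => Fi (Ti x)) (𝓝 (0:ℝ)) (𝓝 (0:ℝ)) := tendsto_zero aw hw0
    have wO : (fun x => Fi (Ti x)) =O[𝓝 (0:ℝ)] fun x : ℝ => x := isBigO_id aw hw0
    have ev1 : ∀ᶠ x in 𝓝 (0:ℝ), F (Fi (Ti x)) = Ti x := tTi.eventually eFFi
    have ev2 : ∀ᶠ x in 𝓝 (0:ℝ), T (Ti x) = x := eTTi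
    -- the commutator difference function
    have hΔ : (fun y => F (T y) - T (F y)) =o[𝓝 (0:ℝ)] fun y : ℝ => y ^ (n+1) := by
      rcases n with _ | m
      · -- first-order case via derivatives
        have hdF : HasDerivAt F (deriv F 0) 0 := Fa.differentiableAt.hasDerivAt
        have hdT : HasDerivAt T (deriv T 0) 0 := Ta.differentiableAt.hasDerivAt
        have h1 : HasDerivAt (fun y => F (T y)) (deriv F 0 * deriv T 0) 0 := by
          have h : HasDerivAt F (deriv F 0) (T 0) := by rw [hT0]; exact hdF
          exact h.comp 0 hdT
        have h2 : HasDerivAt (fun y => T (F y)) (deriv T 0 * deriv F 0) 0 := by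
          have h : HasDerivAt T (deriv T 0) (F 0) := by rw [hF0]; exact hdT
          exact h.comp 0 hdF
        have h3 : HasDerivAt (fun y => F (T y) - T (F y))
            (deriv F 0 * deriv T 0 - deriv T 0 * deriv F 0) 0 := h1.sub h2
        rw [show deriv F 0 * deriv T 0 - deriv T 0 * deriv F 0 = 0 by ring] at h3
        rw [hasDerivAt_iff_isLittleO] at h3
        simp only [sub_zero, smul_zero, hT0, hF0] at h3
        refine h3.congr' EventuallyEq.rfl ?_
        filter_upwards with y
        rw [pow_one]
      · -- higher-order case via second-order expansion
        obtain ⟨a, ha⟩ := exists_coeff (Fa.sub analyticAt_id) Fo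
        obtain ⟨b, hb⟩ := exists_coeff (Ta.sub analyticAt_id) To
        have ha' : (fun x => F x - x - a * x ^ (m+2)) =o[𝓝 (0:ℝ)]
            fun x : ℝ => x ^ (m+2) := ha
        have hb' : (fun x => T x - x - b * x ^ (m+2)) =o[𝓝 (0:ℝ)]
            fun x : ℝ => x ^ (m+2) := hb
        have c1 := comp_expand Ta hT0 ha' hb'
        have c2 := comp_expand Fa hF0 hb' ha'
        have := c1.sub c2
        refine this.congr' ?_ EventuallyEq.rfl
        filter_upwards with x
        ring
    have main : (fun x => F (T (Fi (Ti x))) - T (F (Fi (Ti x)))) =o[𝓝 (0:ℝ)]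
        fun x : ℝ => x ^ (n+1) :=
      comp_littleO hΔ tw wO
    refine main.congr' ?_ EventuallyEq.rfl
    filter_upwards [ev1, ev2] with x h1 h2
    have h3 : T (F (Fi (Ti x))) = x := by rw [h1, h2]
    rw [h3]


end RSAux
end

/-- An element of the group of order-isomorphisms of `[0,1]` (equivalently, an
orientation-preserving homeomorphism of `[0,1]`, automatically fixing `0` and `1`)
is an orientation-preserving real-analytic diffeomorphism of `[0,1]` if both it and
its inverse extend to functions that are real-analytic on a neighborhood of `[0,1]`
with nowhere-vanishing derivative on `[0,1]`. -/
def IsAnalyticDiffeo (σ : ↥(Set.Icc (0:ℝ) 1) ≃o ↥(Set.Icc (0:ℝ) 1)) : Prop :=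
  ∃ F G : ℝ → ℝ,
    AnalyticOnNhd ℝ F (Set.Icc 0 1) ∧ AnalyticOnNhd ℝ G (Set.Icc 0 1) ∧
    (∀ x ∈ Set.Icc (0:ℝ) 1, deriv F x ≠ 0) ∧ (∀ x ∈ Set.Icc (0:ℝ) 1, deriv G x ≠ 0) ∧
    (∀ x : ↥(Set.Icc (0:ℝ) 1), (σ x : ℝ) = F x) ∧
    (∀ x : ↥(Set.Icc (0:ℝ) 1), (σ.symm x : ℝ) = G x)

namespace RSAux

/-- representatives extracted from the diffeo hypothesis -/
lemma rep_of_mem {σ : OI} (h : IsAnalyticDiffeo σ) :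
    ∃ F Fi : ℝ → ℝ, AnalyticOnNhd ℝ F II ∧ AnalyticAt ℝ F 0 ∧ AnalyticAt ℝ Fi 0 ∧
      Agrees σ F ∧ Agrees σ.symm Fi := by
  obtain ⟨F, Fi, hF, hFi, -, -, hag, hiag⟩ := h
  have h0 : (0:ℝ) ∈ II := by constructor <;> norm_num
  exact ⟨F, Fi, hF, hF 0 h0, hFi 0 h0, fun x => hag x, fun x => hiag x⟩

end RSAux

/-- `Diff^ω_+([0,1])` (formalized as the subgroup of order-isomorphisms of `[0,1]`
whose carrier consists exactly of the real-analytic diffeomorphisms) is residually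
solvable: every nontrivial element survives in some solvable quotient. -/
theorem diffOmega_residually_solvable
    (G : Subgroup (↥(Set.Icc (0:ℝ) 1) ≃o ↥(Set.Icc (0:ℝ) 1)))
    (hG : ∀ σ, σ ∈ G ↔ IsAnalyticDiffeo σ) :
    ∀ f : ↥G, f ≠ 1 →
      ∃ (S : Type) (_ : Group S), IsSolvable S ∧ ∃ φ : ↥G →* S, φ f ≠ 1 := by
  classical
  intro f hf
  have rep : ∀ g : ↥G, ∃ F Fi : ℝ → ℝ, AnalyticOnNhd ℝ F RSAux.II ∧
      AnalyticAt ℝ F 0 ∧ AnalyticAt ℝ Fi 0 ∧ RSAux.Agrees g.val F ∧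
      RSAux.Agrees (g.val).symm Fi := fun g => RSAux.rep_of_mem ((hG g.val).1 g.2)
  -- the filtration subgroups
  have one_mem : ∀ n : ℕ, RSAux.Triv (1 : RSAux.OI) n := by
    intro n
    refine ⟨fun x => x, analyticAt_id, fun x => rfl, ?_⟩
    have : (fun x : ℝ => x - x) = fun _ : ℝ => (0:ℝ) := by funext x; ring
    rw [this]
    exact isLittleO_zero _ _
  let N : ℕ → Subgroup ↥G := fun n =>
    { carrier := {g : ↥G | RSAux.Triv g.val n}
      one_mem' := one_mem n
      mul_mem' := fun ha hb => RSAux.triv_mul ha hb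
      inv_mem' := by
        intro a ha
        obtain ⟨F, Fi, FOn, Fa, Fia, Fg, Fig⟩ := rep a
        exact RSAux.triv_inv ha Fia Fig }
  have hNmem : ∀ (n : ℕ) (g : ↥G), g ∈ N n ↔ RSAux.Triv g.val n := fun n g => Iff.rfl
  have hNnormal : ∀ n : ℕ, (N n).Normal := by
    intro n
    constructor
    intro a ha g
    obtain ⟨T, Ti, TOn, Ta, Tia, Tg, Tig⟩ := rep g
    exact RSAux.triv_conj ha Ta Tg Tia Tig
  have hDS : ∀ k : ℕ, derivedSeries ↥G k ≤ N k := by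
    intro k
    induction k with
    | zero =>
      intro g _
      obtain ⟨F, Fi, FOn, Fa, Fia, Fg, Fig⟩ := rep g
      refine ⟨F, Fa, Fg, ?_⟩
      have ht : Tendsto (fun x : ℝ => F x - x) (𝓝 0) (𝓝 0) := by
        have := (RSAux.tendsto_zero Fa Fg.f_zero).sub tendsto_id
        simpa using this
      have h1 : (fun x : ℝ => F x - x) =o[𝓝 (0:ℝ)] (fun _ : ℝ => (1:ℝ)) :=
        (isLittleO_one_iff ℝ).2 ht
      refine h1.congr' EventuallyEq.rfl ?_
      filter_upwards with x
      rw [pow_zero]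
    | succ k ih =>
      rw [derivedSeries_succ]
      rw [Subgroup.commutator_le]
      intro p hp q hq
      obtain ⟨Fp, Fip, _, _, Fia, _, Fig⟩ := rep p
      obtain ⟨Tq, Tiq, _, _, Tia, _, Tig⟩ := rep q
      exact RSAux.triv_comm (ih hp) (ih hq) Fia Fig Tia Tig
  by_cases hall : ∀ n, RSAux.Triv f.val n
  · exfalso
    apply hf
    obtain ⟨F, Fi, FOn, Fa, Fia, Fg, Fig⟩ := rep f
    have hol : ∀ n : ℕ, (fun x => F x - x) =o[𝓝 (0:ℝ)] fun x : ℝ => x ^ n :=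
      fun n => (hall n).rep Fa Fg
    have hev : ∀ᶠ x in 𝓝 (0:ℝ), F x - x = 0 :=
      RSAux.eventually_zero_of_forall_littleO (Fa.sub analyticAt_id) hol
    have heq : F =ᶠ[𝓝 (0:ℝ)] fun x => x := by
      filter_upwards [hev] with x hx
      linarith [hx]
    have h0 : (0:ℝ) ∈ Set.Icc (0:ℝ) 1 := by constructor <;> norm_num
    have hEq : Set.EqOn F (fun x => x) (Set.Icc (0:ℝ) 1) :=
      FOn.eqOn_of_preconnected_of_eventuallyEq
        (fun x _ => analyticAt_id) isPreconnected_Icc h0 heq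
    -- conclude f = 1
    apply Subtype.ext
    apply RelIso.ext
    intro x
    apply Subtype.ext
    have := Fg x
    rw [this]
    exact (hEq x.2).trans rfl
  · push_neg at hall
    obtain ⟨n, hn⟩ := hall
    haveI := hNnormal n
    refine ⟨↥G ⧸ N n, inferInstance, ?_, QuotientGroup.mk' (N n), ?_⟩
    · refine ⟨⟨n, ?_⟩⟩
      have h1 := map_derivedSeries_eq (QuotientGroup.mk'_surjective (N n)) n
      rw [← h1]
      rw [Subgroup.map_eq_bot_iff]
      rw [QuotientGroup.ker_mk']
      exact hDS n
    · intro hcon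
      apply hn
      exact (QuotientGroup.eq_one_iff f).1 hcon
end
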